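/- arXiv:0705.3912 — 7 statements merged into one kernel-verified Lean document; each statement's English description precedes it below -/
import Mathlib

section
/- Let R = ℂ⟦x,y⟧ be the ring of formal power series in two variables over ℂ, with maximal ideal m = ⟨x,y⟩. Let f ∈ R be such that jet₃(f) ∈ {x³ − y³, x²y, x³}, and let I = ⟨g,h⟩ be an ideal of R generated by two elements such that dim_ℂ(R/I) ≥ 3 and ⟨∂f/∂x, ∂f/∂y⟩ + m³ ⊆ I. Then either there exist u, v ∈ R with ⟨u,v⟩ = m and I = ⟨u², v²⟩ and jet₃(f) ∈ {x³ − y³, x³}, or there exist u, v ∈ R with ⟨u,v⟩ = m and I = ⟨u, v³⟩ and jet₃(f) ∈ {x²y, x³}. -/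
/-- The formal power series ring `R = ℂ⟦x,y⟧`. -/
noncomputable abbrev R2 : Type := MvPowerSeries (Fin 2) ℂ

/-- The variable `x`. -/
noncomputable def Xv : R2 := MvPowerSeries.X 0

/-- The variable `y`. -/
noncomputable def Yv : R2 := MvPowerSeries.X 1

/-- The maximal ideal `m = ⟨x, y⟩` of `R = ℂ⟦x,y⟧`. -/
noncomputable def mIdeal : Ideal R2 := Ideal.span {Xv, Yv}

/-- The formal partial derivative `∂f/∂xᵢ` of a power series `f ∈ ℂ⟦x,y⟧`. -/
noncomputable def pderiv2 (i : Fin 2) (f : R2) : R2 :=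
  fun d => ((d i : ℂ) + 1) * MvPowerSeries.coeff (d + Finsupp.single i 1) f

/-- `jet₃ f = g` : the terms of `f` of total degree `≤ 3` are given by `g`,
i.e. `f - g ∈ m⁴`. -/
noncomputable def jet3Eq (f g : R2) : Prop := f - g ∈ mIdeal ^ 4


open MvPowerSeries Finsupp

namespace Lem42


/-- exponent vector -/
noncomputable def E (i j : ℕ) : Fin 2 →₀ ℕ := Finsupp.single 0 i + Finsupp.single 1 j

def deg (d : Fin 2 →₀ ℕ) : ℕ := d 0 + d 1

lemma fin2_ext {d e : Fin 2 →₀ ℕ} (h0 : d 0 = e 0) (h1 : d 1 = e 1) : d = e := by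
  ext i
  fin_cases i
  · exact h0
  · exact h1

@[simp] lemma E_apply0 (i j : ℕ) : E i j 0 = i := by simp [E]
@[simp] lemma E_apply1 (i j : ℕ) : E i j 1 = j := by simp [E]

lemma eq_E_iff {d : Fin 2 →₀ ℕ} {i j : ℕ} : d = E i j ↔ d 0 = i ∧ d 1 = j := by
  constructor
  · rintro rfl; simp
  · rintro ⟨h0, h1⟩; exact fin2_ext (by simpa) (by simpa)

lemma eq_E_self (d : Fin 2 →₀ ℕ) : d = E (d 0) (d 1) := eq_E_iff.2 ⟨rfl, rfl⟩

lemma deg_E (i j : ℕ) : deg (E i j) = i + j := by simp [deg]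

lemma E_le_iff {a b i j : ℕ} : E a b ≤ E i j ↔ a ≤ i ∧ b ≤ j := by
  constructor
  · intro h
    exact ⟨by simpa using h 0, by simpa using h 1⟩
  · rintro ⟨h0, h1⟩
    intro s
    fin_cases s <;> simpa

/-- the monomial x^i y^j -/
noncomputable def Xp (i j : ℕ) : R2 := Xv ^ i * Yv ^ j

lemma Xp_eq_monomial (i j : ℕ) : Xp i j = MvPowerSeries.monomial (E i j) 1 := by
  rw [Xp, Xv, Yv, X_pow_eq, X_pow_eq, monomial_mul_monomial, one_mul, E]

lemma coeff_Xp (d : Fin 2 →₀ ℕ) (i j : ℕ) :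
    MvPowerSeries.coeff d (Xp i j) = if d = E i j then 1 else 0 := by
  rw [Xp_eq_monomial, coeff_monomial]

lemma coeff_Xp_self (i j : ℕ) : MvPowerSeries.coeff (E i j) (Xp i j) = 1 := by
  simp [coeff_Xp]



lemma deg_add (a b : Fin 2 →₀ ℕ) : deg (a + b) = deg a + deg b := by
  simp [deg]; ring

lemma deg_eq_zero {d : Fin 2 →₀ ℕ} (h : deg d = 0) : d = 0 := by
  have h0 : d 0 = 0 := by unfold deg at h; omega
  have h1 : d 1 = 0 := by unfold deg at h; omega
  exact fin2_ext (by simpa) (by simpa)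

/-- Easy direction -/
lemma coeff_eq_zero_of_mem_pow {k : ℕ} {f : R2} (hf : f ∈ mIdeal ^ k)
    {d : Fin 2 →₀ ℕ} (hd : deg d < k) : MvPowerSeries.coeff d f = 0 := by
  classical
  induction k generalizing f d with
  | zero => omega
  | succ k ih =>
    rw [pow_succ] at hf
    induction hf using Submodule.mul_induction_on' with
    | mem_mul_mem p hp q hq =>
      -- p ∈ m^k, q ∈ m
      rw [MvPowerSeries.coeff_mul]
      apply Finset.sum_eq_zero
      rintro ⟨a, b⟩ hab
      rw [Finset.HasAntidiagonal.mem_antidiagonal] at hab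
      by_cases hb : deg a < k
      · rw [ih hp hb, zero_mul]
      · have hd2 : deg a + deg b = deg d := by rw [← deg_add, hab]
        have hb0 : deg b = 0 := by omega
        have : b = 0 := deg_eq_zero hb0
        subst this
        -- q ∈ m has zero constant coefficient
        have hq0 : MvPowerSeries.coeff 0 q = 0 := by
          have : mIdeal ≤ RingHom.ker (MvPowerSeries.constantCoeff (σ := Fin 2) (R := ℂ)) := by
            rw [mIdeal, Ideal.span_le]
            rintro z (rfl | rfl) <;>
              simp [RingHom.mem_ker, Xv, Yv]
          simpa [MvPowerSeries.coeff_zero_eq_constantCoeff] using this hq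
        rw [hq0, mul_zero]
    | add p q hp hq ihp ihq =>
      rw [map_add, ihp, ihq, add_zero]


lemma coeff_X_mul' (s : Fin 2) (g : R2) (d : Fin 2 →₀ ℕ) :
    MvPowerSeries.coeff d (MvPowerSeries.X s * g) =
      if Finsupp.single s 1 ≤ d then MvPowerSeries.coeff (d - Finsupp.single s 1) g else 0 := by
  rw [show (MvPowerSeries.X s : R2) = MvPowerSeries.monomial (Finsupp.single s 1) 1 from rfl,
    coeff_monomial_mul]
  simp

/-- Hard direction -/
lemma mem_pow_of_coeff {k : ℕ} {f : R2}
    (hf : ∀ d : Fin 2 →₀ ℕ, deg d < k → MvPowerSeries.coeff d f = 0) :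
    f ∈ mIdeal ^ k := by
  classical
  induction k generalizing f with
  | zero => simp
  | succ k ih =>
    set g : R2 := fun d => MvPowerSeries.coeff (d + Finsupp.single 0 1) f with hg
    set h : R2 := fun d => if d 0 = 0 then MvPowerSeries.coeff (d + Finsupp.single 1 1) f else 0
      with hh
    have hdecomp : f = MvPowerSeries.X 0 * g + MvPowerSeries.X 1 * h := by
      apply MvPowerSeries.ext
      intro d
      rw [map_add, coeff_X_mul', coeff_X_mul']
      by_cases h0 : Finsupp.single (0 : Fin 2) 1 ≤ d
      · rw [if_pos h0]
        have e1 : MvPowerSeries.coeff (d - Finsupp.single 0 1) g = MvPowerSeries.coeff d f := by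
          show MvPowerSeries.coeff (d - Finsupp.single 0 1 + Finsupp.single 0 1) f = _
          rw [tsub_add_cancel_of_le h0]
        by_cases h1 : Finsupp.single (1 : Fin 2) 1 ≤ d
        · rw [if_pos h1]
          have e2 : MvPowerSeries.coeff (d - Finsupp.single 1 1) h = 0 := by
            show (if (d - Finsupp.single 1 1 : Fin 2 →₀ ℕ) 0 = 0 then
              MvPowerSeries.coeff (d - Finsupp.single 1 1 + Finsupp.single 1 1) f else 0) = 0
            rw [if_neg]
            have := Finsupp.single_le_iff.1 h0
            simp [Finsupp.tsub_apply, Finsupp.single_apply]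
            omega
          rw [e1, e2, add_zero]
        · rw [if_neg h1, e1, add_zero]
      · have hd0 : d 0 = 0 := by
          rw [Finsupp.single_le_iff] at h0; omega
        rw [if_neg h0]
        by_cases h1 : Finsupp.single (1 : Fin 2) 1 ≤ d
        · rw [if_pos h1, zero_add]
          show MvPowerSeries.coeff d f = if (d - Finsupp.single 1 1 : Fin 2 →₀ ℕ) 0 = 0 then
            MvPowerSeries.coeff (d - Finsupp.single 1 1 + Finsupp.single 1 1) f else 0
          rw [if_pos (by simp [Finsupp.tsub_apply, hd0])]
          rw [tsub_add_cancel_of_le h1]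
        · rw [if_neg h1]
          have hd1 : d 1 = 0 := by
            rw [Finsupp.single_le_iff] at h1; omega
          rw [hf d (by unfold deg; omega)]
          norm_num
    have hgm : g ∈ mIdeal ^ k := by
      apply ih
      intro d hd
      have e0 : deg (d + Finsupp.single 0 1) = deg d + 1 := by
        simp [deg, Finsupp.single_apply]; omega
      have : MvPowerSeries.coeff d g = MvPowerSeries.coeff (d + Finsupp.single 0 1) f := by
        rfl
      rw [this]
      apply hf
      omega
    have hhm : h ∈ mIdeal ^ k := by
      apply ih
      intro d hd
      have e0 : deg (d + Finsupp.single 1 1) = deg d + 1 := by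
        simp [deg, Finsupp.single_apply]; omega
      have : MvPowerSeries.coeff d h =
          if d 0 = 0 then MvPowerSeries.coeff (d + Finsupp.single 1 1) f else 0 := by
        rfl
      rw [this]
      split
      · apply hf
        omega
      · rfl
    have hx : (MvPowerSeries.X 0 : R2) ∈ mIdeal := Ideal.subset_span (Or.inl rfl)
    have hy : (MvPowerSeries.X 1 : R2) ∈ mIdeal := Ideal.subset_span (Or.inr rfl)
    rw [hdecomp, pow_succ']
    exact Ideal.add_mem _ (Ideal.mul_mem_mul hx hgm) (Ideal.mul_mem_mul hy hhm)


/-- coefficient extraction -/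
noncomputable def cc (i j : ℕ) (w : R2) : ℂ := MvPowerSeries.coeff (E i j) w

lemma E_eq_E {i j a b : ℕ} : E i j = E a b ↔ i = a ∧ j = b := by
  rw [eq_E_iff]; simp

lemma Xp_i0 (i : ℕ) : Xp i 0 = Xv ^ i := by simp [Xp]
lemma Xp_0j (j : ℕ) : Xp 0 j = Yv ^ j := by simp [Xp]
lemma Xp00 : Xp 0 0 = 1 := by simp [Xp]

lemma Xp_mem3 {i j : ℕ} (h : 3 ≤ i + j) : Xp i j ∈ mIdeal ^ 3 := by
  apply mem_pow_of_coeff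
  intro d hd
  rw [coeff_Xp, if_neg]
  rintro rfl
  rw [deg_E] at hd
  omega

lemma smul_mem_ideal {I : Ideal R2} (c : ℂ) {x : R2} (hx : x ∈ I) : c • x ∈ I := by
  rw [Algebra.smul_def]
  exact I.mul_mem_left _ hx

/-- jet-3 decomposition -/
lemma jet3 (w : R2) :
    ∃ t ∈ mIdeal ^ 3, w = cc 0 0 w • Xp 0 0 + cc 1 0 w • Xp 1 0 + cc 0 1 w • Xp 0 1 +
      cc 2 0 w • Xp 2 0 + cc 1 1 w • Xp 1 1 + cc 0 2 w • Xp 0 2 + t := by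
  refine ⟨w - (cc 0 0 w • Xp 0 0 + cc 1 0 w • Xp 1 0 + cc 0 1 w • Xp 0 1 +
      cc 2 0 w • Xp 2 0 + cc 1 1 w • Xp 1 1 + cc 0 2 w • Xp 0 2), ?_, by ring⟩
  apply mem_pow_of_coeff
  intro d hd
  obtain ⟨i, j, rfl, hij⟩ : ∃ i j, d = E i j ∧ i + j < 3 :=
    ⟨d 0, d 1, eq_E_self d, by rw [deg] at hd; omega⟩
  have hi : i < 3 := by omega
  have hj : j < 3 := by omega
  simp only [map_sub, map_add, LinearMap.map_smul, coeff_Xp, smul_eq_mul, cc]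
  interval_cases i <;> interval_cases j <;>
    first
      | omega
      | (simp [E_eq_E]; ring)
      | simp [E_eq_E]

lemma pderiv2_coeff (i : Fin 2) (f : R2) (d : Fin 2 →₀ ℕ) :
    MvPowerSeries.coeff d (pderiv2 i f) =
      ((d i : ℂ) + 1) * MvPowerSeries.coeff (d + Finsupp.single i 1) f := rfl

lemma pderiv2_sub (i : Fin 2) (a b : R2) :
    pderiv2 i (a - b) = pderiv2 i a - pderiv2 i b := by
  funext d
  show ((d i : ℂ) + 1) * MvPowerSeries.coeff (d + Finsupp.single i 1) (a - b) = _
  rw [map_sub]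
  show _ = ((d i : ℂ) + 1) * MvPowerSeries.coeff (d + Finsupp.single i 1) a -
    ((d i : ℂ) + 1) * MvPowerSeries.coeff (d + Finsupp.single i 1) b
  ring

lemma deg_single (i : Fin 2) : deg (Finsupp.single i 1) = 1 := by
  fin_cases i <;> simp [deg, Finsupp.single_apply]

lemma pderiv2_mem3 (i : Fin 2) {s : R2} (hs : s ∈ mIdeal ^ 4) :
    pderiv2 i s ∈ mIdeal ^ 3 := by
  apply mem_pow_of_coeff
  intro d hd
  rw [pderiv2_coeff, coeff_eq_zero_of_mem_pow hs, mul_zero]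
  rw [deg_add, deg_single]
  omega

lemma add_single0_eq {d : Fin 2 →₀ ℕ} {i j : ℕ} :
    d + Finsupp.single 0 1 = E (i + 1) j ↔ d = E i j := by
  rw [eq_E_iff, eq_E_iff]
  simp [Finsupp.single_apply]

lemma add_single1_eq {d : Fin 2 →₀ ℕ} {i j : ℕ} :
    d + Finsupp.single 1 1 = E i (j + 1) ↔ d = E i j := by
  rw [eq_E_iff, eq_E_iff]
  simp [Finsupp.single_apply]

lemma pd0_Xp (i j : ℕ) : pderiv2 0 (Xp (i + 1) j) = ((i : ℂ) + 1) • Xp i j := by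
  apply MvPowerSeries.ext
  intro d
  rw [pderiv2_coeff, LinearMap.map_smul, smul_eq_mul, coeff_Xp, coeff_Xp]
  by_cases hd : d = E i j
  · rw [if_pos (add_single0_eq.2 hd), if_pos hd, hd]
    simp
  · rw [if_neg (fun hc => hd (add_single0_eq.1 hc)), if_neg hd]
    simp

lemma pd1_Xp (i j : ℕ) : pderiv2 1 (Xp i (j + 1)) = ((j : ℂ) + 1) • Xp i j := by
  apply MvPowerSeries.ext
  intro d
  rw [pderiv2_coeff, LinearMap.map_smul, smul_eq_mul, coeff_Xp, coeff_Xp]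
  by_cases hd : d = E i j
  · rw [if_pos (add_single1_eq.2 hd), if_pos hd, hd]
    simp
  · rw [if_neg (fun hc => hd (add_single1_eq.1 hc)), if_neg hd]
    simp

lemma pd0_Xp0 (j : ℕ) : pderiv2 0 (Xp 0 j) = 0 := by
  apply MvPowerSeries.ext
  intro d
  rw [pderiv2_coeff, coeff_Xp]
  have h : d + Finsupp.single 0 1 ≠ E 0 j := by
    intro hc
    have := (eq_E_iff.1 hc).1
    simp [Finsupp.single_apply] at this
  rw [if_neg h]
  simp

lemma pd1_Xp0 (i : ℕ) : pderiv2 1 (Xp i 0) = 0 := by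
  apply MvPowerSeries.ext
  intro d
  rw [pderiv2_coeff, coeff_Xp]
  have h : d + Finsupp.single 1 1 ≠ E i 0 := by
    intro hc
    have := (eq_E_iff.1 hc).2
    simp [Finsupp.single_apply] at this
  rw [if_neg h]
  simp

lemma mem_span4 {a b c e z : R2} (p q r s : R2)
    (hz : z = p * a + q * b + r * c + s * e) : z ∈ Ideal.span {a, b, c, e} := by
  subst hz
  have ha : a ∈ Ideal.span {a, b, c, e} := Ideal.subset_span (by simp)
  have hb : b ∈ Ideal.span {a, b, c, e} := Ideal.subset_span (by simp)
  have hc : c ∈ Ideal.span {a, b, c, e} := Ideal.subset_span (by simp)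
  have he : e ∈ Ideal.span {a, b, c, e} := Ideal.subset_span (by simp)
  exact Ideal.add_mem _ (Ideal.add_mem _ (Ideal.add_mem _
    (Ideal.mul_mem_left _ _ ha) (Ideal.mul_mem_left _ _ hb))
    (Ideal.mul_mem_left _ _ hc)) (Ideal.mul_mem_left _ _ he)

lemma m3_eq : mIdeal ^ 3 = Ideal.span {Xp 3 0, Xp 2 1, Xp 1 2, Xp 0 3} := by
  apply le_antisymm
  · have h3 : mIdeal ^ 3 = mIdeal * mIdeal * mIdeal := by ring
    rw [h3]
    apply Ideal.mul_le.2
    intro r hr s hs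
    induction hr using Submodule.mul_induction_on' with
    | mem_mul_mem p hp q hq =>
      obtain ⟨p1, p2, hp'⟩ := Ideal.mem_span_pair.1 hp
      obtain ⟨q1, q2, hq'⟩ := Ideal.mem_span_pair.1 hq
      obtain ⟨s1, s2, hs'⟩ := Ideal.mem_span_pair.1 hs
      apply mem_span4 (p1 * q1 * s1) (p1 * q1 * s2 + p1 * q2 * s1 + p2 * q1 * s1)
        (p1 * q2 * s2 + p2 * q1 * s2 + p2 * q2 * s1) (p2 * q2 * s2)
      rw [← hp', ← hq', ← hs']
      simp only [Xp, Xv, Yv]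
      ring
    | add p q hp hq ihp ihq =>
      rw [add_mul]
      exact Ideal.add_mem _ ihp ihq
  · rw [Ideal.span_le]
    rintro z (rfl | rfl | rfl | rfl) <;> exact Xp_mem3 (by omega)

lemma m3_le {J : Ideal R2} (h30 : Xp 3 0 ∈ J) (h21 : Xp 2 1 ∈ J) (h12 : Xp 1 2 ∈ J)
    (h03 : Xp 0 3 ∈ J) : mIdeal ^ 3 ≤ J := by
  rw [m3_eq, Ideal.span_le]
  rintro z (rfl | rfl | rfl | rfl) <;> assumption

lemma mem_span3 {a b c z : R2} (p q r : R2)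
    (hz : z = p * a + q * b + r * c) : z ∈ Ideal.span {a, b, c} := by
  subst hz
  have ha : a ∈ Ideal.span {a, b, c} := Ideal.subset_span (by simp)
  have hb : b ∈ Ideal.span {a, b, c} := Ideal.subset_span (by simp)
  have hc : c ∈ Ideal.span {a, b, c} := Ideal.subset_span (by simp)
  exact Ideal.add_mem _ (Ideal.add_mem _ (Ideal.mul_mem_left _ _ ha)
    (Ideal.mul_mem_left _ _ hb)) (Ideal.mul_mem_left _ _ hc)

lemma m2_eq : mIdeal ^ 2 = Ideal.span {Xp 2 0, Xp 1 1, Xp 0 2} := by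
  apply le_antisymm
  · rw [pow_two]
    apply Ideal.mul_le.2
    intro r hr s hs
    obtain ⟨r1, r2, hr'⟩ := Ideal.mem_span_pair.1 hr
    obtain ⟨s1, s2, hs'⟩ := Ideal.mem_span_pair.1 hs
    apply mem_span3 (r1 * s1) (r1 * s2 + r2 * s1) (r2 * s2)
    rw [← hr', ← hs']
    simp only [Xp, Xv, Yv]
    ring
  · rw [Ideal.span_le]
    rintro z (rfl | rfl | rfl) <;>
    · apply mem_pow_of_coeff
      intro d hd
      rw [coeff_Xp, if_neg]
      rintro rfl
      rw [deg_E] at hd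
      omega

lemma cardinal_pair_le {M : Type} (x y : M) : Cardinal.mk ({x, y} : Set M) ≤ 2 := by
  apply (Cardinal.mk_insert_le).trans
  rw [Cardinal.mk_singleton]
  norm_num

lemma dim_contra (I : Ideal R2) (hdim : (3 : Cardinal) ≤ Module.rank ℂ (R2 ⧸ I))
    (a b : R2) (hab : ∀ w : R2, ∃ s t : ℂ, w - (s • a + t • b) ∈ I) : False := by
  set mk := Ideal.Quotient.mkₐ ℂ I with hmk
  have hspan : (⊤ : Submodule ℂ (R2 ⧸ I)) ≤ Submodule.span ℂ {mk a, mk b} := by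
    rintro z -
    obtain ⟨w, rfl⟩ := Ideal.Quotient.mkₐ_surjective ℂ I z
    obtain ⟨s, t, hw⟩ := hab w
    have h0 : mk (w - (s • a + t • b)) = 0 := by
      rw [hmk, Ideal.Quotient.mkₐ_eq_mk, Ideal.Quotient.eq_zero_iff_mem]
      exact hw
    rw [map_sub, sub_eq_zero, map_add, map_smul, map_smul] at h0
    rw [h0]
    exact Submodule.add_mem _
      (Submodule.smul_mem _ _ (Submodule.subset_span (by simp)))
      (Submodule.smul_mem _ _ (Submodule.subset_span (by simp)))
  have h2 : Module.rank ℂ (R2 ⧸ I) ≤ 2 := by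
    have htop : Submodule.span ℂ {mk a, mk b} = ⊤ := top_unique hspan
    calc Module.rank ℂ (R2 ⧸ I)
        = Module.rank ℂ (⊤ : Submodule ℂ (R2 ⧸ I)) := (rank_top ℂ _).symm
      _ = Module.rank ℂ (Submodule.span ℂ {mk a, mk b}) := by rw [htop]
      _ ≤ Cardinal.mk ({mk a, mk b} : Set (R2 ⧸ I)) := rank_span_le _
      _ ≤ 2 := cardinal_pair_le _ _
  have h3 : (3 : Cardinal) ≤ 2 := hdim.trans h2
  have h4 : (3 : ℕ) ≤ (2 : ℕ) := by exact_mod_cast h3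
  omega

lemma span3_fin_contra (u v : Fin 3 → ℂ)
    (h : ∀ i : Fin 3, (Pi.single i 1 : Fin 3 → ℂ) ∈ Submodule.span ℂ {u, v}) : False := by
  have htop : Submodule.span ℂ {u, v} = ⊤ := by
    apply top_unique
    rintro x -
    have hx : x = ∑ i : Fin 3, Pi.single i (x i) := (Finset.univ_sum_single x).symm
    rw [hx]
    refine Submodule.sum_mem _ fun i _ => ?_
    have : Pi.single i (x i) = x i • (Pi.single i 1 : Fin 3 → ℂ) := by
      funext j
      by_cases hij : j = i
      · subst hij; simp
      · simp [Pi.single_apply, hij]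
    rw [this]
    exact Submodule.smul_mem _ _ (h i)
  have h3 : Module.rank ℂ (Fin 3 → ℂ) = 3 := rank_fin_fun 3
  have h2 : Module.rank ℂ (Fin 3 → ℂ) ≤ 2 := by
    calc Module.rank ℂ (Fin 3 → ℂ)
        = Module.rank ℂ (⊤ : Submodule ℂ (Fin 3 → ℂ)) := (rank_top ℂ _).symm
      _ = Module.rank ℂ (Submodule.span ℂ {u, v}) := by rw [htop]
      _ ≤ Cardinal.mk ({u, v} : Set (Fin 3 → ℂ)) := rank_span_le _
      _ ≤ 2 := cardinal_pair_le _ _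
  rw [h3] at h2
  have h4 : (3 : ℕ) ≤ (2 : ℕ) := by exact_mod_cast h2
  omega

lemma mem_span_triple {a b c z : R2} (hz : z ∈ Ideal.span {a, b, c}) :
    ∃ p q r : R2, z = p * a + q * b + r * c := by
  rw [show ({a, b, c} : Set R2) = insert a {b, c} from rfl, Ideal.mem_span_insert] at hz
  obtain ⟨p, z1, hz1, rfl⟩ := hz
  rw [Ideal.mem_span_insert] at hz1
  obtain ⟨q, z2, hz2, rfl⟩ := hz1
  rw [Ideal.mem_span_singleton'] at hz2
  obtain ⟨r, rfl⟩ := hz2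
  exact ⟨p, q, r, by ring⟩

lemma coeff_mul_mono (p q : Fin 2 →₀ ℕ) (u : R2) :
    MvPowerSeries.coeff p (u * MvPowerSeries.monomial q 1) =
      if q ≤ p then MvPowerSeries.coeff (p - q) u else 0 := by
  rw [MvPowerSeries.coeff_mul_monomial]
  simp

/-- An ideal generated by three pairwise incomparable monomials is not 2-generated. -/
lemma not2gen (p q r : Fin 2 →₀ ℕ)
    (hpq : ¬ p ≤ q) (hpr : ¬ p ≤ r) (hqp : ¬ q ≤ p) (hqr : ¬ q ≤ r)
    (hrp : ¬ r ≤ p) (hrq : ¬ r ≤ q) (g h : R2)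
    (hEq : Ideal.span {(MvPowerSeries.monomial p 1 : R2),
      MvPowerSeries.monomial q 1, MvPowerSeries.monomial r 1} = Ideal.span {g, h}) :
    False := by
  obtain ⟨g1, g2, g3, hg⟩ := mem_span_triple (a := (MvPowerSeries.monomial p 1 : R2))
    (b := MvPowerSeries.monomial q 1) (c := MvPowerSeries.monomial r 1)
    (hEq ▸ Ideal.subset_span (by simp) : g ∈ _)
  obtain ⟨h1, h2, h3, hh⟩ := mem_span_triple (a := (MvPowerSeries.monomial p 1 : R2))
    (b := MvPowerSeries.monomial q 1) (c := MvPowerSeries.monomial r 1)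
    (hEq ▸ Ideal.subset_span (by simp) : h ∈ _)
  set ψ : R2 → Fin 3 → ℂ := fun w => ![MvPowerSeries.coeff p w,
    MvPowerSeries.coeff q w, MvPowerSeries.coeff r w] with hψ
  have key : ∀ u1 u2 u3 : R2,
      ψ (u1 * MvPowerSeries.monomial p 1 + u2 * MvPowerSeries.monomial q 1 +
        u3 * MvPowerSeries.monomial r 1) =
      ![MvPowerSeries.constantCoeff (σ := Fin 2) (R := ℂ) u1, MvPowerSeries.constantCoeff (σ := Fin 2) (R := ℂ) u2,
        MvPowerSeries.constantCoeff (σ := Fin 2) (R := ℂ) u3] := by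
    intro u1 u2 u3
    have e1 : MvPowerSeries.coeff p (u1 * MvPowerSeries.monomial p 1 +
        u2 * MvPowerSeries.monomial q 1 + u3 * MvPowerSeries.monomial r 1) =
        MvPowerSeries.constantCoeff (σ := Fin 2) (R := ℂ) u1 := by
      rw [map_add, map_add, coeff_mul_mono, coeff_mul_mono, coeff_mul_mono,
        if_pos (le_refl p), if_neg hqp, if_neg hrp, tsub_self]
      simp [MvPowerSeries.coeff_zero_eq_constantCoeff]
    have e2 : MvPowerSeries.coeff q (u1 * MvPowerSeries.monomial p 1 +
        u2 * MvPowerSeries.monomial q 1 + u3 * MvPowerSeries.monomial r 1) =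
        MvPowerSeries.constantCoeff (σ := Fin 2) (R := ℂ) u2 := by
      rw [map_add, map_add, coeff_mul_mono, coeff_mul_mono, coeff_mul_mono,
        if_pos (le_refl q), if_neg hpq, if_neg hrq, tsub_self]
      simp [MvPowerSeries.coeff_zero_eq_constantCoeff]
    have e3 : MvPowerSeries.coeff r (u1 * MvPowerSeries.monomial p 1 +
        u2 * MvPowerSeries.monomial q 1 + u3 * MvPowerSeries.monomial r 1) =
        MvPowerSeries.constantCoeff (σ := Fin 2) (R := ℂ) u3 := by
      rw [map_add, map_add, coeff_mul_mono, coeff_mul_mono, coeff_mul_mono,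
        if_pos (le_refl r), if_neg hpr, if_neg hqr, tsub_self]
      simp [MvPowerSeries.coeff_zero_eq_constantCoeff]
    funext i
    fin_cases i
    · simpa [hψ] using e1
    · simpa [hψ] using e2
    · simpa [hψ] using e3
  have hmono : ∀ w : R2, w ∈ Ideal.span ({g, h} : Set R2) →
      ∃ s t : ℂ, ψ w = s • ψ g + t • ψ h := by
    intro w hw
    obtain ⟨s, t, hst⟩ := Ideal.mem_span_pair.1 hw
    refine ⟨MvPowerSeries.constantCoeff (σ := Fin 2) (R := ℂ) s, MvPowerSeries.constantCoeff (σ := Fin 2) (R := ℂ) t, ?_⟩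
    have hw' : w = (s * g1 + t * h1) * MvPowerSeries.monomial p 1 +
        (s * g2 + t * h2) * MvPowerSeries.monomial q 1 +
        (s * g3 + t * h3) * MvPowerSeries.monomial r 1 := by
      rw [← hst, hg, hh]; ring
    rw [hw', key, hg, hh, key, key]
    funext i
    fin_cases i <;> simp <;> ring
  have hsingle : ∀ (i : Fin 3) (dd : Fin 2 →₀ ℕ),
      ψ (MvPowerSeries.monomial dd 1) ∈ Submodule.span ℂ {ψ g, ψ h} →
      ψ (MvPowerSeries.monomial dd 1) ∈ Submodule.span ℂ {ψ g, ψ h} := fun _ _ hx => hx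
  apply span3_fin_contra (ψ g) (ψ h)
  have hmem : ∀ w : R2, w ∈ Ideal.span ({g, h} : Set R2) →
      ψ w ∈ Submodule.span ℂ {ψ g, ψ h} := by
    intro w hw
    obtain ⟨s, t, hst⟩ := hmono w hw
    rw [hst]
    exact Submodule.add_mem _ (Submodule.smul_mem _ _ (Submodule.subset_span (by simp)))
      (Submodule.smul_mem _ _ (Submodule.subset_span (by simp)))
  have hψA : ψ (MvPowerSeries.monomial p 1) = Pi.single 0 1 := by
    have h1 : q ≠ p := fun hc => hpq (le_of_eq hc.symm)
    have h2 : r ≠ p := fun hc => hpr (le_of_eq hc.symm)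
    funext i
    fin_cases i <;> simp [hψ, MvPowerSeries.coeff_monomial, h1, h2]
  have hψB : ψ (MvPowerSeries.monomial q 1) = Pi.single 1 1 := by
    have h1 : p ≠ q := fun hc => hqp (le_of_eq hc.symm)
    have h2 : r ≠ q := fun hc => hqr (le_of_eq hc.symm)
    funext i
    fin_cases i <;> simp [hψ, MvPowerSeries.coeff_monomial, h1, h2]
  have hψC : ψ (MvPowerSeries.monomial r 1) = Pi.single 2 1 := by
    have h1 : p ≠ r := fun hc => hrp (le_of_eq hc.symm)
    have h2 : q ≠ r := fun hc => hrq (le_of_eq hc.symm)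
    funext i
    fin_cases i <;> simp [hψ, MvPowerSeries.coeff_monomial, h1, h2]
  intro i
  fin_cases i
  · exact hψA ▸ hmem _ (hEq ▸ Ideal.subset_span (by simp))
  · exact hψB ▸ hmem _ (hEq ▸ Ideal.subset_span (by simp))
  · exact hψC ▸ hmem _ (hEq ▸ Ideal.subset_span (by simp))

lemma E00 : E 0 0 = 0 := by
  apply fin2_ext <;> simp

lemma unsmul_mem {I : Ideal R2} {c : ℂ} (hc : c ≠ 0) {x : R2} (h : c • x ∈ I) : x ∈ I := by
  have h2 := smul_mem_ideal c⁻¹ h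
  rwa [smul_smul, inv_mul_cancel₀ hc, one_smul] at h2

lemma deriv_jet_mem {I : Ideal R2} (hm3 : mIdeal ^ 3 ≤ I) {f j : R2}
    (hj : f - j ∈ mIdeal ^ 4) (i : Fin 2) (hf : pderiv2 i f ∈ I) : pderiv2 i j ∈ I := by
  have hs := pderiv2_mem3 i hj
  rw [pderiv2_sub] at hs
  have h2 : pderiv2 i f - pderiv2 i j ∈ I := hm3 hs
  have h3 := I.sub_mem hf h2
  simpa using h3

lemma cc00_zero {I : Ideal R2} (hdim : (3 : Cardinal) ≤ Module.rank ℂ (R2 ⧸ I)) :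
    ∀ w ∈ I, cc 0 0 w = 0 := by
  intro w hw
  by_contra h0
  have hu : IsUnit w := by
    rw [MvPowerSeries.isUnit_iff_constantCoeff]
    rw [← MvPowerSeries.coeff_zero_eq_constantCoeff_apply, ← E00]
    exact isUnit_iff_ne_zero.2 h0
  have htop : I = ⊤ := Ideal.eq_top_of_isUnit_mem _ hw hu
  exact dim_contra I hdim 0 0 (fun w => ⟨0, 0, htop ▸ Submodule.mem_top⟩)

lemma contra_1y (I : Ideal R2) (hdim : (3 : Cardinal) ≤ Module.rank ℂ (R2 ⧸ I))
    (hm3 : mIdeal ^ 3 ≤ I) (α : ℂ) (hl : Xp 1 0 + α • Xp 0 1 ∈ I)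
    (h20 : Xp 2 0 ∈ I) (h11 : Xp 1 1 ∈ I) (h02 : Xp 0 2 ∈ I) : False := by
  apply dim_contra I hdim (Xp 0 0) (Xp 0 1)
  intro w
  obtain ⟨t, ht, hwj⟩ := jet3 w
  refine ⟨cc 0 0 w, cc 0 1 w - cc 1 0 w * α, ?_⟩
  have key : w - (cc 0 0 w • Xp 0 0 + (cc 0 1 w - cc 1 0 w * α) • Xp 0 1) =
      cc 1 0 w • (Xp 1 0 + α • Xp 0 1) + cc 2 0 w • Xp 2 0 + cc 1 1 w • Xp 1 1 +
        cc 0 2 w • Xp 0 2 + t := by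
    nth_rewrite 1 [hwj]
    module
  rw [key]
  exact add_mem (add_mem (add_mem (add_mem (smul_mem_ideal _ hl) (smul_mem_ideal _ h20))
    (smul_mem_ideal _ h11)) (smul_mem_ideal _ h02)) (hm3 ht)

lemma contra_1x (I : Ideal R2) (hdim : (3 : Cardinal) ≤ Module.rank ℂ (R2 ⧸ I))
    (hm3 : mIdeal ^ 3 ≤ I) (α : ℂ) (hl : Xp 0 1 + α • Xp 1 0 ∈ I)
    (h20 : Xp 2 0 ∈ I) (h11 : Xp 1 1 ∈ I) (h02 : Xp 0 2 ∈ I) : False := by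
  apply dim_contra I hdim (Xp 0 0) (Xp 1 0)
  intro w
  obtain ⟨t, ht, hwj⟩ := jet3 w
  refine ⟨cc 0 0 w, cc 1 0 w - cc 0 1 w * α, ?_⟩
  have key : w - (cc 0 0 w • Xp 0 0 + (cc 1 0 w - cc 0 1 w * α) • Xp 1 0) =
      cc 0 1 w • (Xp 0 1 + α • Xp 1 0) + cc 2 0 w • Xp 2 0 + cc 1 1 w • Xp 1 1 +
        cc 0 2 w • Xp 0 2 + t := by
    nth_rewrite 1 [hwj]
    module
  rw [key]
  exact add_mem (add_mem (add_mem (add_mem (smul_mem_ideal _ hl) (smul_mem_ideal _ h20))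
    (smul_mem_ideal _ h11)) (smul_mem_ideal _ h02)) (hm3 ht)

lemma E_nle {a b i j : ℕ} (h : ¬ (a ≤ i ∧ b ≤ j)) : ¬ E a b ≤ E i j :=
  fun hc => h (E_le_iff.1 hc)

lemma m3_le_sq : mIdeal ^ 3 ≤ Ideal.span {Xv ^ 2, Yv ^ 2} := by
  apply m3_le
  · have e : Xp 3 0 = Xv * Xv ^ 2 := by simp only [Xp]; ring
    rw [e]
    exact Ideal.mul_mem_left _ _ (Ideal.subset_span (by simp))
  · have e : Xp 2 1 = Yv * Xv ^ 2 := by simp only [Xp]; ring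
    rw [e]
    exact Ideal.mul_mem_left _ _ (Ideal.subset_span (by simp))
  · have e : Xp 1 2 = Xv * Yv ^ 2 := by simp only [Xp]; ring
    rw [e]
    exact Ideal.mul_mem_left _ _ (Ideal.subset_span (by simp))
  · have e : Xp 0 3 = Yv * Yv ^ 2 := by simp only [Xp]; ring
    rw [e]
    exact Ideal.mul_mem_left _ _ (Ideal.subset_span (by simp))

lemma caseA (I : Ideal R2) (g h : R2) (hI : I = Ideal.span {g, h})
    (hdim : (3 : Cardinal) ≤ Module.rank ℂ (R2 ⧸ I)) (hm3 : mIdeal ^ 3 ≤ I)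
    (h20 : Xp 2 0 ∈ I) (h02 : Xp 0 2 ∈ I) : I = Ideal.span {Xv ^ 2, Yv ^ 2} := by
  have hc00 := cc00_zero hdim
  have hc10 : ∀ w ∈ I, cc 1 0 w = 0 := by
    intro w hw
    by_contra hne
    obtain ⟨t, ht, hwj⟩ := jet3 w
    set a := cc 1 0 w with ha
    set k00 := cc 0 0 w with hk00
    set k01 := cc 0 1 w with hk01
    set k20 := cc 2 0 w with hk20
    set k11 := cc 1 1 w with hk11
    set k02 := cc 0 2 w with hk02
    have hz0 : k00 = 0 := hc00 w hw
    rw [hz0, zero_smul, zero_add] at hwj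
    have hpmem : Xp 1 0 + (k01 / a) • Xp 0 1 + (k11 / a) • Xp 1 1 ∈ I := by
      have hid : Xp 1 0 + (k01 / a) • Xp 0 1 + (k11 / a) • Xp 1 1 =
          a⁻¹ • (w - (k20 • Xp 2 0 + k02 • Xp 0 2 + t)) := by
        rw [hwj]
        match_scalars <;> field_simp <;> ring
      rw [hid]
      exact smul_mem_ideal _ (I.sub_mem hw (add_mem (add_mem (smul_mem_ideal _ h20)
        (smul_mem_ideal _ h02)) (hm3 ht)))
    have hxy : Xp 1 1 ∈ I := by
      have hid : Xp 1 1 = (Xp 1 0 + (k01 / a) • Xp 0 1 + (k11 / a) • Xp 1 1) * Yv -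
          (k01 / a) • Xp 0 2 - (k11 / a) • Xp 1 2 := by
        simp only [Algebra.smul_def, Xp, Xv, Yv]
        ring
      rw [hid]
      exact I.sub_mem (I.sub_mem (I.mul_mem_right _ hpmem) (smul_mem_ideal _ h02))
        (smul_mem_ideal _ (hm3 (Xp_mem3 (by omega))))
    have hl : Xp 1 0 + (k01 / a) • Xp 0 1 ∈ I := by
      have hid : Xp 1 0 + (k01 / a) • Xp 0 1 =
          (Xp 1 0 + (k01 / a) • Xp 0 1 + (k11 / a) • Xp 1 1) - (k11 / a) • Xp 1 1 := by
        module
      rw [hid]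
      exact I.sub_mem hpmem (smul_mem_ideal _ hxy)
    exact contra_1y I hdim hm3 _ hl h20 hxy h02
  have hc01 : ∀ w ∈ I, cc 0 1 w = 0 := by
    intro w hw
    by_contra hne
    obtain ⟨t, ht, hwj⟩ := jet3 w
    set a := cc 0 1 w with ha
    set k00 := cc 0 0 w with hk00
    set k10 := cc 1 0 w with hk10
    set k20 := cc 2 0 w with hk20
    set k11 := cc 1 1 w with hk11
    set k02 := cc 0 2 w with hk02
    have hz0 : k00 = 0 := hc00 w hw
    have hz1 : k10 = 0 := hc10 w hw
    rw [hz0, hz1, zero_smul, zero_smul, zero_add, zero_add] at hwj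
    have hqmem : Xp 0 1 + (k11 / a) • Xp 1 1 ∈ I := by
      have hid : Xp 0 1 + (k11 / a) • Xp 1 1 =
          a⁻¹ • (w - (k20 • Xp 2 0 + k02 • Xp 0 2 + t)) := by
        rw [hwj]
        match_scalars <;> field_simp <;> ring
      rw [hid]
      exact smul_mem_ideal _ (I.sub_mem hw (add_mem (add_mem (smul_mem_ideal _ h20)
        (smul_mem_ideal _ h02)) (hm3 ht)))
    have hxy : Xp 1 1 ∈ I := by
      have hid : Xp 1 1 = (Xp 0 1 + (k11 / a) • Xp 1 1) * Xv - (k11 / a) • Xp 2 1 := by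
        simp only [Algebra.smul_def, Xp, Xv, Yv]
        ring
      rw [hid]
      exact I.sub_mem (I.mul_mem_right _ hqmem) (smul_mem_ideal _ (hm3 (Xp_mem3 (by omega))))
    have hl : Xp 0 1 + (0 : ℂ) • Xp 1 0 ∈ I := by
      have hid : Xp 0 1 + (0 : ℂ) • Xp 1 0 =
          (Xp 0 1 + (k11 / a) • Xp 1 1) - (k11 / a) • Xp 1 1 := by
        module
      rw [hid]
      exact I.sub_mem hqmem (smul_mem_ideal _ hxy)
    exact contra_1x I hdim hm3 _ hl h20 hxy h02
  by_cases hc11 : ∀ w ∈ I, cc 1 1 w = 0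
  · apply le_antisymm
    · intro w hw
      obtain ⟨t, ht, hwj⟩ := jet3 w
      rw [hc00 w hw, hc10 w hw, hc01 w hw, hc11 w hw, zero_smul, zero_smul, zero_smul,
        zero_smul, zero_add, zero_add, zero_add, add_zero] at hwj
      rw [hwj]
      have e20 : Xp 2 0 ∈ Ideal.span {Xv ^ 2, Yv ^ 2} := by
        rw [Xp_i0]
        exact Ideal.subset_span (by simp)
      have e02 : Xp 0 2 ∈ Ideal.span {Xv ^ 2, Yv ^ 2} := by
        rw [Xp_0j]
        exact Ideal.subset_span (by simp)
      exact add_mem (add_mem (smul_mem_ideal _ e20) (smul_mem_ideal _ e02)) (m3_le_sq ht)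
    · rw [Ideal.span_le]
      rintro z (rfl | rfl)
      · exact Xp_i0 2 ▸ h20
      · exact Xp_0j 2 ▸ h02
  · exfalso
    push_neg at hc11
    obtain ⟨w, hw, hne⟩ := hc11
    obtain ⟨t, ht, hwj⟩ := jet3 w
    set k20 := cc 2 0 w with hk20
    set k11 := cc 1 1 w with hk11
    set k02 := cc 0 2 w with hk02
    rw [hc00 w hw, hc10 w hw, hc01 w hw, zero_smul, zero_smul, zero_smul,
      zero_add, zero_add, zero_add] at hwj
    have hxy : Xp 1 1 ∈ I := by
      apply unsmul_mem hne
      have hid : k11 • Xp 1 1 = w - (k20 • Xp 2 0 + k02 • Xp 0 2 + t) := by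
        rw [hwj]; module
      rw [hid]
      exact I.sub_mem hw (add_mem (add_mem (smul_mem_ideal _ h20) (smul_mem_ideal _ h02))
        (hm3 ht))
    have hI2 : I = mIdeal ^ 2 := by
      apply le_antisymm
      · intro w' hw'
        obtain ⟨t', ht', hwj'⟩ := jet3 w'
        rw [hc00 w' hw', hc10 w' hw', hc01 w' hw', zero_smul, zero_smul, zero_smul,
          zero_add, zero_add, zero_add] at hwj'
        rw [hwj']
        have e20 : Xp 2 0 ∈ mIdeal ^ 2 := m2_eq ▸ Ideal.subset_span (by simp)
        have e11 : Xp 1 1 ∈ mIdeal ^ 2 := m2_eq ▸ Ideal.subset_span (by simp)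
        have e02 : Xp 0 2 ∈ mIdeal ^ 2 := m2_eq ▸ Ideal.subset_span (by simp)
        have hm32 : mIdeal ^ 3 ≤ mIdeal ^ 2 := Ideal.pow_le_pow_right (by omega)
        exact add_mem (add_mem (add_mem (smul_mem_ideal _ e20) (smul_mem_ideal _ e11))
          (smul_mem_ideal _ e02)) (hm32 ht')
      · rw [m2_eq, Ideal.span_le]
        rintro z (rfl | rfl | rfl) <;> assumption
    apply not2gen (E 2 0) (E 1 1) (E 0 2)
      (E_nle (by omega)) (E_nle (by omega)) (E_nle (by omega))
      (E_nle (by omega)) (E_nle (by omega)) (E_nle (by omega)) g h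
    rw [← Xp_eq_monomial 2 0, ← Xp_eq_monomial 1 1, ← Xp_eq_monomial 0 2, ← m2_eq, ← hI2, hI]

lemma I_eq_m2_contra (I : Ideal R2) (g h : R2) (hI : I = Ideal.span {g, h})
    (hm3 : mIdeal ^ 3 ≤ I) (h20 : Xp 2 0 ∈ I) (h11 : Xp 1 1 ∈ I) (h02 : Xp 0 2 ∈ I)
    (hc00 : ∀ w ∈ I, cc 0 0 w = 0) (hc10 : ∀ w ∈ I, cc 1 0 w = 0)
    (hc01 : ∀ w ∈ I, cc 0 1 w = 0) : False := by
  have hI2 : I = mIdeal ^ 2 := by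
    apply le_antisymm
    · intro w' hw'
      obtain ⟨t', ht', hwj'⟩ := jet3 w'
      rw [hc00 w' hw', hc10 w' hw', hc01 w' hw', zero_smul, zero_smul, zero_smul,
        zero_add, zero_add, zero_add] at hwj'
      rw [hwj']
      have e20 : Xp 2 0 ∈ mIdeal ^ 2 := m2_eq ▸ Ideal.subset_span (by simp)
      have e11 : Xp 1 1 ∈ mIdeal ^ 2 := m2_eq ▸ Ideal.subset_span (by simp)
      have e02 : Xp 0 2 ∈ mIdeal ^ 2 := m2_eq ▸ Ideal.subset_span (by simp)
      have hm32 : mIdeal ^ 3 ≤ mIdeal ^ 2 := Ideal.pow_le_pow_right (by omega)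
      exact add_mem (add_mem (add_mem (smul_mem_ideal _ e20) (smul_mem_ideal _ e11))
        (smul_mem_ideal _ e02)) (hm32 ht')
    · rw [m2_eq, Ideal.span_le]
      rintro z (rfl | rfl | rfl) <;> assumption
  apply not2gen (E 2 0) (E 1 1) (E 0 2)
    (E_nle (by omega)) (E_nle (by omega)) (E_nle (by omega))
    (E_nle (by omega)) (E_nle (by omega)) (E_nle (by omega)) g h
  rw [← Xp_eq_monomial 2 0, ← Xp_eq_monomial 1 1, ← Xp_eq_monomial 0 2, ← m2_eq, ← hI2, hI]

/-- `I = ⟨x², xy, y³⟩` contradiction -/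
lemma I_eq_K_contra (I : Ideal R2) (g h : R2) (hI : I = Ideal.span {g, h})
    (hm3 : mIdeal ^ 3 ≤ I) (h20 : Xp 2 0 ∈ I) (h11 : Xp 1 1 ∈ I)
    (hc00 : ∀ w ∈ I, cc 0 0 w = 0) (hc10 : ∀ w ∈ I, cc 1 0 w = 0)
    (hc01 : ∀ w ∈ I, cc 0 1 w = 0) (hc02 : ∀ w ∈ I, cc 0 2 w = 0) : False := by
  have hKm3 : mIdeal ^ 3 ≤ Ideal.span {Xp 2 0, Xp 1 1, Xp 0 3} := by
    apply m3_le
    · have e : Xp 3 0 = Xv * Xp 2 0 := by simp only [Xp]; ring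
      rw [e]
      exact Ideal.mul_mem_left _ _ (Ideal.subset_span (by simp))
    · have e : Xp 2 1 = Xv * Xp 1 1 := by simp only [Xp]; ring
      rw [e]
      exact Ideal.mul_mem_left _ _ (Ideal.subset_span (by simp))
    · have e : Xp 1 2 = Yv * Xp 1 1 := by simp only [Xp]; ring
      rw [e]
      exact Ideal.mul_mem_left _ _ (Ideal.subset_span (by simp))
    · exact Ideal.subset_span (by simp)
  have hIK : I = Ideal.span {Xp 2 0, Xp 1 1, Xp 0 3} := by
    apply le_antisymm
    · intro w' hw'
      obtain ⟨t', ht', hwj'⟩ := jet3 w'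
      rw [hc00 w' hw', hc10 w' hw', hc01 w' hw', hc02 w' hw', zero_smul, zero_smul, zero_smul,
        zero_smul, zero_add, zero_add, zero_add, add_zero] at hwj'
      rw [hwj']
      exact add_mem (add_mem (smul_mem_ideal _ (Ideal.subset_span (by simp)))
        (smul_mem_ideal _ (Ideal.subset_span (by simp)))) (hKm3 ht')
    · rw [Ideal.span_le]
      rintro z (rfl | rfl | rfl)
      · exact h20
      · exact h11
      · exact hm3 (Xp_mem3 (by omega))
  apply not2gen (E 2 0) (E 1 1) (E 0 3)
    (E_nle (by omega)) (E_nle (by omega)) (E_nle (by omega))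
    (E_nle (by omega)) (E_nle (by omega)) (E_nle (by omega)) g h
  rw [← Xp_eq_monomial 2 0, ← Xp_eq_monomial 1 1, ← Xp_eq_monomial 0 3, ← hIK, hI]

/-- the branch producing `I = ⟨x + γy², y³⟩` -/
lemma branch_u (I : Ideal R2) (hdim : (3 : Cardinal) ≤ Module.rank ℂ (R2 ⧸ I))
    (hm3 : mIdeal ^ 3 ≤ I) (γ : ℂ) (hu : Xp 1 0 + γ • Xp 0 2 ∈ I)
    (h20 : Xp 2 0 ∈ I) (h11 : Xp 1 1 ∈ I)
    (hc00 : ∀ w ∈ I, cc 0 0 w = 0) (hc01 : ∀ w ∈ I, cc 0 1 w = 0) :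
    ∃ u : R2, Ideal.span {u, Yv} = mIdeal ∧ I = Ideal.span {u, Yv ^ 3} := by
  set u : R2 := Xp 1 0 + γ • Xp 0 2 with hudef
  set S : Ideal R2 := Ideal.span {u, Yv ^ 3} with hSdef
  have huS : u ∈ S := Ideal.subset_span (by simp)
  have hy3S : Yv ^ 3 ∈ S := Ideal.subset_span (by simp)
  have h11S : Xp 1 1 ∈ S := by
    have e : Xp 1 1 = u * Yv - γ • Yv ^ 3 := by
      rw [hudef]
      simp only [Algebra.smul_def, Xp, Xv, Yv]
      ring
    rw [e]
    exact S.sub_mem (S.mul_mem_right _ huS) (smul_mem_ideal _ hy3S)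
  have h12S : Xp 1 2 ∈ S := by
    have e : Xp 1 2 = u * Yv ^ 2 - γ • (Yv * Yv ^ 3) := by
      rw [hudef]
      simp only [Algebra.smul_def, Xp, Xv, Yv]
      ring
    rw [e]
    exact S.sub_mem (S.mul_mem_right _ huS) (smul_mem_ideal _ (S.mul_mem_left _ hy3S))
  have h20S : Xp 2 0 ∈ S := by
    have e : Xp 2 0 = u * Xv - γ • Xp 1 2 := by
      rw [hudef]
      simp only [Algebra.smul_def, Xp, Xv, Yv]
      ring
    rw [e]
    exact S.sub_mem (S.mul_mem_right _ huS) (smul_mem_ideal _ h12S)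
  have hm3S : mIdeal ^ 3 ≤ S := by
    apply m3_le
    · have e : Xp 3 0 = Xv * Xp 2 0 := by simp only [Xp]; ring
      rw [e]
      exact S.mul_mem_left _ h20S
    · have e : Xp 2 1 = Xv * Xp 1 1 := by simp only [Xp]; ring
      rw [e]
      exact S.mul_mem_left _ h11S
    · exact h12S
    · have e : Xp 0 3 = Yv ^ 3 := by simp only [Xp]; ring
      rw [e]
      exact hy3S
  -- key coefficient identity on I
  have hkey : ∀ w ∈ I, cc 0 2 w - cc 1 0 w * γ = 0 := by
    intro w hw
    by_contra hb
    obtain ⟨t, ht, hwj⟩ := jet3 w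
    set k10 := cc 1 0 w with hk10
    set k20 := cc 2 0 w with hk20
    set k11 := cc 1 1 w with hk11
    set k02 := cc 0 2 w with hk02
    have hz0 : cc 0 0 w = 0 := hc00 w hw
    have hz1 : cc 0 1 w = 0 := hc01 w hw
    rw [hz0, hz1, zero_smul, zero_smul, zero_add, add_zero] at hwj
    -- y² ∈ I
    have hy2 : Xp 0 2 ∈ I := by
      have hid : (k02 - k10 * γ) • Xp 0 2 =
          w - (k10 • u + k20 • Xp 2 0 + k11 • Xp 1 1 + t) := by
        rw [hwj, hudef]
        module
      apply unsmul_mem hb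
      rw [hid]
      exact I.sub_mem hw (add_mem (add_mem (add_mem (smul_mem_ideal _ hu)
        (smul_mem_ideal _ h20)) (smul_mem_ideal _ h11)) (hm3 ht))
    have hx : Xp 1 0 + (0 : ℂ) • Xp 0 1 ∈ I := by
      have hid : Xp 1 0 + (0 : ℂ) • Xp 0 1 = u - γ • Xp 0 2 := by
        rw [hudef]
        module
      rw [hid]
      exact I.sub_mem hu (smul_mem_ideal _ hy2)
    exact contra_1y I hdim hm3 0 hx h20 h11 hy2
  refine ⟨u, ?_, ?_⟩
  · apply le_antisymm
    · rw [Ideal.span_le]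
      rintro z (rfl | rfl)
      · apply Ideal.mem_span_pair.2
        exact ⟨1, algebraMap ℂ R2 γ * Yv, by
          rw [hudef]
          simp only [Algebra.smul_def, Xp, Xv, Yv]
          ring⟩
      · exact Ideal.subset_span (by simp)
    · rw [mIdeal, Ideal.span_le]
      rintro z (rfl | rfl)
      · apply Ideal.mem_span_pair.2
        refine ⟨1, -(algebraMap ℂ R2 γ * Yv), ?_⟩
        rw [hudef]
        simp only [Algebra.smul_def, Xp, Xv, Yv]
        ring
      · exact Ideal.subset_span (by simp)
  · apply le_antisymm
    · intro w hw
      obtain ⟨t, ht, hwj⟩ := jet3 w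
      set k10 := cc 1 0 w with hk10
      set k20 := cc 2 0 w with hk20
      set k11 := cc 1 1 w with hk11
      set k02 := cc 0 2 w with hk02
      have hz0 : cc 0 0 w = 0 := hc00 w hw
      have hz1 : cc 0 1 w = 0 := hc01 w hw
      rw [hz0, hz1, zero_smul, zero_smul, zero_add, add_zero] at hwj
      have hid : w = k10 • u + k20 • Xp 2 0 + k11 • Xp 1 1 + (k02 - k10 * γ) • Xp 0 2 + t := by
        rw [hwj, hudef]
        module
      have hkz : k02 - k10 * γ = 0 := hkey w hw
      rw [hid, hkz, zero_smul, add_zero]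
      exact add_mem (add_mem (add_mem (smul_mem_ideal _ huS) (smul_mem_ideal _ h20S))
        (smul_mem_ideal _ h11S)) (hm3S ht)
    · rw [Ideal.span_le]
      rintro z (rfl | rfl)
      · exact hu
      · have e : Yv ^ 3 = Xp 0 3 := by simp only [Xp]; ring
        rw [e]
        exact hm3 (Xp_mem3 (by omega))

lemma caseB (I : Ideal R2) (g h : R2) (hI : I = Ideal.span {g, h})
    (hdim : (3 : Cardinal) ≤ Module.rank ℂ (R2 ⧸ I)) (hm3 : mIdeal ^ 3 ≤ I)
    (h20 : Xp 2 0 ∈ I) (h11 : Xp 1 1 ∈ I) :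
    ∃ u : R2, Ideal.span {u, Yv} = mIdeal ∧ I = Ideal.span {u, Yv ^ 3} := by
  have hc00 := cc00_zero hdim
  have hc01 : ∀ w ∈ I, cc 0 1 w = 0 := by
    intro w hw
    by_contra hne
    obtain ⟨t, ht, hwj⟩ := jet3 w
    set a := cc 0 1 w with ha
    set k10 := cc 1 0 w with hk10
    set k20 := cc 2 0 w with hk20
    set k11 := cc 1 1 w with hk11
    set k02 := cc 0 2 w with hk02
    have hz0 : cc 0 0 w = 0 := hc00 w hw
    rw [hz0, zero_smul, zero_add] at hwj
    -- q = (k10/a) x + y + (k02/a) y² ∈ I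
    have hq : (k10 / a) • Xp 1 0 + Xp 0 1 + (k02 / a) • Xp 0 2 ∈ I := by
      have hid : (k10 / a) • Xp 1 0 + Xp 0 1 + (k02 / a) • Xp 0 2 =
          a⁻¹ • (w - (k20 • Xp 2 0 + k11 • Xp 1 1 + t)) := by
        rw [hwj]
        match_scalars <;> field_simp <;> ring
      rw [hid]
      exact smul_mem_ideal _ (I.sub_mem hw (add_mem (add_mem (smul_mem_ideal _ h20)
        (smul_mem_ideal _ h11)) (hm3 ht)))
    have hy2 : Xp 0 2 ∈ I := by
      have hid : Xp 0 2 = ((k10 / a) • Xp 1 0 + Xp 0 1 + (k02 / a) • Xp 0 2) * Yv -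
          (k10 / a) • Xp 1 1 - (k02 / a) • Xp 0 3 := by
        simp only [Algebra.smul_def, Xp, Xv, Yv]
        ring
      rw [hid]
      exact I.sub_mem (I.sub_mem (I.mul_mem_right _ hq) (smul_mem_ideal _ h11))
        (smul_mem_ideal _ (hm3 (Xp_mem3 (by omega))))
    have hl : Xp 0 1 + (k10 / a) • Xp 1 0 ∈ I := by
      have hid : Xp 0 1 + (k10 / a) • Xp 1 0 =
          ((k10 / a) • Xp 1 0 + Xp 0 1 + (k02 / a) • Xp 0 2) - (k02 / a) • Xp 0 2 := by
        module
      rw [hid]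
      exact I.sub_mem hq (smul_mem_ideal _ hy2)
    exact contra_1x I hdim hm3 _ hl h20 h11 hy2
  by_cases hx : ∃ w ∈ I, cc 1 0 w ≠ 0
  · obtain ⟨w, hw, hne⟩ := hx
    obtain ⟨t, ht, hwj⟩ := jet3 w
    set a := cc 1 0 w with ha
    set k20 := cc 2 0 w with hk20
    set k11 := cc 1 1 w with hk11
    set k02 := cc 0 2 w with hk02
    have hz0 : cc 0 0 w = 0 := hc00 w hw
    have hz1 : cc 0 1 w = 0 := hc01 w hw
    rw [hz0, hz1, zero_smul, zero_smul, zero_add, add_zero] at hwj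
    have hu : Xp 1 0 + (k02 / a) • Xp 0 2 ∈ I := by
      have hid : Xp 1 0 + (k02 / a) • Xp 0 2 =
          a⁻¹ • (w - (k20 • Xp 2 0 + k11 • Xp 1 1 + t)) := by
        rw [hwj]
        match_scalars <;> field_simp <;> ring
      rw [hid]
      exact smul_mem_ideal _ (I.sub_mem hw (add_mem (add_mem (smul_mem_ideal _ h20)
        (smul_mem_ideal _ h11)) (hm3 ht)))
    exact branch_u I hdim hm3 _ hu h20 h11 hc00 hc01
  · push_neg at hx
    exfalso
    by_cases hy2 : ∃ w ∈ I, cc 0 2 w ≠ 0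
    · obtain ⟨w, hw, hne⟩ := hy2
      obtain ⟨t, ht, hwj⟩ := jet3 w
      set a := cc 0 2 w with ha
      set k20 := cc 2 0 w with hk20
      set k11 := cc 1 1 w with hk11
      have hz0 : cc 0 0 w = 0 := hc00 w hw
      have hz1 : cc 1 0 w = 0 := hx w hw
      have hz2 : cc 0 1 w = 0 := hc01 w hw
      rw [hz0, hz1, hz2, zero_smul, zero_smul, zero_smul, zero_add, zero_add, zero_add] at hwj
      have h02 : Xp 0 2 ∈ I := by
        apply unsmul_mem hne
        have hid : a • Xp 0 2 = w - (k20 • Xp 2 0 + k11 • Xp 1 1 + t) := by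
          rw [hwj]
          module
        rw [hid]
        exact I.sub_mem hw (add_mem (add_mem (smul_mem_ideal _ h20) (smul_mem_ideal _ h11))
          (hm3 ht))
      exact I_eq_m2_contra I g h hI hm3 h20 h11 h02 hc00 hx hc01
    · push_neg at hy2
      exact I_eq_K_contra I g h hI hm3 h20 h11 hc00 hx hc01 hy2

/-- `I = ⟨x², xy², y³⟩` contradiction -/
lemma I_eq_KC_contra (I : Ideal R2) (g h : R2) (hI : I = Ideal.span {g, h})
    (hm3 : mIdeal ^ 3 ≤ I) (h20 : Xp 2 0 ∈ I)
    (hc00 : ∀ w ∈ I, cc 0 0 w = 0) (hc10 : ∀ w ∈ I, cc 1 0 w = 0)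
    (hc01 : ∀ w ∈ I, cc 0 1 w = 0) (hc11 : ∀ w ∈ I, cc 1 1 w = 0)
    (hc02 : ∀ w ∈ I, cc 0 2 w = 0) : False := by
  have hKm3 : mIdeal ^ 3 ≤ Ideal.span {Xp 2 0, Xp 1 2, Xp 0 3} := by
    apply m3_le
    · have e : Xp 3 0 = Xv * Xp 2 0 := by simp only [Xp]; ring
      rw [e]
      exact Ideal.mul_mem_left _ _ (Ideal.subset_span (by simp))
    · have e : Xp 2 1 = Yv * Xp 2 0 := by simp only [Xp]; ring
      rw [e]
      exact Ideal.mul_mem_left _ _ (Ideal.subset_span (by simp))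
    · exact Ideal.subset_span (by simp)
    · exact Ideal.subset_span (by simp)
  have hIK : I = Ideal.span {Xp 2 0, Xp 1 2, Xp 0 3} := by
    apply le_antisymm
    · intro w' hw'
      obtain ⟨t', ht', hwj'⟩ := jet3 w'
      rw [hc00 w' hw', hc10 w' hw', hc01 w' hw', hc11 w' hw', hc02 w' hw', zero_smul,
        zero_smul, zero_smul, zero_smul, zero_smul, zero_add, zero_add, zero_add,
        add_zero, add_zero] at hwj'
      rw [hwj']
      exact add_mem (smul_mem_ideal _ (Ideal.subset_span (by simp))) (hKm3 ht')
    · rw [Ideal.span_le]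
      rintro z (rfl | rfl | rfl)
      · exact h20
      · exact hm3 (Xp_mem3 (by omega))
      · exact hm3 (Xp_mem3 (by omega))
  apply not2gen (E 2 0) (E 1 2) (E 0 3)
    (E_nle (by omega)) (E_nle (by omega)) (E_nle (by omega))
    (E_nle (by omega)) (E_nle (by omega)) (E_nle (by omega)) g h
  rw [← Xp_eq_monomial 2 0, ← Xp_eq_monomial 1 2, ← Xp_eq_monomial 0 3, ← hIK, hI]

lemma caseC (I : Ideal R2) (g h : R2) (hI : I = Ideal.span {g, h})
    (hdim : (3 : Cardinal) ≤ Module.rank ℂ (R2 ⧸ I)) (hm3 : mIdeal ^ 3 ≤ I)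
    (h20 : Xp 2 0 ∈ I) :
    (∃ u v : R2, Ideal.span {u, v} = mIdeal ∧ I = Ideal.span {u ^ 2, v ^ 2}) ∨
    (∃ u : R2, Ideal.span {u, Yv} = mIdeal ∧ I = Ideal.span {u, Yv ^ 3}) := by
  have hc00 := cc00_zero hdim
  have hc01 : ∀ w ∈ I, cc 0 1 w = 0 := by
    intro w hw
    by_contra hne
    obtain ⟨t, ht, hwj⟩ := jet3 w
    set a := cc 0 1 w with ha
    set k10 := cc 1 0 w with hk10
    set k20 := cc 2 0 w with hk20
    set k11 := cc 1 1 w with hk11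
    set k02 := cc 0 2 w with hk02
    have hz0 : cc 0 0 w = 0 := hc00 w hw
    rw [hz0, zero_smul, zero_add] at hwj
    have hq : (k10 / a) • Xp 1 0 + Xp 0 1 + (k11 / a) • Xp 1 1 + (k02 / a) • Xp 0 2 ∈ I := by
      have hid : (k10 / a) • Xp 1 0 + Xp 0 1 + (k11 / a) • Xp 1 1 + (k02 / a) • Xp 0 2 =
          a⁻¹ • (w - (k20 • Xp 2 0 + t)) := by
        rw [hwj]
        match_scalars <;> field_simp <;> ring
      rw [hid]
      exact smul_mem_ideal _ (I.sub_mem hw (add_mem (smul_mem_ideal _ h20) (hm3 ht)))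
    have hxy : Xp 1 1 ∈ I := by
      have hid : Xp 1 1 = ((k10 / a) • Xp 1 0 + Xp 0 1 + (k11 / a) • Xp 1 1 +
          (k02 / a) • Xp 0 2) * Xv - (k10 / a) • Xp 2 0 - (k11 / a) • Xp 2 1 -
          (k02 / a) • Xp 1 2 := by
        simp only [Algebra.smul_def, Xp, Xv, Yv]
        ring
      rw [hid]
      exact I.sub_mem (I.sub_mem (I.sub_mem (I.mul_mem_right _ hq) (smul_mem_ideal _ h20))
        (smul_mem_ideal _ (hm3 (Xp_mem3 (by omega)))))
        (smul_mem_ideal _ (hm3 (Xp_mem3 (by omega))))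
    have hy2 : Xp 0 2 ∈ I := by
      have hid : Xp 0 2 = ((k10 / a) • Xp 1 0 + Xp 0 1 + (k11 / a) • Xp 1 1 +
          (k02 / a) • Xp 0 2) * Yv - (k10 / a) • Xp 1 1 - (k11 / a) • Xp 1 2 -
          (k02 / a) • Xp 0 3 := by
        simp only [Algebra.smul_def, Xp, Xv, Yv]
        ring
      rw [hid]
      exact I.sub_mem (I.sub_mem (I.sub_mem (I.mul_mem_right _ hq) (smul_mem_ideal _ hxy))
        (smul_mem_ideal _ (hm3 (Xp_mem3 (by omega)))))
        (smul_mem_ideal _ (hm3 (Xp_mem3 (by omega))))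
    have hl : Xp 0 1 + (k10 / a) • Xp 1 0 ∈ I := by
      have hid : Xp 0 1 + (k10 / a) • Xp 1 0 =
          ((k10 / a) • Xp 1 0 + Xp 0 1 + (k11 / a) • Xp 1 1 + (k02 / a) • Xp 0 2) -
          (k11 / a) • Xp 1 1 - (k02 / a) • Xp 0 2 := by
        module
      rw [hid]
      exact I.sub_mem (I.sub_mem hq (smul_mem_ideal _ hxy)) (smul_mem_ideal _ hy2)
    exact contra_1x I hdim hm3 _ hl h20 hxy hy2
  by_cases hx : ∃ w ∈ I, cc 1 0 w ≠ 0
  · obtain ⟨w, hw, hne⟩ := hx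
    obtain ⟨t, ht, hwj⟩ := jet3 w
    set a := cc 1 0 w with ha
    set k20 := cc 2 0 w with hk20
    set k11 := cc 1 1 w with hk11
    set k02 := cc 0 2 w with hk02
    have hz0 : cc 0 0 w = 0 := hc00 w hw
    have hz1 : cc 0 1 w = 0 := hc01 w hw
    rw [hz0, hz1, zero_smul, zero_smul, zero_add, add_zero] at hwj
    have hp : Xp 1 0 + (k11 / a) • Xp 1 1 + (k02 / a) • Xp 0 2 ∈ I := by
      have hid : Xp 1 0 + (k11 / a) • Xp 1 1 + (k02 / a) • Xp 0 2 =
          a⁻¹ • (w - (k20 • Xp 2 0 + t)) := by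
        rw [hwj]
        match_scalars <;> field_simp <;> ring
      rw [hid]
      exact smul_mem_ideal _ (I.sub_mem hw (add_mem (smul_mem_ideal _ h20) (hm3 ht)))
    have hxy : Xp 1 1 ∈ I := by
      have hid : Xp 1 1 = (Xp 1 0 + (k11 / a) • Xp 1 1 + (k02 / a) • Xp 0 2) * Yv -
          (k11 / a) • Xp 1 2 - (k02 / a) • Xp 0 3 := by
        simp only [Algebra.smul_def, Xp, Xv, Yv]
        ring
      rw [hid]
      exact I.sub_mem (I.sub_mem (I.mul_mem_right _ hp)
        (smul_mem_ideal _ (hm3 (Xp_mem3 (by omega)))))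
        (smul_mem_ideal _ (hm3 (Xp_mem3 (by omega))))
    have hu : Xp 1 0 + (k02 / a) • Xp 0 2 ∈ I := by
      have hid : Xp 1 0 + (k02 / a) • Xp 0 2 =
          (Xp 1 0 + (k11 / a) • Xp 1 1 + (k02 / a) • Xp 0 2) - (k11 / a) • Xp 1 1 := by
        module
      rw [hid]
      exact I.sub_mem hp (smul_mem_ideal _ hxy)
    exact Or.inr (branch_u I hdim hm3 _ hu h20 hxy hc00 hc01)
  · push_neg at hx
    by_cases hy2 : ∃ w ∈ I, cc 0 2 w ≠ 0
    · obtain ⟨w, hw, hne⟩ := hy2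
      obtain ⟨t, ht, hwj⟩ := jet3 w
      set a := cc 0 2 w with ha
      set k20 := cc 2 0 w with hk20
      set k11 := cc 1 1 w with hk11
      have hz0 : cc 0 0 w = 0 := hc00 w hw
      have hz1 : cc 1 0 w = 0 := hx w hw
      have hz2 : cc 0 1 w = 0 := hc01 w hw
      rw [hz0, hz1, hz2, zero_smul, zero_smul, zero_smul, zero_add, zero_add, zero_add] at hwj
      set c := k11 / a with hc
      have hQ : c • Xp 1 1 + Xp 0 2 ∈ I := by
        have hid : c • Xp 1 1 + Xp 0 2 = a⁻¹ • (w - (k20 • Xp 2 0 + t)) := by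
          rw [hwj, hc]
          match_scalars <;> field_simp <;> ring
        rw [hid]
        exact smul_mem_ideal _ (I.sub_mem hw (add_mem (smul_mem_ideal _ h20) (hm3 ht)))
      have hkey : ∀ w' ∈ I, cc 1 1 w' - c * cc 0 2 w' = 0 := by
        intro w' hw'
        by_contra hb
        obtain ⟨t', ht', hwj'⟩ := jet3 w'
        set k20' := cc 2 0 w' with hk20'
        set k11' := cc 1 1 w' with hk11'
        set k02' := cc 0 2 w' with hk02'
        have hz0' : cc 0 0 w' = 0 := hc00 w' hw'
        have hz1' : cc 1 0 w' = 0 := hx w' hw'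
        have hz2' : cc 0 1 w' = 0 := hc01 w' hw'
        rw [hz0', hz1', hz2', zero_smul, zero_smul, zero_smul, zero_add, zero_add,
          zero_add] at hwj'
        have hxy : Xp 1 1 ∈ I := by
          apply unsmul_mem hb
          have hid : (k11' - c * k02') • Xp 1 1 =
              w' - (k20' • Xp 2 0 + k02' • (c • Xp 1 1 + Xp 0 2) + t') := by
            rw [hwj']
            module
          rw [hid]
          exact I.sub_mem hw' (add_mem (add_mem (smul_mem_ideal _ h20) (smul_mem_ideal _ hQ))
            (hm3 ht'))
        have h02 : Xp 0 2 ∈ I := by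
          have hid : Xp 0 2 = (c • Xp 1 1 + Xp 0 2) - c • Xp 1 1 := by module
          rw [hid]
          exact I.sub_mem hQ (smul_mem_ideal _ hxy)
        exact I_eq_m2_contra I g h hI hm3 h20 hxy h02 hc00 hx hc01
      -- the ideal S = ⟨x², (y + (c/2) x)²⟩
      set c2 : ℂ := c / 2 with hc2def
      have hc2 : c = 2 * c2 := by rw [hc2def]; ring
      set v : R2 := Yv + c2 • Xv with hv
      set S : Ideal R2 := Ideal.span {Xv ^ 2, v ^ 2} with hS
      have hx2S : Xv ^ 2 ∈ S := Ideal.subset_span (by simp)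
      have hv2S : v ^ 2 ∈ S := Ideal.subset_span (by simp)
      have hQS : c • Xp 1 1 + Xp 0 2 ∈ S := by
        have hid : c • Xp 1 1 + Xp 0 2 = v ^ 2 - (c2 * c2) • Xv ^ 2 := by
          rw [hv, hc2]
          simp only [Algebra.smul_def, map_mul, map_ofNat, Xp, Xv, Yv]
          ring
        rw [hid]
        exact S.sub_mem hv2S (smul_mem_ideal _ hx2S)
      have h21S : Xp 2 1 ∈ S := by
        have e : Xp 2 1 = Yv * Xv ^ 2 := by simp only [Xp]; ring
        rw [e]
        exact S.mul_mem_left _ hx2S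
      have h12S : Xp 1 2 ∈ S := by
        have e : Xp 1 2 = Xv * (c • Xp 1 1 + Xp 0 2) - c • Xp 2 1 := by
          simp only [Algebra.smul_def, Xp, Xv, Yv]
          ring
        rw [e]
        exact S.sub_mem (S.mul_mem_left _ hQS) (smul_mem_ideal _ h21S)
      have h03S : Xp 0 3 ∈ S := by
        have e : Xp 0 3 = Yv * (c • Xp 1 1 + Xp 0 2) - c • Xp 1 2 := by
          simp only [Algebra.smul_def, Xp, Xv, Yv]
          ring
        rw [e]
        exact S.sub_mem (S.mul_mem_left _ hQS) (smul_mem_ideal _ h12S)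
      have hm3S : mIdeal ^ 3 ≤ S := by
        apply m3_le
        · have e : Xp 3 0 = Xv * Xv ^ 2 := by simp only [Xp]; ring
          rw [e]
          exact S.mul_mem_left _ hx2S
        · exact h21S
        · exact h12S
        · exact h03S
      left
      refine ⟨Xv, v, ?_, ?_⟩
      · apply le_antisymm
        · rw [Ideal.span_le]
          rintro z (rfl | rfl)
          · exact Ideal.subset_span (by simp)
          · rw [hv]
            apply Ideal.mem_span_pair.2
            exact ⟨algebraMap ℂ R2 c2, 1, by
              simp only [Algebra.smul_def]
              ring⟩
        · rw [mIdeal, Ideal.span_le]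
          rintro z (rfl | rfl)
          · exact Ideal.subset_span (by simp)
          · apply Ideal.mem_span_pair.2
            refine ⟨-(algebraMap ℂ R2 c2), 1, ?_⟩
            rw [hv]
            simp only [Algebra.smul_def]
            ring
      · apply le_antisymm
        · intro w' hw'
          obtain ⟨t', ht', hwj'⟩ := jet3 w'
          set k20' := cc 2 0 w' with hk20'
          set k11' := cc 1 1 w' with hk11'
          set k02' := cc 0 2 w' with hk02'
          have hz0' : cc 0 0 w' = 0 := hc00 w' hw'
          have hz1' : cc 1 0 w' = 0 := hx w' hw'
          have hz2' : cc 0 1 w' = 0 := hc01 w' hw'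
          rw [hz0', hz1', hz2', zero_smul, zero_smul, zero_smul, zero_add, zero_add,
            zero_add] at hwj'
          have hid : w' = k20' • Xp 2 0 + k02' • (c • Xp 1 1 + Xp 0 2) +
              (k11' - c * k02') • Xp 1 1 + t' := by
            rw [hwj']
            module
          have hkz : k11' - c * k02' = 0 := hkey w' hw'
          rw [hid, hkz, zero_smul, add_zero]
          have e20 : Xp 2 0 ∈ S := by
            have e : Xp 2 0 = Xv ^ 2 := Xp_i0 2
            rw [e]
            exact hx2S
          exact add_mem (add_mem (smul_mem_ideal _ e20) (smul_mem_ideal _ hQS)) (hm3S ht')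
        · rw [Ideal.span_le]
          rintro z (rfl | rfl)
          · exact Xp_i0 2 ▸ h20
          · have hid : v ^ 2 = (c • Xp 1 1 + Xp 0 2) + (c2 * c2) • Xp 2 0 := by
              rw [hv, hc2]
              simp only [Algebra.smul_def, map_mul, map_ofNat, Xp, Xv, Yv]
              ring
            rw [hid]
            exact I.add_mem hQ (smul_mem_ideal _ h20)
    · push_neg at hy2
      by_cases hxy : ∃ w ∈ I, cc 1 1 w ≠ 0
      · exfalso
        obtain ⟨w, hw, hne⟩ := hxy
        obtain ⟨t, ht, hwj⟩ := jet3 w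
        set k20 := cc 2 0 w with hk20
        set k11 := cc 1 1 w with hk11
        have hne' : k11 ≠ 0 := hne
        have hz0 : cc 0 0 w = 0 := hc00 w hw
        have hz1 : cc 1 0 w = 0 := hx w hw
        have hz2 : cc 0 1 w = 0 := hc01 w hw
        have hz3 : cc 0 2 w = 0 := hy2 w hw
        rw [hz0, hz1, hz2, hz3, zero_smul, zero_smul, zero_smul, zero_smul, zero_add,
          zero_add, zero_add, add_zero] at hwj
        have h11 : Xp 1 1 ∈ I := by
          apply unsmul_mem hne'
          have hid : k11 • Xp 1 1 = w - (k20 • Xp 2 0 + t) := by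
            rw [hwj]
            module
          rw [hid]
          exact I.sub_mem hw (add_mem (smul_mem_ideal _ h20) (hm3 ht))
        exact I_eq_K_contra I g h hI hm3 h20 h11 hc00 hx hc01 hy2
      · exfalso
        push_neg at hxy
        exact I_eq_KC_contra I g h hI hm3 h20 hc00 hx hc01 hxy hy2

end Lem42

/-- **Lemma (Lemma 4.2 / lem:ideals).** Let `f ∈ R = ℂ⟦x,y⟧` with
`jet₃(f) ∈ {x³ - y³, x²y, x³}`, and let `I = ⟨g, h⟩` be an ideal of `R`
generated by two elements such that `dim_ℂ(R/I) ≥ 3` and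
`⟨∂f/∂x, ∂f/∂y⟩ + m³ ⊆ I`. Then either there is a regular system of
parameters `u, v` with `I = ⟨u², v²⟩` and `jet₃(f) ∈ {x³ - y³, x³}`,
or a regular system of parameters `u, v` with `I = ⟨u, v³⟩` and
`jet₃(f) ∈ {x²y, x³}`. -/
theorem stmt0 (f g h : R2)
    (hjet : jet3Eq f (Xv ^ 3 - Yv ^ 3) ∨ jet3Eq f (Xv ^ 2 * Yv) ∨ jet3Eq f (Xv ^ 3))
    (I : Ideal R2) (hI : I = Ideal.span {g, h})
    (hdim : (3 : Cardinal) ≤ Module.rank ℂ (R2 ⧸ I))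
    (hsub : Ideal.span {pderiv2 0 f, pderiv2 1 f} + mIdeal ^ 3 ≤ I) :
    (∃ u v : R2, Ideal.span {u, v} = mIdeal ∧ I = Ideal.span {u ^ 2, v ^ 2} ∧
        (jet3Eq f (Xv ^ 3 - Yv ^ 3) ∨ jet3Eq f (Xv ^ 3))) ∨
    (∃ u v : R2, Ideal.span {u, v} = mIdeal ∧ I = Ideal.span {u, v ^ 3} ∧
        (jet3Eq f (Xv ^ 2 * Yv) ∨ jet3Eq f (Xv ^ 3))) := by
  classical
  rw [Ideal.add_eq_sup] at hsub
  have hm3 : mIdeal ^ 3 ≤ I := le_trans le_sup_right hsub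
  have hpd0 : pderiv2 0 f ∈ I := hsub (Submodule.mem_sup_left (Ideal.subset_span (by simp)))
  have hpd1 : pderiv2 1 f ∈ I := hsub (Submodule.mem_sup_left (Ideal.subset_span (by simp)))
  rcases hjet with hA | hB | hC
  · -- jet = x³ - y³
    have hA' : f - (Xv ^ 3 - Yv ^ 3) ∈ mIdeal ^ 4 := hA
    have e0 : pderiv2 0 (Xv ^ 3 - Yv ^ 3) = (3 : ℂ) • Lem42.Xp 2 0 := by
      rw [Lem42.pderiv2_sub, ← Lem42.Xp_i0 3, ← Lem42.Xp_0j 3,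
        show Lem42.Xp 3 0 = Lem42.Xp (2 + 1) 0 from rfl, Lem42.pd0_Xp, Lem42.pd0_Xp0, sub_zero]
      norm_num
    have e1 : pderiv2 1 (Xv ^ 3 - Yv ^ 3) = (-3 : ℂ) • Lem42.Xp 0 2 := by
      rw [Lem42.pderiv2_sub, ← Lem42.Xp_i0 3, ← Lem42.Xp_0j 3, Lem42.pd1_Xp0,
        show Lem42.Xp 0 3 = Lem42.Xp 0 (2 + 1) from rfl, Lem42.pd1_Xp, zero_sub, ← neg_smul]
      norm_num
    have h20 : Lem42.Xp 2 0 ∈ I := Lem42.unsmul_mem (by norm_num)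
      (e0 ▸ Lem42.deriv_jet_mem hm3 hA' 0 hpd0)
    have h02 : Lem42.Xp 0 2 ∈ I := Lem42.unsmul_mem (by norm_num)
      (e1 ▸ Lem42.deriv_jet_mem hm3 hA' 1 hpd1)
    exact Or.inl ⟨Xv, Yv, rfl, Lem42.caseA I g h hI hdim hm3 h20 h02, Or.inl hA⟩
  · -- jet = x²y
    have hB' : f - Xv ^ 2 * Yv ∈ mIdeal ^ 4 := hB
    have ej : (Xv : R2) ^ 2 * Yv = Lem42.Xp 2 1 := by simp [Lem42.Xp]
    have e0 : pderiv2 0 (Xv ^ 2 * Yv) = (2 : ℂ) • Lem42.Xp 1 1 := by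
      rw [ej, show Lem42.Xp 2 1 = Lem42.Xp (1 + 1) 1 from rfl, Lem42.pd0_Xp]
      norm_num
    have e1 : pderiv2 1 (Xv ^ 2 * Yv) = (1 : ℂ) • Lem42.Xp 2 0 := by
      rw [ej, show Lem42.Xp 2 1 = Lem42.Xp 2 (0 + 1) from rfl, Lem42.pd1_Xp]
      norm_num
    have h11 : Lem42.Xp 1 1 ∈ I := Lem42.unsmul_mem (by norm_num)
      (e0 ▸ Lem42.deriv_jet_mem hm3 hB' 0 hpd0)
    have h20 : Lem42.Xp 2 0 ∈ I := Lem42.unsmul_mem (one_ne_zero)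
      (e1 ▸ Lem42.deriv_jet_mem hm3 hB' 1 hpd1)
    obtain ⟨u, hspan, hIeq⟩ := Lem42.caseB I g h hI hdim hm3 h20 h11
    exact Or.inr ⟨u, Yv, hspan, hIeq, Or.inl hB⟩
  · -- jet = x³
    have hC' : f - Xv ^ 3 ∈ mIdeal ^ 4 := hC
    have e0 : pderiv2 0 (Xv ^ 3) = (3 : ℂ) • Lem42.Xp 2 0 := by
      rw [← Lem42.Xp_i0 3, show Lem42.Xp 3 0 = Lem42.Xp (2 + 1) 0 from rfl, Lem42.pd0_Xp]
      norm_num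
    have h20 : Lem42.Xp 2 0 ∈ I := Lem42.unsmul_mem (by norm_num)
      (e0 ▸ Lem42.deriv_jet_mem hm3 hC' 0 hpd0)
    rcases Lem42.caseC I g h hI hdim hm3 h20 with ⟨u, v, hs, hIeq⟩ | ⟨u, hs, hIeq⟩
    · exact Or.inl ⟨u, v, hs, hIeq, Or.inr hC⟩
    · exact Or.inr ⟨u, Yv, hs, hIeq, Or.inr hC⟩
end

section
/- Let R = ℂ⟦x,y⟧ and let J be an ideal of R generated by a set of monomials in x and y, such that x² ∈ J, xy² ∈ J, y³ ∈ J and dim_ℂ(R/J) ≥ 3. Then J is one of the five ideals ⟨x², xy², y³⟩, ⟨x², xy, y²⟩, ⟨x², xy, y³⟩, ⟨x², y²⟩, ⟨x, y³⟩. -/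
set_option maxHeartbeats 1600000

/-- `f` is a monomial `x^a y^b` in `ℂ⟦x,y⟧`. -/
def IsMonomial2 (f : R2) : Prop := ∃ a b : ℕ, f = Xv ^ a * Yv ^ b

open MvPowerSeries Cardinal in
lemma keylem (J : Ideal R2) (i j : Fin 2) (hij : j ≠ i)
    (h1 : MvPowerSeries.X i ^ 2 ∈ J) (h2 : MvPowerSeries.X j ∈ J) :
    Module.rank ℂ (R2 ⧸ J) ≤ 2 := by
  have hspan : ∀ f : R2, ∃ c₀ c₁ : ℂ,
      f - (MvPowerSeries.C (σ := Fin 2) (R := ℂ) c₀ + MvPowerSeries.C (σ := Fin 2) (R := ℂ) c₁ * MvPowerSeries.X i) ∈ J := by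
    intro f
    refine ⟨coeff (R := ℂ) 0 f, coeff (R := ℂ) (Finsupp.single i 1) f, ?_⟩
    set f' : R2 := f - (MvPowerSeries.C (σ := Fin 2) (R := ℂ) (coeff (R := ℂ) 0 f) + MvPowerSeries.C (σ := Fin 2) (R := ℂ) (coeff (R := ℂ) (Finsupp.single i 1) f) * MvPowerSeries.X i) with hf'
    have hc0 : coeff (R := ℂ) 0 f' = 0 := by
      simp [hf', coeff_C, coeff_X, Finsupp.single_eq_zero, MvPowerSeries.coeff_C_mul]
    have hc1 : coeff (R := ℂ) (Finsupp.single i 1) f' = 0 := by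
      simp [hf', coeff_C, coeff_X, Finsupp.single_eq_zero, MvPowerSeries.coeff_C_mul]
    set p : R2 := (fun d => if d j = 0 then coeff (R := ℂ) d f' else 0 : (Fin 2 →₀ ℕ) → ℂ) with hp
    have hpc : ∀ d, coeff (R := ℂ) d p = if d j = 0 then coeff (R := ℂ) d f' else 0 := fun d => rfl
    have hdvd1 : MvPowerSeries.X i ^ 2 ∣ p := by
      rw [X_pow_dvd_iff]
      intro m hm
      rw [hpc]
      split_ifs with h
      · have hm' : m = 0 ∨ m = Finsupp.single i 1 := by
          have hk : ∀ k : Fin 2, k = i ∨ k = j := by omega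
          have hmi : m i = 0 ∨ m i = 1 := by omega
          rcases hmi with h0 | h0
          · left; ext k; rcases hk k with rfl | rfl <;> simp [h, h0]
          · right; ext k; rcases hk k with rfl | rfl <;>
              simp [Finsupp.single_apply, h, h0, hij, Ne.symm hij]
        rcases hm' with rfl | rfl
        · exact hc0
        · exact hc1
      · rfl
    have hdvd2 : MvPowerSeries.X j ∣ (f' - p) := by
      rw [X_dvd_iff]
      intro m hm
      rw [map_sub, hpc, if_pos hm, sub_self]
    have hp_mem : p ∈ J := by
      obtain ⟨c, hc⟩ := hdvd1; rw [hc]; exact Ideal.mul_mem_right _ _ h1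
    have : f' - p ∈ J := by
      obtain ⟨c, hc⟩ := hdvd2; rw [hc]; exact Ideal.mul_mem_right _ _ h2
    have := J.add_mem hp_mem this
    simpa using this
  have htop : (⊤ : Submodule ℂ (R2 ⧸ J)) =
      Submodule.span ℂ {Ideal.Quotient.mk J 1, Ideal.Quotient.mk J (MvPowerSeries.X i)} := by
    refine le_antisymm ?_ le_top
    intro z _
    obtain ⟨f, rfl⟩ := Ideal.Quotient.mk_surjective z
    obtain ⟨c₀, c₁, hf⟩ := hspan f
    rw [Submodule.mem_span_pair]
    refine ⟨c₀, c₁, ?_⟩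
    have heq : Ideal.Quotient.mk J f =
        Ideal.Quotient.mk J (MvPowerSeries.C (σ := Fin 2) (R := ℂ) c₀ + MvPowerSeries.C (σ := Fin 2) (R := ℂ) c₁ * MvPowerSeries.X i) :=
      (Ideal.Quotient.eq).mpr hf
    rw [heq, map_add, map_mul]
    have hC : ∀ c : ℂ, Ideal.Quotient.mk J (MvPowerSeries.C (σ := Fin 2) (R := ℂ) c) = c • (1 : R2 ⧸ J) := by
      intro c
      have hcs : (MvPowerSeries.C (σ := Fin 2) (R := ℂ) c : R2) = c • (1 : R2) := by
        rw [Algebra.smul_def, mul_one]; rfl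
      calc Ideal.Quotient.mk J (MvPowerSeries.C (σ := Fin 2) (R := ℂ) c)
          = Ideal.Quotient.mkₐ ℂ J (c • (1 : R2)) := by rw [Ideal.Quotient.mkₐ_eq_mk, hcs]
        _ = c • Ideal.Quotient.mkₐ ℂ J (1 : R2) := map_smul _ _ _
        _ = c • (1 : R2 ⧸ J) := by rw [map_one]
    rw [hC, hC, smul_mul_assoc, one_mul, map_one]
  calc Module.rank ℂ (R2 ⧸ J) = Module.rank ℂ (⊤ : Submodule ℂ (R2 ⧸ J)) := (rank_top ℂ _).symm
    _ = Module.rank ℂ (Submodule.span ℂ {Ideal.Quotient.mk J 1, Ideal.Quotient.mk J (MvPowerSeries.X i)}) := by rw [htop]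
    _ ≤ #({Ideal.Quotient.mk J 1, Ideal.Quotient.mk J (MvPowerSeries.X i)} : Set (R2 ⧸ J)) := rank_span_le _
    _ ≤ #({Ideal.Quotient.mk J (MvPowerSeries.X i)} : Set (R2 ⧸ J)) + 1 := Cardinal.mk_insert_le
    _ ≤ 2 := by rw [Cardinal.mk_singleton]; norm_num

lemma mem_span_mul (T : Set R2) (g : R2) (hg : g ∈ T) (c f : R2) (h : f = c * g) :
    f ∈ Ideal.span T := h ▸ Ideal.mul_mem_left _ _ (Ideal.subset_span hg)

lemma span_pair_le {J : Ideal R2} {a b : R2} (ha : a ∈ J) (hb : b ∈ J) :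
    Ideal.span {a, b} ≤ J := by
  rw [Ideal.span_le]
  intro t ht
  simp only [Set.mem_insert_iff, Set.mem_singleton_iff] at ht
  rcases ht with rfl | rfl <;> assumption

lemma span_triple_le {J : Ideal R2} {a b c : R2} (ha : a ∈ J) (hb : b ∈ J) (hc : c ∈ J) :
    Ideal.span {a, b, c} ≤ J := by
  rw [Ideal.span_le]
  intro t ht
  simp only [Set.mem_insert_iff, Set.mem_singleton_iff] at ht
  rcases ht with rfl | rfl | rfl <;> assumption

/-- Let `J` be an ideal of `R = ℂ⟦x,y⟧` generated by a set of monomials, with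
`x² ∈ J`, `xy² ∈ J`, `y³ ∈ J` and `dim_ℂ(R/J) ≥ 3`. Then `J` is one of the
five ideals `⟨x², xy², y³⟩`, `⟨x², xy, y²⟩`, `⟨x², xy, y³⟩`, `⟨x², y²⟩`,
`⟨x, y³⟩`. -/
theorem stmt2 (J : Ideal R2)
    (hmono : ∃ S : Set R2, (∀ s ∈ S, IsMonomial2 s) ∧ J = Ideal.span S)
    (hx2 : Xv ^ 2 ∈ J) (hxy2 : Xv * Yv ^ 2 ∈ J) (hy3 : Yv ^ 3 ∈ J)
    (hdim : (3 : Cardinal) ≤ Module.rank ℂ (R2 ⧸ J)) :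
    J = Ideal.span {Xv ^ 2, Xv * Yv ^ 2, Yv ^ 3} ∨
    J = Ideal.span {Xv ^ 2, Xv * Yv, Yv ^ 2} ∨
    J = Ideal.span {Xv ^ 2, Xv * Yv, Yv ^ 3} ∨
    J = Ideal.span {Xv ^ 2, Yv ^ 2} ∨
    J = Ideal.span {Xv, Yv ^ 3} := by
  obtain ⟨S, hS, hJ⟩ := hmono
  have hnotle : ¬ Module.rank ℂ (R2 ⧸ J) ≤ 2 := fun h => absurd (hdim.trans h) (by norm_num)
  have h1n : (1 : R2) ∉ J := by
    intro h
    exact hnotle (keylem J 0 1 (by decide) (by simpa [Xv] using J.mul_mem_left (Xv ^ 2) h)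
      (by simpa [Yv] using J.mul_mem_left Yv h))
  have hyn : Yv ∉ J := fun h => hnotle (keylem J 0 1 (by decide) hx2 h)
  by_cases hx : Xv ∈ J
  · -- J = ⟨x, y³⟩
    have hy2n : Yv ^ 2 ∉ J := fun h => hnotle (keylem J 1 0 (by decide) h hx)
    refine Or.inr (Or.inr (Or.inr (Or.inr ?_)))
    refine le_antisymm ?_ (hJ ▸ span_pair_le (hJ ▸ hx) (hJ ▸ hy3))
    rw [hJ, Ideal.span_le]
    intro s hs
    have hsJ : s ∈ J := hJ ▸ Ideal.subset_span hs
    obtain ⟨a, b, rfl⟩ := hS s hs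
    rcases a with _ | a
    · rcases b with _ | _ | _ | b
      · exact absurd (by simpa using hsJ) h1n
      · exact absurd (by simpa using hsJ) hyn
      · exact absurd (by simpa using hsJ) hy2n
      · refine mem_span_mul _ (Yv ^ 3) ?_ (Yv ^ b) _ (by ring)
        simp
    · refine mem_span_mul _ Xv ?_ (Xv ^ a * Yv ^ b) _ (by ring)
      simp
  · by_cases hxy : Xv * Yv ∈ J <;> by_cases hy2 : Yv ^ 2 ∈ J
    · -- J = ⟨x², xy, y²⟩
      refine Or.inr (Or.inl ?_)
      refine le_antisymm ?_ (hJ ▸ span_triple_le (hJ ▸ hx2) (hJ ▸ hxy) (hJ ▸ hy2))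
      rw [hJ, Ideal.span_le]
      intro s hs
      have hsJ : s ∈ J := hJ ▸ Ideal.subset_span hs
      obtain ⟨a, b, rfl⟩ := hS s hs
      rcases a with _ | _ | a
      · rcases b with _ | _ | b
        · exact absurd (by simpa using hsJ) h1n
        · exact absurd (by simpa using hsJ) hyn
        · refine mem_span_mul _ (Yv ^ 2) ?_ (Yv ^ b) _ (by ring)
          simp
      · rcases b with _ | b
        · exact absurd (by simpa using hsJ) hx
        · refine mem_span_mul _ (Xv * Yv) ?_ (Yv ^ b) _ (by ring)
          simp
      · refine mem_span_mul _ (Xv ^ 2) ?_ (Xv ^ a * Yv ^ b) _ (by ring)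
        simp
    · -- J = ⟨x², xy, y³⟩
      refine Or.inr (Or.inr (Or.inl ?_))
      refine le_antisymm ?_ (hJ ▸ span_triple_le (hJ ▸ hx2) (hJ ▸ hxy) (hJ ▸ hy3))
      rw [hJ, Ideal.span_le]
      intro s hs
      have hsJ : s ∈ J := hJ ▸ Ideal.subset_span hs
      obtain ⟨a, b, rfl⟩ := hS s hs
      rcases a with _ | _ | a
      · rcases b with _ | _ | _ | b
        · exact absurd (by simpa using hsJ) h1n
        · exact absurd (by simpa using hsJ) hyn
        · exact absurd (by simpa using hsJ) hy2
        · refine mem_span_mul _ (Yv ^ 3) ?_ (Yv ^ b) _ (by ring)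
          simp
      · rcases b with _ | b
        · exact absurd (by simpa using hsJ) hx
        · refine mem_span_mul _ (Xv * Yv) ?_ (Yv ^ b) _ (by ring)
          simp
      · refine mem_span_mul _ (Xv ^ 2) ?_ (Xv ^ a * Yv ^ b) _ (by ring)
        simp
    · -- J = ⟨x², y²⟩
      refine Or.inr (Or.inr (Or.inr (Or.inl ?_)))
      refine le_antisymm ?_ (hJ ▸ span_pair_le (hJ ▸ hx2) (hJ ▸ hy2))
      rw [hJ, Ideal.span_le]
      intro s hs
      have hsJ : s ∈ J := hJ ▸ Ideal.subset_span hs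
      obtain ⟨a, b, rfl⟩ := hS s hs
      rcases a with _ | _ | a
      · rcases b with _ | _ | b
        · exact absurd (by simpa using hsJ) h1n
        · exact absurd (by simpa using hsJ) hyn
        · refine mem_span_mul _ (Yv ^ 2) ?_ (Yv ^ b) _ (by ring)
          simp
      · rcases b with _ | _ | b
        · exact absurd (by simpa using hsJ) hx
        · exact absurd (by simpa using hsJ) hxy
        · refine mem_span_mul _ (Yv ^ 2) ?_ (Xv * Yv ^ b) _ (by ring)
          simp
      · refine mem_span_mul _ (Xv ^ 2) ?_ (Xv ^ a * Yv ^ b) _ (by ring)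
        simp
    · -- J = ⟨x², xy², y³⟩
      refine Or.inl ?_
      refine le_antisymm ?_ (hJ ▸ span_triple_le (hJ ▸ hx2) (hJ ▸ hxy2) (hJ ▸ hy3))
      rw [hJ, Ideal.span_le]
      intro s hs
      have hsJ : s ∈ J := hJ ▸ Ideal.subset_span hs
      obtain ⟨a, b, rfl⟩ := hS s hs
      rcases a with _ | _ | a
      · rcases b with _ | _ | _ | b
        · exact absurd (by simpa using hsJ) h1n
        · exact absurd (by simpa using hsJ) hyn
        · exact absurd (by simpa using hsJ) hy2
        · refine mem_span_mul _ (Yv ^ 3) ?_ (Yv ^ b) _ (by ring)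
          simp
      · rcases b with _ | _ | b
        · exact absurd (by simpa using hsJ) hx
        · exact absurd (by simpa using hsJ) hxy
        · refine mem_span_mul _ (Xv * Yv ^ 2) ?_ (Yv ^ b) _ (by ring)
          simp
      · refine mem_span_mul _ (Xv ^ 2) ?_ (Xv ^ a * Yv ^ b) _ (by ring)
        simp
end

section
/- Let R = ℂ⟦x,y⟧ with maximal ideal m = ⟨x,y⟩. There is no ideal I of R generated by two elements with m³ ⊆ I ⊆ m² and dim_ℂ(R/I) = 5. -/
open MvPowerSeries Finsupp

lemma constCoeff_of_mem_m {s : R2} (hs : s ∈ mIdeal) : coeff (R := ℂ) 0 s = 0 := by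
  have : mIdeal ≤ RingHom.ker (constantCoeff (σ := Fin 2) (R := ℂ)) := by
    rw [mIdeal, Ideal.span_le]
    rintro f (rfl | rfl) <;>
      simp [Xv, Yv, RingHom.mem_ker, constantCoeff_X]
  simpa [coeff_zero_eq_constantCoeff, RingHom.mem_ker] using this hs

lemma coeff_eq_zero_of_mem (k : ℕ) {f : R2} (hf : f ∈ mIdeal ^ k) :
    ∀ d : Fin 2 →₀ ℕ, d 0 + d 1 < k → MvPowerSeries.coeff (R := ℂ) d f = 0 := by
  induction k generalizing f with
  | zero => intro d hd; omega
  | succ k ih =>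
    rw [pow_succ] at hf
    refine Submodule.mul_induction_on hf (fun r hr s hs => ?_) (fun x y hx hy d hd => ?_)
    · intro d hd
      rw [coeff_mul]
      refine Finset.sum_eq_zero fun p hp => ?_
      rw [Finset.HasAntidiagonal.mem_antidiagonal] at hp
      by_cases h1 : p.1 0 + p.1 1 < k
      · rw [ih hr p.1 h1, zero_mul]
      · have hsum : p.1 0 + p.1 1 + (p.2 0 + p.2 1) = d 0 + d 1 := by
          have h0 : p.1 0 + p.2 0 = d 0 := by rw [← hp]; simp
          have h1' : p.1 1 + p.2 1 = d 1 := by rw [← hp]; simp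
          omega
        have : p.2 = 0 := by
          ext i
          fin_cases i <;> simp <;> omega
        rw [this, constCoeff_of_mem_m hs, mul_zero]
    · rw [map_add, hx d hd, hy d hd, add_zero]

lemma mem_of_coeff_eq_zero (k : ℕ) {f : R2}
    (h : ∀ d : Fin 2 →₀ ℕ, d 0 + d 1 < k → MvPowerSeries.coeff (R := ℂ) d f = 0) :
    f ∈ mIdeal ^ k := by
  induction k generalizing f with
  | zero => simp
  | succ k ih =>
    have hXv : Xv ∈ mIdeal := Ideal.subset_span (by simp)
    have hYv : Yv ∈ mIdeal := Ideal.subset_span (by simp)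
    let a : R2 := fun d => MvPowerSeries.coeff (R := ℂ) (d + single 0 1) f
    let c : R2 := fun d => if d 0 = 0 then MvPowerSeries.coeff (R := ℂ) (d + single 1 1) f else 0
    have ca : ∀ e, MvPowerSeries.coeff (R := ℂ) e a = MvPowerSeries.coeff (R := ℂ) (e + single 0 1) f :=
      fun e => rfl
    have cc : ∀ e, MvPowerSeries.coeff (R := ℂ) e c =
        if e 0 = 0 then MvPowerSeries.coeff (R := ℂ) (e + single 1 1) f else 0 := fun e => rfl
    have hsplit : f = Xv * a + Yv * c := by
      ext d
      rw [map_add, Xv, Yv, MvPowerSeries.X, MvPowerSeries.X, coeff_monomial_mul,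
        coeff_monomial_mul, one_mul, one_mul, ca, cc]
      by_cases h0 : d 0 = 0
      · have hle : ¬ (single (0 : Fin 2) 1 ≤ d) := by simp [Finsupp.single_le_iff, h0]
        rw [if_neg hle, zero_add]
        by_cases h1 : d 1 = 0
        · have hd0 : d = 0 := by ext i; fin_cases i <;> assumption
          have hne : ¬ (single (1 : Fin 2) 1 ≤ (0 : Fin 2 →₀ ℕ)) := by
            simp [Finsupp.single_le_iff]
          rw [hd0, if_neg hne]
          exact h 0 (by simp)
        · have hle1 : single (1 : Fin 2) 1 ≤ d := by rw [Finsupp.single_le_iff]; omega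
          have hsub : ((d - single (1 : Fin 2) 1 : Fin 2 →₀ ℕ)) 0 = 0 := by
            rw [Finsupp.tsub_apply]; simp [h0]
          rw [if_pos hle1, if_pos hsub, tsub_add_cancel_of_le hle1]
      · have hle0 : single (0 : Fin 2) 1 ≤ d := by rw [Finsupp.single_le_iff]; omega
        rw [if_pos hle0, tsub_add_cancel_of_le hle0]
        by_cases h1 : single (1 : Fin 2) 1 ≤ d
        · have hsub : ¬ (((d - single (1 : Fin 2) 1 : Fin 2 →₀ ℕ)) 0 = 0) := by
            rw [Finsupp.tsub_apply]; simpa using h0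
          rw [if_pos h1, if_neg hsub, add_zero]
        · rw [if_neg h1, add_zero]
    have hamem : a ∈ mIdeal ^ k := by
      refine ih fun d hd => ?_
      rw [ca]
      exact h _ (by simp; omega)
    have hcmem : c ∈ mIdeal ^ k := by
      refine ih fun d hd => ?_
      rw [cc]
      by_cases h0 : d 0 = 0
      · rw [if_pos h0]; exact h _ (by simp; omega)
      · rw [if_neg h0]
    rw [hsplit, pow_succ']
    exact Ideal.add_mem _ (Ideal.mul_mem_mul hXv hamem) (Ideal.mul_mem_mul hYv hcmem)

/-- exponent `x^p y^q` -/
noncomputable def dE (p q : ℕ) : Fin 2 →₀ ℕ := single 0 p + single 1 q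

lemma dE_apply0 (p q : ℕ) : dE p q 0 = p := by simp [dE]
lemma dE_apply1 (p q : ℕ) : dE p q 1 = q := by simp [dE]

lemma dE_eq_iff {p q r s : ℕ} : dE p q = dE r s ↔ p = r ∧ q = s := by
  constructor
  · intro h
    constructor
    · have := congrFun (congrArg (fun t : Fin 2 →₀ ℕ => (t : Fin 2 → ℕ)) h) 0
      simpa [dE_apply0] using this
    · have := congrFun (congrArg (fun t : Fin 2 →₀ ℕ => (t : Fin 2 → ℕ)) h) 1
      simpa [dE_apply1] using this
  · rintro ⟨rfl, rfl⟩; rfl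

lemma dE_self (d : Fin 2 →₀ ℕ) : dE (d 0) (d 1) = d := by
  ext i
  fin_cases i
  · exact dE_apply0 _ _
  · exact dE_apply1 _ _

noncomputable def E6 : Fin 6 → (Fin 2 →₀ ℕ)
  | 0 => dE 0 0
  | 1 => dE 1 0
  | 2 => dE 0 1
  | 3 => dE 2 0
  | 4 => dE 1 1
  | 5 => dE 0 2
noncomputable def E4 : Fin 4 → (Fin 2 →₀ ℕ)
  | 0 => dE 3 0
  | 1 => dE 2 1
  | 2 => dE 1 2
  | 3 => dE 0 3

noncomputable def φ6 : R2 →ₗ[ℂ] (Fin 6 → ℂ) := LinearMap.pi fun i => MvPowerSeries.coeff (R := ℂ) (E6 i)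
noncomputable def ψ4 : R2 →ₗ[ℂ] (Fin 4 → ℂ) := LinearMap.pi fun i => MvPowerSeries.coeff (R := ℂ) (E4 i)

lemma φ6_apply (f : R2) (i : Fin 6) : φ6 f i = MvPowerSeries.coeff (R := ℂ) (E6 i) f := rfl
lemma ψ4_apply (f : R2) (i : Fin 4) : ψ4 f i = MvPowerSeries.coeff (R := ℂ) (E4 i) f := rfl

lemma φ6_eq_zero_iff (f : R2) : φ6 f = 0 ↔ f ∈ mIdeal ^ 3 := by
  constructor
  · intro hφ
    apply mem_of_coeff_eq_zero 3
    intro d hd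
    rw [← dE_self d]
    have h0 : ∀ i : Fin 6, MvPowerSeries.coeff (R := ℂ) (E6 i) f = 0 := fun i => congrFun hφ i
    have key : ∀ p q : ℕ, p + q < 3 → MvPowerSeries.coeff (R := ℂ) (dE p q) f = 0 := by
      intro p q hpq
      have hp : p < 3 := by omega
      have hq : q < 3 := by omega
      interval_cases p <;> interval_cases q <;>
        first
          | omega
          | simpa [E6, φ6_apply] using h0 0
          | simpa [E6, φ6_apply] using h0 1
          | simpa [E6, φ6_apply] using h0 2
          | simpa [E6, φ6_apply] using h0 3
          | simpa [E6, φ6_apply] using h0 4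
          | simpa [E6, φ6_apply] using h0 5
    exact key _ _ hd
  · intro hf
    funext i
    rw [φ6_apply]
    apply coeff_eq_zero_of_mem 3 hf
    fin_cases i <;> simp [E6, dE_apply0, dE_apply1]

lemma ψ4_eq_zero_of_mem {f : R2} (hf : f ∈ mIdeal ^ 4) : ψ4 f = 0 := by
  funext i
  rw [ψ4_apply]
  apply coeff_eq_zero_of_mem 4 hf
  fin_cases i <;> simp [E4, dE_apply0, dE_apply1]

lemma E6_inj : Function.Injective E6 := by
  intro i j h
  fin_cases i <;> fin_cases j <;> simp_all [E6, dE_eq_iff]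

lemma φ6_surj : Function.Surjective φ6 := by
  intro w
  classical
  refine ⟨∑ i, MvPowerSeries.monomial (R := ℂ) (E6 i) (w i), ?_⟩
  funext j
  rw [φ6_apply, map_sum, Finset.sum_eq_single j]
  · simp
  · intro i _ hij
    rw [MvPowerSeries.coeff_monomial, if_neg fun hE => hij (E6_inj hE.symm)]
  · intro hj
    exact absurd (Finset.mem_univ j) hj

lemma coeff_Xv (e : Fin 2 →₀ ℕ) : MvPowerSeries.coeff (R := ℂ) e Xv = if e = dE 1 0 then 1 else 0 := by
  rw [Xv, MvPowerSeries.coeff_X]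
  congr 1
  simp [dE]

lemma coeff_Yv (e : Fin 2 →₀ ℕ) : MvPowerSeries.coeff (R := ℂ) e Yv = if e = dE 0 1 then 1 else 0 := by
  rw [Yv, MvPowerSeries.coeff_X]
  congr 1
  simp [dE]

lemma monomE4_mem (i : Fin 4) : MvPowerSeries.monomial (R := ℂ) (E4 i) 1 ∈ mIdeal ^ 3 := by
  have hX : Xv ∈ mIdeal := Ideal.subset_span (by simp)
  have hY : Yv ∈ mIdeal := Ideal.subset_span (by simp)
  have key : ∀ p q : ℕ, p + q = 3 → MvPowerSeries.monomial (R := ℂ) (dE p q) (1 : ℂ) ∈ mIdeal ^ 3 := by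
    intro p q hpq
    have hmono : Xv ^ p * Yv ^ q = MvPowerSeries.monomial (R := ℂ) (dE p q) 1 := by
      rw [Xv, Yv, MvPowerSeries.X_pow_eq, MvPowerSeries.X_pow_eq,
        MvPowerSeries.monomial_mul_monomial, one_mul]
      rfl
    rw [← hmono, ← hpq, pow_add]
    exact Ideal.mul_mem_mul (Ideal.pow_mem_pow hX p) (Ideal.pow_mem_pow hY q)
  fin_cases i <;> [exact key 3 0 rfl; exact key 2 1 rfl; exact key 1 2 rfl; exact key 0 3 rfl]

lemma ψ4_monomE4 (i : Fin 4) :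
    ψ4 (MvPowerSeries.monomial (R := ℂ) (E4 i) 1) = fun j => if i = j then (1 : ℂ) else 0 := by
  funext j
  rw [ψ4_apply, MvPowerSeries.coeff_monomial]
  fin_cases i <;> fin_cases j <;> simp [E4, dE_eq_iff]

lemma core (g h' : R2) (hg2 : g ∈ mIdeal ^ 2) (hgφ : φ6 g ≠ 0) (hh3 : h' ∈ mIdeal ^ 3)
    (hspan : mIdeal ^ 3 ≤ Ideal.span {g, h'}) : False := by
  classical
  set W : Submodule ℂ (Fin 4 → ℂ) :=
    Submodule.span ℂ {ψ4 (Xv * g), ψ4 (Yv * g), ψ4 h'} with hW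
  have hm3 : mIdeal * mIdeal ^ 2 = mIdeal ^ 3 := (pow_succ' mIdeal 2).symm
  have hm4 : mIdeal ^ 2 * mIdeal ^ 2 = mIdeal ^ 4 := by rw [← pow_add]
  have hm4' : mIdeal * mIdeal ^ 3 = mIdeal ^ 4 := (pow_succ' mIdeal 3).symm
  have claim : ∀ v ∈ mIdeal ^ 3, ψ4 v ∈ W := by
    intro v hv
    obtain ⟨a, b, hab⟩ := Ideal.mem_span_pair.mp (hspan hv)
    have hφv : φ6 v = 0 := (φ6_eq_zero_iff v).mpr hv
    set α := MvPowerSeries.coeff (R := ℂ) 0 a with hα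
    have hd0 : ∀ d : Fin 2 →₀ ℕ, d 0 + d 1 < 1 → d = 0 := by
      intro d hd; ext i; fin_cases i <;> simp <;> omega
    have ha1 : a - MvPowerSeries.C (σ := Fin 2) (R := ℂ) α ∈ mIdeal := by
      have h1 : mIdeal ^ 1 = mIdeal := pow_one _
      rw [← h1]
      apply mem_of_coeff_eq_zero 1
      intro d hd
      rw [hd0 d hd]
      simp [hα]
    have hCsmul : ∀ (t : ℂ) (u : R2), MvPowerSeries.C (σ := Fin 2) (R := ℂ) t * u = t • u := by
      intro t u; rw [MvPowerSeries.smul_eq_C_mul]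
    have hsplit : v = α • g + ((a - MvPowerSeries.C (σ := Fin 2) (R := ℂ) α) * g + b * h') := by
      rw [← hab]
      simp only [← hCsmul]
      ring
    have hφ0 : φ6 ((a - MvPowerSeries.C (σ := Fin 2) (R := ℂ) α) * g + b * h') = 0 := by
      rw [φ6_eq_zero_iff]
      exact Ideal.add_mem _ (hm3 ▸ Ideal.mul_mem_mul ha1 hg2) (Ideal.mul_mem_left _ b hh3)
    have hα0 : α = 0 := by
      have hc := congrArg φ6 hsplit
      rw [map_add, map_smul, hφ0, add_zero, hφv] at hc
      rcases smul_eq_zero.mp hc.symm with h | h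
      · exact h
      · exact absurd h hgφ
    have ham : a ∈ mIdeal := by
      have := ha1
      rwa [hα0, map_zero, sub_zero] at this
    set c₁ := MvPowerSeries.coeff (R := ℂ) (dE 1 0) a with hc₁
    set c₂ := MvPowerSeries.coeff (R := ℂ) (dE 0 1) a with hc₂
    set β := MvPowerSeries.coeff (R := ℂ) 0 b with hβ
    have ha₂ : a - c₁ • Xv - c₂ • Yv ∈ mIdeal ^ 2 := by
      apply mem_of_coeff_eq_zero 2
      intro d hd
      rw [map_sub, map_sub, map_smul, map_smul, coeff_Xv, coeff_Yv]
      have key : ∀ p q : ℕ, p + q < 2 → MvPowerSeries.coeff (R := ℂ) (dE p q) a -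
          c₁ • (if dE p q = dE 1 0 then (1:ℂ) else 0) -
          c₂ • (if dE p q = dE 0 1 then (1:ℂ) else 0) = 0 := by
        intro p q hpq
        have hp : p < 2 := by omega
        have hq : q < 2 := by omega
        interval_cases p <;> interval_cases q
        · have h00 : dE 0 0 = 0 := by ext i; fin_cases i <;> simp [dE_apply0, dE_apply1]
          have hne1 : (0 : Fin 2 →₀ ℕ) ≠ dE 1 0 := by
            intro hcon
            have := congrFun (congrArg (fun t : Fin 2 →₀ ℕ => (t : Fin 2 → ℕ)) hcon) 0
            simp [dE_apply0] at this
          have hne2 : (0 : Fin 2 →₀ ℕ) ≠ dE 0 1 := by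
            intro hcon
            have := congrFun (congrArg (fun t : Fin 2 →₀ ℕ => (t : Fin 2 → ℕ)) hcon) 1
            simp [dE_apply1] at this
          simp [h00, hne1, hne2, constCoeff_of_mem_m ham]
        · simp [dE_eq_iff, hc₂]
        · simp [dE_eq_iff, hc₁]
        · omega
      have := key (d 0) (d 1) hd
      rwa [dE_self d] at this
    have hb1 : b - MvPowerSeries.C (σ := Fin 2) (R := ℂ) β ∈ mIdeal := by
      have h1 : mIdeal ^ 1 = mIdeal := pow_one _
      rw [← h1]
      apply mem_of_coeff_eq_zero 1
      intro d hd
      rw [hd0 d hd]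
      simp [hβ]
    have hjunk : (a - c₁ • Xv - c₂ • Yv) * g + (b - MvPowerSeries.C (σ := Fin 2) (R := ℂ) β) * h'
        ∈ mIdeal ^ 4 := by
      refine Ideal.add_mem _ (hm4 ▸ Ideal.mul_mem_mul ha₂ hg2) (hm4' ▸ Ideal.mul_mem_mul hb1 hh3)
    have hvdec : v = c₁ • (Xv * g) + c₂ • (Yv * g) + β • h' +
        ((a - c₁ • Xv - c₂ • Yv) * g + (b - MvPowerSeries.C (σ := Fin 2) (R := ℂ) β) * h') := by
      rw [← hab]
      simp only [← hCsmul]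
      ring
    have : ψ4 v = c₁ • ψ4 (Xv * g) + c₂ • ψ4 (Yv * g) + β • ψ4 h' := by
      rw [hvdec, map_add, map_add, map_add, map_smul, map_smul, map_smul,
        ψ4_eq_zero_of_mem hjunk, add_zero]
    rw [this]
    refine add_mem (add_mem ?_ ?_) ?_ <;>
      exact Submodule.smul_mem _ _ (Submodule.subset_span (by simp))
  have hWtop : ∀ w : Fin 4 → ℂ, w ∈ W := by
    intro w
    have hstd : ∀ i : Fin 4, (fun j => if i = j then (1:ℂ) else 0) ∈ W := by
      intro i
      have := claim _ (monomE4_mem i)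
      rwa [ψ4_monomE4 i] at this
    rw [pi_eq_sum_univ w]
    exact Submodule.sum_mem _ fun i _ => Submodule.smul_mem _ _ (hstd i)
  have h1 : Module.rank ℂ W = 4 := by
    have htop : W = ⊤ := Submodule.eq_top_iff'.mpr hWtop
    rw [htop, rank_top, rank_fun']
    simp
  have h2 : Module.rank ℂ W ≤ 3 := by
    rw [hW]
    have hrange : ({ψ4 (Xv * g), ψ4 (Yv * g), ψ4 h'} : Set (Fin 4 → ℂ)) =
        Set.range ![ψ4 (Xv * g), ψ4 (Yv * g), ψ4 h'] := by
      rw [Matrix.range_cons, Matrix.range_cons, Matrix.range_cons_empty,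
        Set.singleton_union, Set.singleton_union]
    rw [hrange]
    refine (rank_span_le _).trans ((Cardinal.mk_range_le).trans ?_)
    simp
  rw [h1] at h2
  norm_num at h2

lemma sub_C_mem (a : R2) :
    a - MvPowerSeries.C (σ := Fin 2) (R := ℂ) (MvPowerSeries.coeff (R := ℂ) 0 a) ∈ mIdeal := by
  have h1 : mIdeal ^ 1 = mIdeal := pow_one _
  rw [← h1]
  apply mem_of_coeff_eq_zero 1
  intro d hd
  have : d = 0 := by ext i; fin_cases i <;> simp <;> omega
  rw [this]
  simp

set_option maxHeartbeats 1000000 in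
set_option synthInstance.maxHeartbeats 1000000 in
/-- There is no ideal `I` of `R = ℂ⟦x,y⟧` generated by two elements with
`m³ ⊆ I ⊆ m²` and `dim_ℂ(R/I) = 5`. -/
theorem stmt4 :
    ¬ ∃ (I : Ideal R2) (g h : R2), I = Ideal.span {g, h} ∧
        mIdeal ^ 3 ≤ I ∧ I ≤ mIdeal ^ 2 ∧ Module.rank ℂ (R2 ⧸ I) = 5 := by
  classical
  rintro ⟨I, g, h, hI, h3I, hI2, hrank⟩
  have hgI : g ∈ I := by rw [hI]; exact Ideal.subset_span (by simp)
  have hhI : h ∈ I := by rw [hI]; exact Ideal.subset_span (by simp)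
  have hg2 : g ∈ mIdeal ^ 2 := hI2 hgI
  have hh2 : h ∈ mIdeal ^ 2 := hI2 hhI
  have hm3 : mIdeal * mIdeal ^ 2 = mIdeal ^ 3 := (pow_succ' mIdeal 2).symm
  have hCsmul : ∀ (t : ℂ) (u : R2), MvPowerSeries.C (σ := Fin 2) (R := ℂ) t * u = t • u :=
    fun t u => (MvPowerSeries.smul_eq_C_mul u t).symm
  set W' : Submodule ℂ (Fin 6 → ℂ) := Submodule.span ℂ {φ6 g, φ6 h} with hW'
  set Φ : R2 →ₗ[ℂ] ((Fin 6 → ℂ) ⧸ W') := W'.mkQ.comp φ6 with hΦ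
  have hΦsurj : Function.Surjective Φ := (W'.mkQ_surjective).comp φ6_surj
  have hker : LinearMap.ker Φ = I.restrictScalars ℂ := by
    ext f
    simp only [LinearMap.mem_ker, hΦ, LinearMap.comp_apply, Submodule.mkQ_apply,
      Submodule.Quotient.mk_eq_zero, Submodule.restrictScalars_mem]
    constructor
    · intro hf
      obtain ⟨s, t, hst⟩ := Submodule.mem_span_pair.mp hf
      have hker6 : φ6 (f - s • g - t • h) = 0 := by
        rw [map_sub, map_sub, map_smul, map_smul, ← hst]
        abel
      have hmem3 : f - s • g - t • h ∈ mIdeal ^ 3 := (φ6_eq_zero_iff _).mp hker6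
      have hre : f = (f - s • g - t • h) + s • g + t • h := by ring_nf
      rw [hre]
      exact add_mem (add_mem (h3I hmem3) (Submodule.smul_of_tower_mem I s hgI))
        (Submodule.smul_of_tower_mem I t hhI)
    · intro hf
      rw [hI] at hf
      obtain ⟨a, b, hab⟩ := Ideal.mem_span_pair.mp hf
      set α := MvPowerSeries.coeff (R := ℂ) 0 a with hα
      set β := MvPowerSeries.coeff (R := ℂ) 0 b with hβ
      have h1 : φ6 ((a - MvPowerSeries.C (σ := Fin 2) (R := ℂ) α) * g) = 0 :=
        (φ6_eq_zero_iff _).mpr (hm3 ▸ Ideal.mul_mem_mul (sub_C_mem a) hg2)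
      have h2 : φ6 ((b - MvPowerSeries.C (σ := Fin 2) (R := ℂ) β) * h) = 0 :=
        (φ6_eq_zero_iff _).mpr (hm3 ▸ Ideal.mul_mem_mul (sub_C_mem b) hh2)
      have hre : f = α • g + β • h +
          ((a - MvPowerSeries.C (σ := Fin 2) (R := ℂ) α) * g + (b - MvPowerSeries.C (σ := Fin 2) (R := ℂ) β) * h) := by
        rw [← hab]
        simp only [← hCsmul]
        ring
      have : φ6 f = α • φ6 g + β • φ6 h := by
        rw [hre, map_add, map_add, map_add, map_smul, map_smul, h1, h2, add_zero, add_zero]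
      rw [this]
      exact add_mem (Submodule.smul_mem _ _ (Submodule.subset_span (by simp)))
        (Submodule.smul_mem _ _ (Submodule.subset_span (by simp)))
  set θ : R2 →ₗ[ℂ] (R2 ⧸ I) := (Ideal.Quotient.mkₐ ℂ I).toLinearMap with hθ
  have hθsurj : Function.Surjective θ := Ideal.Quotient.mkₐ_surjective ℂ I
  have hθker : LinearMap.ker θ = I.restrictScalars ℂ := by
    ext f
    simp [hθ, LinearMap.mem_ker, Ideal.Quotient.mkₐ_eq_mk, Ideal.Quotient.eq_zero_iff_mem]
  have E : (R2 ⧸ I) ≃ₗ[ℂ] ((Fin 6 → ℂ) ⧸ W') :=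
    (LinearMap.quotKerEquivOfSurjective θ hθsurj).symm.trans
      ((Submodule.quotEquivOfEq _ _ (hθker.trans hker.symm)).trans
        (LinearMap.quotKerEquivOfSurjective Φ hΦsurj))
  have hrank' : Module.rank ℂ ((Fin 6 → ℂ) ⧸ W') = 5 := E.symm.rank_eq.trans hrank
  have hfin : Module.finrank ℂ ((Fin 6 → ℂ) ⧸ W') = 5 :=
    Module.finrank_eq_of_rank_eq (by exact_mod_cast hrank')
  have hsum := Submodule.finrank_quotient_add_finrank W'
  rw [hfin, Module.finrank_fintype_fun_eq_card] at hsum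
  simp only [Fintype.card_fin] at hsum
  have hW'1 : Module.finrank ℂ W' = 1 := by omega
  obtain ⟨v, hv0, hvgen⟩ := finrank_eq_one_iff'.mp hW'1
  obtain ⟨c₁, hc₁⟩ := hvgen ⟨φ6 g, Submodule.subset_span (by simp)⟩
  obtain ⟨c₂, hc₂⟩ := hvgen ⟨φ6 h, Submodule.subset_span (by simp)⟩
  have hc₁' : φ6 g = c₁ • (v : Fin 6 → ℂ) := by
    have := congrArg Subtype.val hc₁
    simpa using this.symm
  have hc₂' : φ6 h = c₂ • (v : Fin 6 → ℂ) := by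
    have := congrArg Subtype.val hc₂
    simpa using this.symm
  by_cases hg0 : φ6 g = 0
  · by_cases hh0 : φ6 h = 0
    · have hbot : W' = ⊥ := by
        rw [hW', hg0, hh0]
        simp
      rw [hbot, finrank_bot] at hW'1
      exact absurd hW'1 (by norm_num)
    · have hg3 : g ∈ mIdeal ^ 3 := (φ6_eq_zero_iff g).mp hg0
      refine core h g hh2 hh0 hg3 ?_
      have : Ideal.span ({h, g} : Set R2) = Ideal.span {g, h} := by rw [Set.pair_comm]
      rw [this, ← hI]
      exact h3I
  · have hc₁0 : c₁ ≠ 0 := fun h0 => hg0 (by rw [hc₁', h0, zero_smul])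
    have hφh : φ6 h = (c₂ / c₁) • φ6 g := by
      rw [hc₁', hc₂', smul_smul]
      congr 1
      field_simp
    set h' := h - MvPowerSeries.C (σ := Fin 2) (R := ℂ) (c₂ / c₁) * g with hh'def
    have hh'3 : h' ∈ mIdeal ^ 3 := by
      apply (φ6_eq_zero_iff _).mp
      rw [hh'def, map_sub, hCsmul, map_smul, hφh, sub_self]
    have hspan' : Ideal.span {g, h'} = I := by
      rw [hI]
      apply le_antisymm
      · apply Ideal.span_le.mpr
        rintro f (rfl | rfl)
        · exact Ideal.subset_span (by simp)
        · exact sub_mem (Ideal.subset_span (by simp))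
            (Ideal.mul_mem_left _ _ (Ideal.subset_span (by simp)))
      · apply Ideal.span_le.mpr
        rintro f (rfl | rfl)
        · exact Ideal.subset_span (by simp)
        · have hre : f = h' + MvPowerSeries.C (σ := Fin 2) (R := ℂ) (c₂ / c₁) * g := by
            rw [hh'def]; ring
          rw [hre]
          exact add_mem (Ideal.subset_span (by simp))
            (Ideal.mul_mem_left _ _ (Ideal.subset_span (by simp)))
    refine core g h' hg2 hg0 hh'3 ?_
    rw [hspan']
    exact h3I
end

section
/- Let R = ℂ⟦x,y⟧. If I is an ideal of R generated by two elements with x² ∈ I, y² ∈ I and dim_ℂ(R/I) ≥ 3, then I = ⟨x², y²⟩ (and hence dim_ℂ(R/I) = 4). -/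
open MvPowerSeries Finsupp Cardinal

/-- the monomial exponent x^i y^j -/
noncomputable def m2 (i j : ℕ) : Fin 2 →₀ ℕ := Finsupp.single 0 i + Finsupp.single 1 j

lemma m2_apply0 (i j : ℕ) : m2 i j 0 = i := by simp [m2]
lemma m2_apply1 (i j : ℕ) : m2 i j 1 = j := by simp [m2]

lemma eq_m2 (e : Fin 2 →₀ ℕ) : e = m2 (e 0) (e 1) := by
  ext s
  fin_cases s
  · simp [m2]
  · simp [m2]

lemma m2_inj {i j i' j' : ℕ} (h : m2 i j = m2 i' j') : i = i' ∧ j = j' := by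
  constructor
  · have := congrArg (fun e : Fin 2 →₀ ℕ => e 0) h; simpa [m2_apply0] using this
  · have := congrArg (fun e : Fin 2 →₀ ℕ => e 1) h; simpa [m2_apply1] using this

lemma Xsq : Xv ^ 2 = MvPowerSeries.monomial (Finsupp.single 0 2) 1 := X_pow_eq 0 2
lemma Ysq : Yv ^ 2 = MvPowerSeries.monomial (Finsupp.single 1 2) 1 := X_pow_eq 1 2

lemma coeff_mul_Xsq (p : R2) (e : Fin 2 →₀ ℕ) :
    MvPowerSeries.coeff e (p * Xv ^ 2)
      = if 2 ≤ e 0 then MvPowerSeries.coeff (e - Finsupp.single 0 2) p else 0 := by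
  rw [Xsq, coeff_mul_monomial]
  simp [Finsupp.single_le_iff]

lemma coeff_mul_Ysq (p : R2) (e : Fin 2 →₀ ℕ) :
    MvPowerSeries.coeff e (p * Yv ^ 2)
      = if 2 ≤ e 1 then MvPowerSeries.coeff (e - Finsupp.single 1 2) p else 0 := by
  rw [Ysq, coeff_mul_monomial]
  simp [Finsupp.single_le_iff]

/-- membership in J = (x², y²) -/
lemma mem_J_iff (f : R2) :
    f ∈ Ideal.span {Xv ^ 2, Yv ^ 2} ↔
      ∀ i j : ℕ, i ≤ 1 → j ≤ 1 → MvPowerSeries.coeff (m2 i j) f = 0 := by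
  constructor
  · rintro hf i j hi hj
    rw [Ideal.mem_span_pair] at hf
    obtain ⟨p, q, rfl⟩ := hf
    rw [map_add, coeff_mul_Xsq, coeff_mul_Ysq, m2_apply0, m2_apply1]
    rw [if_neg (by omega), if_neg (by omega), add_zero]
  · intro h
    rw [Ideal.mem_span_pair]
    refine ⟨fun e => MvPowerSeries.coeff (e + Finsupp.single 0 2) f,
      fun e => if e 0 ≤ 1 then MvPowerSeries.coeff (e + Finsupp.single 1 2) f else 0, ?_⟩
    apply MvPowerSeries.ext
    intro e
    rw [map_add]
    erw [coeff_mul_Xsq, coeff_mul_Ysq]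
    simp only [MvPowerSeries.coeff_apply]
    change (if 2 ≤ e 0 then f (e - Finsupp.single 0 2 + Finsupp.single 0 2) else 0)
      + (if 2 ≤ e 1 then (if (e - Finsupp.single 1 2 : Fin 2 →₀ ℕ) 0 ≤ 1
          then f (e - Finsupp.single 1 2 + Finsupp.single 1 2) else 0) else 0) = f e
    by_cases h0 : 2 ≤ e 0
    · rw [if_pos h0, tsub_add_cancel_of_le (Finsupp.single_le_iff.mpr h0)]
      by_cases h1 : 2 ≤ e 1
      · rw [if_pos h1, if_neg (by simp [Finsupp.tsub_apply]; omega), add_zero]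
      · rw [if_neg h1, add_zero]
    · rw [if_neg h0]
      by_cases h1 : 2 ≤ e 1
      · rw [if_pos h1, if_pos (by simp [Finsupp.tsub_apply]; omega),
          tsub_add_cancel_of_le (Finsupp.single_le_iff.mpr h1), zero_add]
      · rw [if_neg h1, add_zero]
        have := h (e 0) (e 1) (by omega) (by omega)
        rw [MvPowerSeries.coeff_apply, ← eq_m2 e] at this
        exact this.symm

lemma m200 : m2 0 0 = 0 := by ext s; fin_cases s <;> simp [m2]

lemma m2_eq_iff {i j i' j' : ℕ} : m2 i j = m2 i' j' ↔ i = i' ∧ j = j' :=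
  ⟨m2_inj, by rintro ⟨rfl, rfl⟩; rfl⟩

lemma XYmon : Xv * Yv = MvPowerSeries.monomial (m2 1 1) 1 := by
  rw [Xv, Yv, X_def, X_def, monomial_mul_monomial, one_mul]; rfl

lemma Xmon : Xv = MvPowerSeries.monomial (m2 1 0) 1 := by
  have h : (Finsupp.single 0 1 : Fin 2 →₀ ℕ) = m2 1 0 := by
    apply Finsupp.ext; intro s; fin_cases s <;> simp [m2]
  rw [Xv, X_def, h]

lemma Ymon : Yv = MvPowerSeries.monomial (m2 0 1) 1 := by
  have h : (Finsupp.single 1 1 : Fin 2 →₀ ℕ) = m2 0 1 := by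
    apply Finsupp.ext; intro s; fin_cases s <;> simp [m2]
  rw [Yv, X_def, h]

lemma Xsq' : Xv ^ 2 = MvPowerSeries.monomial (m2 2 0) 1 := by
  have h : (Finsupp.single 0 2 : Fin 2 →₀ ℕ) = m2 2 0 := by
    apply Finsupp.ext; intro s; fin_cases s <;> simp [m2]
  rw [Xsq, h]

lemma Ysq' : Yv ^ 2 = MvPowerSeries.monomial (m2 0 2) 1 := by
  have h : (Finsupp.single 1 2 : Fin 2 →₀ ℕ) = m2 0 2 := by
    apply Finsupp.ext; intro s; fin_cases s <;> simp [m2]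
  rw [Ysq, h]

lemma coeff_quad (i j : ℕ) (a b c d : ℂ) :
    MvPowerSeries.coeff (m2 i j)
      ((MvPowerSeries.C (σ := Fin 2) (R := ℂ)) a + (MvPowerSeries.C (σ := Fin 2) (R := ℂ)) b * Xv
        + (MvPowerSeries.C (σ := Fin 2) (R := ℂ)) c * Yv + (MvPowerSeries.C (σ := Fin 2) (R := ℂ)) d * (Xv * Yv))
      = (if i = 0 ∧ j = 0 then a else 0) + (if i = 1 ∧ j = 0 then b else 0)
        + (if i = 0 ∧ j = 1 then c else 0) + (if i = 1 ∧ j = 1 then d else 0) := by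
  classical
  have hC : (MvPowerSeries.C (σ := Fin 2) (R := ℂ)) a = MvPowerSeries.monomial (m2 0 0) a := by
    rw [m200]; rfl
  rw [map_add, map_add, map_add, hC, XYmon, Xmon, Ymon,
    MvPowerSeries.coeff_C_mul, MvPowerSeries.coeff_C_mul, MvPowerSeries.coeff_C_mul,
    MvPowerSeries.coeff_monomial, MvPowerSeries.coeff_monomial, MvPowerSeries.coeff_monomial,
    MvPowerSeries.coeff_monomial]
  simp only [m2_eq_iff]
  split_ifs <;> ring

lemma decomp (f : R2) :
    f - ((MvPowerSeries.C (σ := Fin 2) (R := ℂ)) (MvPowerSeries.coeff (m2 0 0) f)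
      + (MvPowerSeries.C (σ := Fin 2) (R := ℂ)) (MvPowerSeries.coeff (m2 1 0) f) * Xv
      + (MvPowerSeries.C (σ := Fin 2) (R := ℂ)) (MvPowerSeries.coeff (m2 0 1) f) * Yv
      + (MvPowerSeries.C (σ := Fin 2) (R := ℂ)) (MvPowerSeries.coeff (m2 1 1) f) * (Xv * Yv))
    ∈ Ideal.span {Xv ^ 2, Yv ^ 2} := by
  rw [mem_J_iff]
  intro i j hi hj
  rw [map_sub, coeff_quad]
  interval_cases i <;> interval_cases j <;> simp

lemma smul_mk (I : Ideal R2) (a : ℂ) (f : R2) :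
    a • Ideal.Quotient.mk I f = Ideal.Quotient.mk I ((MvPowerSeries.C (σ := Fin 2) (R := ℂ)) a * f) := by
  have h : (MvPowerSeries.C (σ := Fin 2) (R := ℂ)) a * f = a • f := by
    rw [Algebra.smul_def, MvPowerSeries.algebraMap_apply]; simp
  rw [h]
  exact (map_smul (Ideal.Quotient.mkₐ ℂ I).toLinearMap a f).symm

lemma rank_le_two_of_span (I : Ideal R2) (u v : R2)
    (hspan : ∀ r : R2, ∃ α β : ℂ,
      r - ((MvPowerSeries.C (σ := Fin 2) (R := ℂ)) α * u + (MvPowerSeries.C (σ := Fin 2) (R := ℂ)) β * v) ∈ I) :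
    Module.rank ℂ (R2 ⧸ I) ≤ 2 := by
  have htop : (⊤ : Submodule ℂ (R2 ⧸ I)) ≤
      Submodule.span ℂ {Ideal.Quotient.mk I u, Ideal.Quotient.mk I v} := by
    rintro t -
    obtain ⟨r, rfl⟩ := Ideal.Quotient.mk_surjective t
    obtain ⟨α, β, hr⟩ := hspan r
    have heq : Ideal.Quotient.mk I r = α • Ideal.Quotient.mk I u + β • Ideal.Quotient.mk I v := by
      rw [smul_mk, smul_mk, ← map_add, Ideal.Quotient.mk_eq_mk_iff_sub_mem]
      exact hr
    rw [heq]
    exact add_mem (Submodule.smul_mem _ _ (Submodule.subset_span (Set.mem_insert _ _)))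
      (Submodule.smul_mem _ _ (Submodule.subset_span (Set.mem_insert_of_mem _ rfl)))
  have heq2 : Submodule.span ℂ {Ideal.Quotient.mk I u, Ideal.Quotient.mk I v}
      = (⊤ : Submodule ℂ (R2 ⧸ I)) := top_le_iff.mp htop
  calc Module.rank ℂ (R2 ⧸ I) = Module.rank ℂ (⊤ : Submodule ℂ (R2 ⧸ I)) := (rank_top ℂ _).symm
    _ = Module.rank ℂ
        (Submodule.span ℂ {Ideal.Quotient.mk I u, Ideal.Quotient.mk I v}) := by rw [heq2]
    _ ≤ #({Ideal.Quotient.mk I u, Ideal.Quotient.mk I v} : Set (R2 ⧸ I)) := rank_span_le _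
    _ ≤ 2 := by
        refine le_trans Cardinal.mk_insert_le ?_
        rw [Cardinal.mk_singleton]
        norm_num


set_option maxHeartbeats 2000000 in
open MvPowerSeries in
/-- If `I` is an ideal of `R = ℂ⟦x,y⟧` generated by two elements with
`x² ∈ I`, `y² ∈ I` and `dim_ℂ(R/I) ≥ 3`, then `I = ⟨x², y²⟩` (and hence
`dim_ℂ(R/I) = 4`). -/
theorem stmt5 (I : Ideal R2) (hgen : ∃ g h : R2, I = Ideal.span {g, h})
    (hx2 : Xv ^ 2 ∈ I) (hy2 : Yv ^ 2 ∈ I)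
    (hdim : (3 : Cardinal) ≤ Module.rank ℂ (R2 ⧸ I)) :
    I = Ideal.span {Xv ^ 2, Yv ^ 2} ∧ Module.rank ℂ (R2 ⧸ I) = 4 := by
  classical
  obtain ⟨g, h, hgh⟩ := hgen
  have hJI : Ideal.span {Xv ^ 2, Yv ^ 2} ≤ I := by
    rw [Ideal.span_le]
    rintro t ht
    rcases ht with rfl | ht
    · exact hx2
    · rcases ht with rfl
      exact hy2
  have hne : I ≠ ⊤ := by
    intro htop
    have : Subsingleton (R2 ⧸ I) := Ideal.Quotient.subsingleton_iff.mpr htop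
    rw [rank_subsingleton'] at hdim
    exact (by norm_num : ¬ (3 : Cardinal) ≤ 0) hdim
  have hc00 : ∀ f ∈ I, coeff (m2 0 0) f = 0 := by
    intro f hf
    by_contra hne0
    apply hne
    apply I.eq_top_of_isUnit_mem hf
    rw [MvPowerSeries.isUnit_iff_constantCoeff]
    have hcc : (constantCoeff (σ := Fin 2) (R := ℂ)) f = coeff (m2 0 0) f := by
      rw [m200]; rfl
    rw [hcc]
    exact isUnit_iff_ne_zero.mpr hne0
  -- if some element of I has nonzero coefficient on x or y, then xy ∈ I
  have hXY_of : ∀ f ∈ I, (coeff (m2 1 0) f ≠ 0 ∨ coeff (m2 0 1) f ≠ 0) → Xv * Yv ∈ I := by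
    intro f hf hbc
    have hdec := decomp f
    rw [hc00 f hf, map_zero, zero_add] at hdec
    set b := coeff (m2 1 0) f with hb'
    set c := coeff (m2 0 1) f with hc'
    set d := coeff (m2 1 1) f with hd'
    set Cm := MvPowerSeries.C (σ := Fin 2) (R := ℂ) with hCm
    set jj := f - (Cm b * Xv + Cm c * Yv + Cm d * (Xv * Yv)) with hjj
    rcases hbc with hb0 | hc0
    · have key : Cm b * (Xv * Yv)
          = Yv * f - Yv * jj - Cm c * Yv ^ 2 - Cm d * (Xv * Yv ^ 2) := by
        rw [hjj]; ring
      have hmem : Cm b * (Xv * Yv) ∈ I := by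
        rw [key]
        exact sub_mem (sub_mem (sub_mem (I.mul_mem_left _ hf) (I.mul_mem_left _ (hJI hdec)))
          (I.mul_mem_left _ hy2)) (I.mul_mem_left _ (I.mul_mem_left _ hy2))
      have : Xv * Yv = Cm b⁻¹ * (Cm b * (Xv * Yv)) := by
        rw [← mul_assoc, ← map_mul, inv_mul_cancel₀ hb0, hCm, map_one, one_mul]
      rw [this]
      exact I.mul_mem_left _ hmem
    · have key : Cm c * (Xv * Yv)
          = Xv * f - Xv * jj - Cm b * Xv ^ 2 - Cm d * (Yv * Xv ^ 2) := by
        rw [hjj]; ring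
      have hmem : Cm c * (Xv * Yv) ∈ I := by
        rw [key]
        exact sub_mem (sub_mem (sub_mem (I.mul_mem_left _ hf) (I.mul_mem_left _ (hJI hdec)))
          (I.mul_mem_left _ hx2)) (I.mul_mem_left _ (I.mul_mem_left _ hx2))
      have : Xv * Yv = Cm c⁻¹ * (Cm c * (Xv * Yv)) := by
        rw [← mul_assoc, ← map_mul, inv_mul_cancel₀ hc0, hCm, map_one, one_mul]
      rw [this]
      exact I.mul_mem_left _ hmem
  have hlin : ∀ f ∈ I, coeff (m2 1 0) f = 0 ∧ coeff (m2 0 1) f = 0 := by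
    intro f hf
    by_contra hcon
    rw [not_and_or] at hcon
    have hxyI : Xv * Yv ∈ I := hXY_of f hf hcon
    have hdec := decomp f
    rw [hc00 f hf, map_zero, zero_add] at hdec
    set b := coeff (m2 1 0) f with hb'
    set c := coeff (m2 0 1) f with hc'
    set d := coeff (m2 1 1) f with hd'
    set Cm := MvPowerSeries.C (σ := Fin 2) (R := ℂ) with hCm
    have hlI : Cm b * Xv + Cm c * Yv ∈ I := by
      have hid : Cm b * Xv + Cm c * Yv
          = f - (f - (Cm b * Xv + Cm c * Yv + Cm d * (Xv * Yv))) - Cm d * (Xv * Yv) := by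
        ring
      rw [hid]
      exact sub_mem (sub_mem hf (hJI hdec)) (I.mul_mem_left _ hxyI)
    have hrank2 : Module.rank ℂ (R2 ⧸ I) ≤ 2 := by
      rcases hcon with hb0 | hc0
      · apply rank_le_two_of_span I 1 Yv
        intro r
        set α := coeff (m2 0 0) r
        set β := coeff (m2 1 0) r
        set γ := coeff (m2 0 1) r
        set δ := coeff (m2 1 1) r
        refine ⟨α, γ - β / b * c, ?_⟩
        have hrr := decomp r
        have hCb : Cm (β / b) * Cm b = Cm β := by
          rw [← map_mul, div_mul_cancel₀ _ hb0]
        have hid : r - (Cm α * 1 + Cm (γ - β / b * c) * Yv)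
            = (r - (Cm α + Cm β * Xv + Cm γ * Yv + Cm δ * (Xv * Yv)))
              + Cm (β / b) * (Cm b * Xv + Cm c * Yv) + Cm δ * (Xv * Yv) := by
          simp only [map_sub, map_mul]
          rw [← hCb]
          ring
        rw [hid]
        exact add_mem (add_mem (hJI hrr) (I.mul_mem_left _ hlI)) (I.mul_mem_left _ hxyI)
      · apply rank_le_two_of_span I 1 Xv
        intro r
        set α := coeff (m2 0 0) r
        set β := coeff (m2 1 0) r
        set γ := coeff (m2 0 1) r
        set δ := coeff (m2 1 1) r
        refine ⟨α, β - γ / c * b, ?_⟩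
        have hrr := decomp r
        have hCc : Cm (γ / c) * Cm c = Cm γ := by
          rw [← map_mul, div_mul_cancel₀ _ hc0]
        have hid : r - (Cm α * 1 + Cm (β - γ / c * b) * Xv)
            = (r - (Cm α + Cm β * Xv + Cm γ * Yv + Cm δ * (Xv * Yv)))
              + Cm (γ / c) * (Cm b * Xv + Cm c * Yv) + Cm δ * (Xv * Yv) := by
          simp only [map_sub, map_mul]
          rw [← hCc]
          ring
        rw [hid]
        exact add_mem (add_mem (hJI hrr) (I.mul_mem_left _ hlI)) (I.mul_mem_left _ hxyI)
    exact (by norm_num : ¬ (3 : Cardinal) ≤ 2) (le_trans hdim hrank2)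
  by_cases hdall : ∀ f ∈ I, coeff (m2 1 1) f = 0
  · -- I = J, rank 4
    have hIJ : I = Ideal.span {Xv ^ 2, Yv ^ 2} := by
      refine le_antisymm ?_ hJI
      intro f hf
      rw [mem_J_iff]
      intro i j hi hj
      interval_cases i <;> interval_cases j
      · exact hc00 f hf
      · exact (hlin f hf).2
      · exact (hlin f hf).1
      · exact hdall f hf
    refine ⟨hIJ, ?_⟩
    set Cm := MvPowerSeries.C (σ := Fin 2) (R := ℂ) with hCm
    set v : Fin 4 → R2 ⧸ I :=
      ![Ideal.Quotient.mk I 1, Ideal.Quotient.mk I Xv, Ideal.Quotient.mk I Yv,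
        Ideal.Quotient.mk I (Xv * Yv)] with hv
    have hsp : ⊤ ≤ Submodule.span ℂ (Set.range v) := by
      rintro t -
      obtain ⟨r, rfl⟩ := Ideal.Quotient.mk_surjective t
      have hrr := decomp r
      have heq : Ideal.Quotient.mk I r = coeff (m2 0 0) r • v 0 + coeff (m2 1 0) r • v 1
          + coeff (m2 0 1) r • v 2 + coeff (m2 1 1) r • v 3 := by
        simp only [hv, Matrix.cons_val_zero, Matrix.cons_val_one, Matrix.head_cons,
          Matrix.cons_val_two, Matrix.tail_cons, Matrix.cons_val_three]
        rw [smul_mk, smul_mk, smul_mk, smul_mk, ← map_add, ← map_add, ← map_add,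
          Ideal.Quotient.mk_eq_mk_iff_sub_mem]
        have hid : r - (Cm (coeff (m2 0 0) r) * 1 + Cm (coeff (m2 1 0) r) * Xv
              + Cm (coeff (m2 0 1) r) * Yv + Cm (coeff (m2 1 1) r) * (Xv * Yv))
            = r - (Cm (coeff (m2 0 0) r) + Cm (coeff (m2 1 0) r) * Xv
              + Cm (coeff (m2 0 1) r) * Yv + Cm (coeff (m2 1 1) r) * (Xv * Yv)) := by
          ring
        rw [hid]
        exact hJI hrr
      rw [heq]
      have hmem : ∀ k : Fin 4, v k ∈ Submodule.span ℂ (Set.range v) := fun k =>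
        Submodule.subset_span ⟨k, rfl⟩
      exact add_mem (add_mem (add_mem (Submodule.smul_mem _ _ (hmem 0))
        (Submodule.smul_mem _ _ (hmem 1))) (Submodule.smul_mem _ _ (hmem 2)))
        (Submodule.smul_mem _ _ (hmem 3))
    have hli : LinearIndependent ℂ v := by
      rw [Fintype.linearIndependent_iff]
      intro cv hsum
      have heq : (∑ i, cv i • v i)
          = Ideal.Quotient.mk I (Cm (cv 0) + Cm (cv 1) * Xv + Cm (cv 2) * Yv
              + Cm (cv 3) * (Xv * Yv)) := by
        rw [Fin.sum_univ_four]
        simp only [hv, Matrix.cons_val_zero, Matrix.cons_val_one, Matrix.head_cons,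
          Matrix.cons_val_two, Matrix.tail_cons, Matrix.cons_val_three]
        rw [smul_mk, smul_mk, smul_mk, smul_mk, ← map_add, ← map_add, ← map_add]
        congr 1
        ring
      rw [heq, Ideal.Quotient.eq_zero_iff_mem, hIJ, mem_J_iff] at hsum
      intro k
      fin_cases k
      · have h0 := hsum 0 0 (by norm_num) (by norm_num)
        rw [coeff_quad] at h0; simpa using h0
      · have h0 := hsum 1 0 (by norm_num) (by norm_num)
        rw [coeff_quad] at h0; simpa using h0
      · have h0 := hsum 0 1 (by norm_num) (by norm_num)
        rw [coeff_quad] at h0; simpa using h0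
      · have h0 := hsum 1 1 (by norm_num) (by norm_num)
        rw [coeff_quad] at h0; simpa using h0
    rw [rank_eq_card_basis (Module.Basis.mk hli hsp)]
    simp
  · -- impossible: I = (x²,y²,xy) is not 2-generated
    exfalso
    push_neg at hdall
    obtain ⟨f, hf, hd0⟩ := hdall
    set Cm := MvPowerSeries.C (σ := Fin 2) (R := ℂ) with hCm
    have hdec := decomp f
    rw [hc00 f hf, (hlin f hf).1, (hlin f hf).2] at hdec
    simp only [map_zero, zero_mul, zero_add] at hdec
    have hxyI : Xv * Yv ∈ I := by
      have hmem : Cm (coeff (m2 1 1) f) * (Xv * Yv) ∈ I := by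
        have hid : Cm (coeff (m2 1 1) f) * (Xv * Yv)
            = f - (f - Cm (coeff (m2 1 1) f) * (Xv * Yv)) := by ring
        rw [hid]
        exact sub_mem hf (hJI hdec)
      have hid2 : Xv * Yv = Cm (coeff (m2 1 1) f)⁻¹
          * (Cm (coeff (m2 1 1) f) * (Xv * Yv)) := by
        rw [← mul_assoc, ← map_mul, inv_mul_cancel₀ hd0, hCm, map_one, one_mul]
      rw [hid2]
      exact I.mul_mem_left _ hmem
    set ψ : R2 → Fin 3 → ℂ :=
      fun w => ![coeff (m2 2 0) w, coeff (m2 1 1) w, coeff (m2 0 2) w] with hψ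
    have hlow : ∀ w ∈ I, ∀ i j : ℕ, i + j ≤ 1 → coeff (m2 i j) w = 0 := by
      intro w hw i j hij
      have hi : i ≤ 1 := by omega
      have hj : j ≤ 1 := by omega
      interval_cases i <;> interval_cases j
      · exact hc00 w hw
      · exact (hlin w hw).2
      · exact (hlin w hw).1
      · omega
    have hmul : ∀ (p w : R2), w ∈ I → ∀ i j : ℕ, i + j = 2 →
        coeff (m2 i j) (p * w) = coeff 0 p * coeff (m2 i j) w := by
      intro p w hw i j hij
      rw [MvPowerSeries.coeff_mul]
      refine Finset.sum_eq_single_of_mem (0, m2 i j) ?_ ?_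
      · rw [Finset.HasAntidiagonal.mem_antidiagonal, zero_add]
      · rintro ⟨s, t⟩ hst hnepair
        rw [Finset.HasAntidiagonal.mem_antidiagonal] at hst
        have hst' : s + t = m2 i j := hst
        by_cases hs : s = 0
        · exfalso
          apply hnepair
          rw [hs, zero_add] at hst'
          rw [hs, hst']
        · have e0 : s 0 + t 0 = i := by
            have := congrArg (fun e : Fin 2 →₀ ℕ => e 0) hst'
            simpa [Finsupp.add_apply, m2_apply0] using this
          have e1 : s 1 + t 1 = j := by
            have := congrArg (fun e : Fin 2 →₀ ℕ => e 1) hst' 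
            simpa [Finsupp.add_apply, m2_apply1] using this
          have hs1 : 1 ≤ s 0 + s 1 := by
            by_contra hcon
            push_neg at hcon
            apply hs
            have h0 : s 0 = 0 := by omega
            have h1 : s 1 = 0 := by omega
            rw [eq_m2 s, h0, h1, m200]
          have ht : coeff t w = 0 := by
            rw [eq_m2 t]
            exact hlow w hw (t 0) (t 1) (by omega)
          rw [ht, mul_zero]
    have hg : g ∈ I := by rw [hgh]; exact Ideal.subset_span (Set.mem_insert _ _)
    have hh : h ∈ I := by rw [hgh]; exact Ideal.subset_span (Set.mem_insert_of_mem _ rfl)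
    have hspanψ : ∀ w ∈ I, ψ w ∈ Submodule.span ℂ {ψ g, ψ h} := by
      intro w hw
      have hw2 : w ∈ Ideal.span {g, h} := hgh ▸ hw
      rw [Ideal.mem_span_pair] at hw2
      obtain ⟨p, q, hpq⟩ := hw2
      have heq : ψ w = coeff 0 p • ψ g + coeff 0 q • ψ h := by
        funext k
        fin_cases k
        · show coeff (m2 2 0) w = coeff 0 p * coeff (m2 2 0) g
            + coeff 0 q * coeff (m2 2 0) h
          rw [← hpq, map_add, hmul p g hg 2 0 rfl, hmul q h hh 2 0 rfl]
        · show coeff (m2 1 1) w = coeff 0 p * coeff (m2 1 1) g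
            + coeff 0 q * coeff (m2 1 1) h
          rw [← hpq, map_add, hmul p g hg 1 1 rfl, hmul q h hh 1 1 rfl]
        · show coeff (m2 0 2) w = coeff 0 p * coeff (m2 0 2) g
            + coeff 0 q * coeff (m2 0 2) h
          rw [← hpq, map_add, hmul p g hg 0 2 rfl, hmul q h hh 0 2 rfl]
      rw [heq]
      exact add_mem (Submodule.smul_mem _ _ (Submodule.subset_span (Set.mem_insert _ _)))
        (Submodule.smul_mem _ _ (Submodule.subset_span (Set.mem_insert_of_mem _ rfl)))
    have htop : (⊤ : Submodule ℂ (Fin 3 → ℂ)) ≤ Submodule.span ℂ {ψ g, ψ h} := by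
      rintro u -
      have hu : u = u 0 • ψ (Xv ^ 2) + u 1 • ψ (Xv * Yv) + u 2 • ψ (Yv ^ 2) := by
        funext k
        fin_cases k <;>
          simp [hψ, Xsq', Ysq', XYmon, MvPowerSeries.coeff_monomial, m2_eq_iff]
      rw [hu]
      exact add_mem (add_mem (Submodule.smul_mem _ _ (hspanψ _ hx2))
        (Submodule.smul_mem _ _ (hspanψ _ hxyI))) (Submodule.smul_mem _ _ (hspanψ _ hy2))
    have heqt : Submodule.span ℂ {ψ g, ψ h} = (⊤ : Submodule ℂ (Fin 3 → ℂ)) :=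
      top_le_iff.mp htop
    have hcontra : (3 : Cardinal) ≤ 2 := by
      calc (3 : Cardinal) = Module.rank ℂ (Fin 3 → ℂ) := by rw [rank_fin_fun]; norm_num
        _ = Module.rank ℂ (Submodule.span ℂ {ψ g, ψ h}) := by rw [heqt, rank_top]
        _ ≤ #({ψ g, ψ h} : Set (Fin 3 → ℂ)) := rank_span_le _
        _ ≤ 2 := by
            refine le_trans Cardinal.mk_insert_le ?_
            rw [Cardinal.mk_singleton]
            norm_num
    norm_num at hcontra
end

section
/- Let R = ℂ⟦x,y⟧ with maximal ideal m = ⟨x,y⟩. If I is an ideal of R generated by two elements with x² ∈ I, xy ∈ I, y³ ∈ I and dim_ℂ(R/I) ≥ 3, then dim_ℂ(R/I) = 3 and there exist u, v ∈ R with ⟨u,v⟩ = m such that I = ⟨u, v³⟩. -/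
set_option maxHeartbeats 1000000


namespace Stmt6Aux
open MvPowerSeries Finsupp Cardinal

noncomputable def M (a b : ℕ) : Fin 2 →₀ ℕ := Finsupp.single 0 a + Finsupp.single 1 b
@[simp] lemma M_apply0 (a b : ℕ) : M a b 0 = a := by simp [M]
@[simp] lemma M_apply1 (a b : ℕ) : M a b 1 = b := by simp [M]
lemma fin2_eq (ν : Fin 2 →₀ ℕ) : ν = M (ν 0) (ν 1) := by
  ext i; fin_cases i <;> simp
lemma M_le_iff {a b : ℕ} {ν : Fin 2 →₀ ℕ} : M a b ≤ ν ↔ a ≤ ν 0 ∧ b ≤ ν 1 := by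
  constructor
  · intro h; exact ⟨by simpa using h 0, by simpa using h 1⟩
  · rintro ⟨h1, h2⟩ i; fin_cases i <;> simpa
lemma le_M_iff {a b : ℕ} {ν : Fin 2 →₀ ℕ} : ν ≤ M a b ↔ ν 0 ≤ a ∧ ν 1 ≤ b := by
  constructor
  · intro h; exact ⟨by simpa using h 0, by simpa using h 1⟩
  · rintro ⟨h1, h2⟩ i; fin_cases i <;> simpa
lemma M_le_M_iff {a b c d : ℕ} : M a b ≤ M c d ↔ a ≤ c ∧ b ≤ d := by
  rw [M_le_iff]; simp
lemma M_eq_iff {a b c d : ℕ} : M a b = M c d ↔ a = c ∧ b = d := by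
  constructor
  · intro h
    constructor
    · have := congrArg (fun f => f 0) h; simpa using this
    · have := congrArg (fun f => f 1) h; simpa using this
  · rintro ⟨rfl, rfl⟩; rfl
@[simp] lemma M_zero : M 0 0 = 0 := by simp [M]
lemma M_add (a b c d : ℕ) : M a b + M c d = M (a + c) (b + d) := by
  ext i; fin_cases i <;> simp
lemma M_sub (a b c d : ℕ) : M a b - M c d = M (a - c) (b - d) := by
  ext i; fin_cases i <;> simp [Finsupp.tsub_apply]

lemma Xv_pow_mul_Yv_pow (a b : ℕ) :
    Xv ^ a * Yv ^ b = MvPowerSeries.monomial (M a b) 1 := by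
  rw [Xv, Yv, X_pow_eq, X_pow_eq, monomial_mul_monomial, one_mul, M]
lemma Xv_sq : Xv ^ 2 = MvPowerSeries.monomial (M 2 0) 1 := by
  simpa using Xv_pow_mul_Yv_pow 2 0
lemma XvYv : Xv * Yv = MvPowerSeries.monomial (M 1 1) 1 := by
  simpa using Xv_pow_mul_Yv_pow 1 1
lemma Yv_cube : Yv ^ 3 = MvPowerSeries.monomial (M 0 3) 1 := by
  simpa using Xv_pow_mul_Yv_pow 0 3
lemma Yv_sq : Yv ^ 2 = MvPowerSeries.monomial (M 0 2) 1 := by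
  simpa using Xv_pow_mul_Yv_pow 0 2

/-- The ideal `J = (x², xy, y³)`. -/
noncomputable def Jid : Ideal R2 := Ideal.span {Xv ^ 2, Xv * Yv, Yv ^ 3}

lemma x2_mem_Jid : Xv ^ 2 ∈ Jid := Ideal.subset_span (Set.mem_insert _ _)
lemma xy_mem_Jid : Xv * Yv ∈ Jid :=
  Ideal.subset_span (Set.mem_insert_of_mem _ (Set.mem_insert _ _))
lemma y3_mem_Jid : Yv ^ 3 ∈ Jid :=
  Ideal.subset_span (Set.mem_insert_of_mem _ (Set.mem_insert_of_mem _ rfl))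

/-- Division with remainder modulo `J`: only the coefficients of `1, x, y, y²` remain. -/
lemma decomp (f : R2) :
    f - (MvPowerSeries.monomial (M 0 0) (MvPowerSeries.coeff (M 0 0) f)
      + MvPowerSeries.monomial (M 1 0) (MvPowerSeries.coeff (M 1 0) f)
      + MvPowerSeries.monomial (M 0 1) (MvPowerSeries.coeff (M 0 1) f)
      + MvPowerSeries.monomial (M 0 2) (MvPowerSeries.coeff (M 0 2) f)) ∈ Jid := by
  classical
  set A : R2 := (fun μ => MvPowerSeries.coeff (μ + M 2 0) f : (Fin 2 →₀ ℕ) → ℂ) with hA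
  set B : R2 := (fun μ => if μ 0 = 0 then MvPowerSeries.coeff (μ + M 1 1) f else 0 :
    (Fin 2 →₀ ℕ) → ℂ) with hB
  set Cs : R2 := (fun μ => if μ 0 = 0 then MvPowerSeries.coeff (μ + M 0 3) f else 0 :
    (Fin 2 →₀ ℕ) → ℂ) with hCs
  have hcA : ∀ d : Fin 2 →₀ ℕ, MvPowerSeries.coeff d A = MvPowerSeries.coeff (d + M 2 0) f :=
    fun d => rfl
  have hcB : ∀ d : Fin 2 →₀ ℕ, MvPowerSeries.coeff d B =
      if d 0 = 0 then MvPowerSeries.coeff (d + M 1 1) f else 0 := fun d => rfl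
  have hcC : ∀ d : Fin 2 →₀ ℕ, MvPowerSeries.coeff d Cs =
      if d 0 = 0 then MvPowerSeries.coeff (d + M 0 3) f else 0 := fun d => rfl
  have heq : f - (MvPowerSeries.monomial (M 0 0) (MvPowerSeries.coeff (M 0 0) f)
      + MvPowerSeries.monomial (M 1 0) (MvPowerSeries.coeff (M 1 0) f)
      + MvPowerSeries.monomial (M 0 1) (MvPowerSeries.coeff (M 0 1) f)
      + MvPowerSeries.monomial (M 0 2) (MvPowerSeries.coeff (M 0 2) f))
      = Xv ^ 2 * A + (Xv * Yv) * B + Yv ^ 3 * Cs := by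
    apply MvPowerSeries.ext; intro ν
    obtain ⟨p, q, rfl⟩ : ∃ p q, ν = M p q := ⟨_, _, fin2_eq ν⟩
    rw [map_sub, map_add, map_add, map_add, map_add, map_add]
    rw [Xv_sq, XvYv, Yv_cube, coeff_monomial_mul, coeff_monomial_mul, coeff_monomial_mul]
    simp only [coeff_monomial, M_eq_iff, M_le_M_iff, M_sub, hcA, hcB, hcC, M_apply0, M_apply1,
      M_add, one_mul]
    rcases p with _ | _ | p
    · rcases q with _ | _ | _ | q <;> simp
    · rcases q with _ | q <;> simp
    · simp
  rw [heq]
  refine Ideal.add_mem _ (Ideal.add_mem _ ?_ ?_) ?_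
  · exact Ideal.mul_mem_right _ _ x2_mem_Jid
  · exact Ideal.mul_mem_right _ _ xy_mem_Jid
  · exact Ideal.mul_mem_right _ _ y3_mem_Jid

lemma mono_smul (a b : ℕ) (c : ℂ) :
    MvPowerSeries.monomial (M a b) c = c • (Xv ^ a * Yv ^ b) := by
  rw [Xv_pow_mul_Yv_pow, ← (MvPowerSeries.monomial (R := ℂ) (M a b)).map_smul, smul_eq_mul, mul_one]

lemma mono00 (c : ℂ) : MvPowerSeries.monomial (M 0 0) c = c • (1 : R2) := by
  rw [mono_smul]; norm_num
lemma mono10 (c : ℂ) : MvPowerSeries.monomial (M 1 0) c = c • Xv := by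
  rw [mono_smul]; norm_num
lemma mono01 (c : ℂ) : MvPowerSeries.monomial (M 0 1) c = c • Yv := by
  rw [mono_smul]; norm_num
lemma mono02 (c : ℂ) : MvPowerSeries.monomial (M 0 2) c = c • Yv ^ 2 := by
  rw [mono_smul]; norm_num

lemma decomp' (f : R2) :
    f - (MvPowerSeries.coeff (M 0 0) f • 1 + MvPowerSeries.coeff (M 1 0) f • Xv
      + MvPowerSeries.coeff (M 0 1) f • Yv + MvPowerSeries.coeff (M 0 2) f • Yv ^ 2)
      ∈ Jid := by
  have := decomp f
  rwa [mono00, mono10, mono01, mono02] at this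

/-- coefficients of elements of `Jid` vanish in low degrees -/
lemma Jid_coeff {f : R2} (hf : f ∈ Jid) :
    ∀ ν : Fin 2 →₀ ℕ, 2 * ν 0 + ν 1 ≤ 2 → MvPowerSeries.coeff ν f = 0 := by
  classical
  refine Submodule.span_induction ?_ ?_ ?_ ?_ hf
  · rintro x hx
    simp only [Set.mem_insert_iff, Set.mem_singleton_iff] at hx
    have key : ∀ (a b : ℕ) (ν : Fin 2 →₀ ℕ), 2 * ν 0 + ν 1 ≤ 2 → ¬ (2 * a + b ≤ 2) →
        MvPowerSeries.coeff ν (Xv ^ a * Yv ^ b) = 0 := by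
      intro a b ν hν hab
      rw [Xv_pow_mul_Yv_pow, MvPowerSeries.coeff_monomial, if_neg]
      rintro rfl
      rw [M_apply0, M_apply1] at hν
      omega
    rcases hx with rfl | rfl | rfl
    · intro ν hν
      have := key 2 0 ν hν (by omega); simpa using this
    · intro ν hν
      have := key 1 1 ν hν (by omega); simpa using this
    · intro ν hν
      have := key 0 3 ν hν (by omega); simpa using this
  · intro ν _; simp
  · intro x y _ _ hx hy ν hν
    rw [map_add, hx ν hν, hy ν hν, add_zero]
  · intro a x _ hx ν hν
    rw [smul_eq_mul, MvPowerSeries.coeff_mul]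
    refine Finset.sum_eq_zero ?_
    rintro ⟨α, β⟩ hmem
    have hab : α + β = ν := Finset.HasAntidiagonal.mem_antidiagonal.mp hmem
    have h0 : α 0 + β 0 = ν 0 := by rw [← hab]; simp
    have h1 : α 1 + β 1 = ν 1 := by rw [← hab]; simp
    have : MvPowerSeries.coeff β x = 0 := hx β (by omega)
    simp [this]

/-- Collapse: if all strictly smaller coefficients of `g` vanish then
`coeff μ (p*g) = p₀ · gμ`. -/
lemma coeff_mul_collapse (p g : R2) (μ : Fin 2 →₀ ℕ)
    (h : ∀ ν, ν ≤ μ → ν ≠ μ → MvPowerSeries.coeff ν g = 0) :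
    MvPowerSeries.coeff μ (p * g) =
      MvPowerSeries.coeff 0 p * MvPowerSeries.coeff μ g := by
  classical
  rw [MvPowerSeries.coeff_mul]
  refine Finset.sum_eq_single (0, μ) ?_ ?_
  · rintro ⟨α, β⟩ hmem hne
    have hab : α + β = μ := Finset.HasAntidiagonal.mem_antidiagonal.mp hmem
    by_cases hβ : β = μ
    · subst hβ
      have : α = 0 := add_right_cancel (by simpa using hab : α + β = 0 + β)
      exact absurd (by simp [this]) hne
    · have hle : β ≤ μ := hab ▸ le_add_self
      simp [h β hle hβ]
  · intro h'; exact absurd (Finset.HasAntidiagonal.mem_antidiagonal.mpr (zero_add μ)) h'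

lemma card3 {α : Type*} (a b c : α) : #({a, b, c} : Set α) ≤ 3 := by
  refine (Cardinal.mk_insert_le).trans ?_
  have h2 : #({b, c} : Set α) ≤ 2 := by
    refine (Cardinal.mk_insert_le).trans ?_
    rw [Cardinal.mk_singleton]; norm_num
  calc #({b, c} : Set α) + 1 ≤ 2 + 1 := by gcongr
    _ = 3 := by norm_num

lemma card2 {α : Type*} (a b : α) : #({a, b} : Set α) ≤ 2 := by
  refine (Cardinal.mk_insert_le).trans ?_
  rw [Cardinal.mk_singleton]; norm_num

lemma rank_le_three {Mo : Type*} [AddCommGroup Mo] [Module ℂ Mo] (a b c : Mo)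
    (h : ∀ z : Mo, z ∈ Submodule.span ℂ ({a, b, c} : Set Mo)) :
    Module.rank ℂ Mo ≤ 3 := by
  have h1 : Submodule.span ℂ ({a, b, c} : Set Mo) = ⊤ := Submodule.eq_top_iff'.mpr h
  have h2 := rank_span_le (R := ℂ) ({a, b, c} : Set Mo)
  rw [h1, rank_top] at h2
  exact h2.trans (card3 a b c)

lemma rank_le_two {Mo : Type*} [AddCommGroup Mo] [Module ℂ Mo] (a b : Mo)
    (h : ∀ z : Mo, z ∈ Submodule.span ℂ ({a, b} : Set Mo)) :
    Module.rank ℂ Mo ≤ 2 := by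
  have h1 : Submodule.span ℂ ({a, b} : Set Mo) = ⊤ := Submodule.eq_top_iff'.mpr h
  have h2 := rank_span_le (R := ℂ) ({a, b} : Set Mo)
  rw [h1, rank_top] at h2
  exact h2.trans (card2 a b)

/-- ℂ³ cannot be spanned by two vectors. -/
lemma no_span_two (u v : Fin 3 → ℂ)
    (h0 : (![1,0,0] : Fin 3 → ℂ) ∈ Submodule.span ℂ ({u, v} : Set (Fin 3 → ℂ)))
    (h1 : (![0,1,0] : Fin 3 → ℂ) ∈ Submodule.span ℂ ({u, v} : Set (Fin 3 → ℂ)))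
    (h2 : (![0,0,1] : Fin 3 → ℂ) ∈ Submodule.span ℂ ({u, v} : Set (Fin 3 → ℂ))) :
    False := by
  have htop : ∀ w : Fin 3 → ℂ, w ∈ Submodule.span ℂ ({u, v} : Set (Fin 3 → ℂ)) := by
    intro w
    have hw : w = w 0 • ![1,0,0] + w 1 • ![0,1,0] + w 2 • ![0,0,1] := by
      funext i; fin_cases i <;> simp
    rw [hw]
    exact add_mem (add_mem (Submodule.smul_mem _ _ h0) (Submodule.smul_mem _ _ h1))
      (Submodule.smul_mem _ _ h2)
  have hle := rank_le_two u v htop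
  rw [rank_fin_fun] at hle
  have : (3 : ℕ) ≤ (2 : ℕ) := by exact_mod_cast hle
  omega

noncomputable def qk (K : Ideal R2) : R2 →ₐ[ℂ] R2 ⧸ K := Ideal.Quotient.mkₐ ℂ K

lemma qk_eq_zero {K : Ideal R2} {f : R2} (hf : f ∈ K) : qk K f = 0 := by
  rw [qk, Ideal.Quotient.mkₐ_eq_mk, Ideal.Quotient.eq_zero_iff_mem]; exact hf

lemma quot_span4 (K : Ideal R2) (hJK : Jid ≤ K) (z : R2 ⧸ K) :
    z ∈ Submodule.span ℂ ({qk K 1, qk K Xv, qk K Yv, qk K (Yv^2)} : Set (R2 ⧸ K)) := by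
  obtain ⟨f, rfl⟩ := Ideal.Quotient.mkₐ_surjective ℂ K z
  rw [show Ideal.Quotient.mkₐ ℂ K f = qk K f from rfl]
  have hd := decomp' f
  have h0 : qk K f = MvPowerSeries.coeff (M 0 0) f • qk K 1
      + MvPowerSeries.coeff (M 1 0) f • qk K Xv
      + MvPowerSeries.coeff (M 0 1) f • qk K Yv
      + MvPowerSeries.coeff (M 0 2) f • qk K (Yv^2) := by
    have hz := qk_eq_zero (hJK hd)
    rw [map_sub] at hz
    rw [eq_of_sub_eq_zero hz]
    simp [map_add, map_smul]
  rw [h0]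
  refine add_mem (add_mem (add_mem ?_ ?_) ?_) ?_
  · exact Submodule.smul_mem _ _ (Submodule.subset_span (Set.mem_insert _ _))
  · exact Submodule.smul_mem _ _ (Submodule.subset_span
      (Set.mem_insert_of_mem _ (Set.mem_insert _ _)))
  · exact Submodule.smul_mem _ _ (Submodule.subset_span
      (Set.mem_insert_of_mem _ (Set.mem_insert_of_mem _ (Set.mem_insert _ _))))
  · exact Submodule.smul_mem _ _ (Submodule.subset_span
      (Set.mem_insert_of_mem _ (Set.mem_insert_of_mem _ (Set.mem_insert_of_mem _ rfl))))

lemma smul_mem_ideal (K : Ideal R2) (c : ℂ) {z : R2} (hz : z ∈ K) : c • z ∈ K := by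
  rw [Algebra.smul_def]; exact K.mul_mem_left _ hz

lemma rank_contra {K : Ideal R2} (hdim : (3 : Cardinal) ≤ Module.rank ℂ (R2 ⧸ K))
    (a b : R2 ⧸ K) (h : ∀ z : R2 ⧸ K, z ∈ Submodule.span ℂ ({a, b} : Set (R2 ⧸ K))) :
    False := by
  have hle := rank_le_two a b h
  have : (3 : ℕ) ≤ (2 : ℕ) := by exact_mod_cast hdim.trans hle
  omega

/-- Case 1: if some element of `I` has nonzero `y`-coefficient, contradiction. -/
lemma case1 (I : Ideal R2) (hJI : Jid ≤ I)
    (hdim : (3 : Cardinal) ≤ Module.rank ℂ (R2 ⧸ I))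
    (hc00 : ∀ f ∈ I, MvPowerSeries.coeff (M 0 0) f = 0)
    (w : R2) (hw : w ∈ I) (hc : MvPowerSeries.coeff (M 0 1) w ≠ 0) : False := by
  set b := MvPowerSeries.coeff (M 1 0) w with hbdef
  set c := MvPowerSeries.coeff (M 0 1) w with hcdef
  set d := MvPowerSeries.coeff (M 0 2) w with hddef
  have hj : w - (b • Xv + c • Yv + d • Yv ^ 2) ∈ Jid := by
    have := decomp' w
    rwa [hc00 w hw, zero_smul, zero_add] at this
  have hY2 : Yv ^ 2 ∈ I := by
    have h1 : c • Yv ^ 2 = Yv * w - b • (Xv * Yv) - d • Yv ^ 3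
        - Yv * (w - (b • Xv + c • Yv + d • Yv ^ 2)) := by
      simp only [Algebra.smul_def]; ring
    have h2 : c • Yv ^ 2 ∈ I := by
      rw [h1]
      exact sub_mem (sub_mem (sub_mem (I.mul_mem_left _ hw)
        (smul_mem_ideal I _ (hJI xy_mem_Jid))) (smul_mem_ideal I _ (hJI y3_mem_Jid)))
        (I.mul_mem_left _ (hJI hj))
    have : Yv ^ 2 = c⁻¹ • (c • Yv ^ 2) := by
      rw [smul_smul, inv_mul_cancel₀ hc, one_smul]
    rw [this]; exact smul_mem_ideal I _ h2
  have hrel : b • qk I Xv + c • qk I Yv = 0 := by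
    have heq : b • Xv + c • Yv
        = w - d • Yv ^ 2 - (w - (b • Xv + c • Yv + d • Yv ^ 2)) := by abel
    have hmem : b • Xv + c • Yv ∈ I := by
      rw [heq]
      exact sub_mem (sub_mem hw (smul_mem_ideal I _ hY2)) (hJI hj)
    have := qk_eq_zero hmem
    rwa [map_add, map_smul, map_smul] at this
  have hsp : ∀ z : R2 ⧸ I, z ∈ Submodule.span ℂ ({qk I 1, qk I Xv} : Set (R2 ⧸ I)) := by
    intro z
    have h4 := quot_span4 I hJI z
    have hsub : ({qk I 1, qk I Xv, qk I Yv, qk I (Yv^2)} : Set (R2 ⧸ I))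
        ⊆ (Submodule.span ℂ ({qk I 1, qk I Xv} : Set (R2 ⧸ I)) : Set (R2 ⧸ I)) := by
      rintro t ht
      simp only [Set.mem_insert_iff, Set.mem_singleton_iff] at ht
      rcases ht with rfl | rfl | rfl | rfl
      · exact Submodule.subset_span (Set.mem_insert _ _)
      · exact Submodule.subset_span (Set.mem_insert_of_mem _ rfl)
      · have h5 : qk I Yv = -((c⁻¹ * b) • qk I Xv) := by
          have h6 : c • qk I Yv = -(b • qk I Xv) := eq_neg_of_add_eq_zero_right hrel
          have h7 : qk I Yv = c⁻¹ • (c • qk I Yv) := by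
            rw [smul_smul, inv_mul_cancel₀ hc, one_smul]
          rw [h7, h6, smul_neg, smul_smul]
        rw [h5]
        exact neg_mem (Submodule.smul_mem _ _
          (Submodule.subset_span (Set.mem_insert_of_mem _ rfl)))
      · rw [qk_eq_zero hY2]; exact zero_mem _
    exact Submodule.span_le.mpr hsub h4
  exact rank_contra hdim _ _ hsp

end Stmt6Aux

namespace Stmt6Aux
open MvPowerSeries Finsupp Cardinal

/-- Case 2: some element of `I` has nonzero `x`-coefficient; this yields the conclusion. -/
lemma case2 (I : Ideal R2) (hJI : Jid ≤ I)
    (hdim : (3 : Cardinal) ≤ Module.rank ℂ (R2 ⧸ I))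
    (hc00 : ∀ f ∈ I, MvPowerSeries.coeff (M 0 0) f = 0)
    (hc01 : ∀ f ∈ I, MvPowerSeries.coeff (M 0 1) f = 0)
    (w : R2) (hw : w ∈ I) (hb : MvPowerSeries.coeff (M 1 0) w ≠ 0) :
    Module.rank ℂ (R2 ⧸ I) = 3 ∧
      ∃ u v : R2, Ideal.span {u, v} = mIdeal ∧ I = Ideal.span {u, v ^ 3} := by
  classical
  set b := MvPowerSeries.coeff (M 1 0) w with hbdef
  set d0 : ℂ := b⁻¹ * MvPowerSeries.coeff (M 0 2) w with hd0def
  set u : R2 := Xv + d0 • Yv ^ 2 with hudef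
  have hj : w - (b • Xv + MvPowerSeries.coeff (M 0 2) w • Yv ^ 2) ∈ Jid := by
    have := decomp' w
    rwa [hc00 w hw, hc01 w hw, zero_smul, zero_smul, zero_add, add_zero] at this
  have huI : u ∈ I := by
    have hu : u = b⁻¹ • w
        - b⁻¹ • (w - (b • Xv + MvPowerSeries.coeff (M 0 2) w • Yv ^ 2)) := by
      rw [← smul_sub, sub_sub_cancel, smul_add, smul_smul, inv_mul_cancel₀ hb, one_smul, hudef,
        smul_smul, hd0def]
    rw [hu]
    exact sub_mem (smul_mem_ideal I _ hw) (smul_mem_ideal I _ (hJI hj))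
  set K : Ideal R2 := Ideal.span {u, Yv ^ 3} with hKdef
  have huK : u ∈ K := Ideal.subset_span (Set.mem_insert _ _)
  have hy3K : Yv ^ 3 ∈ K := Ideal.subset_span (Set.mem_insert_of_mem _ rfl)
  have hxyK : Xv * Yv ∈ K := by
    have heq : Xv * Yv = u * Yv - d0 • (Yv ^ 3) := by
      rw [hudef]; simp only [Algebra.smul_def]; ring
    rw [heq]
    exact sub_mem (K.mul_mem_right _ huK) (smul_mem_ideal K _ hy3K)
  have hx2K : Xv ^ 2 ∈ K := by
    have heq : Xv ^ 2 = u * (u - (2 * d0) • Yv ^ 2) + (d0 * d0) • (Yv * Yv ^ 3) := by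
      rw [hudef]; simp only [Algebra.smul_def, map_mul, map_ofNat]; ring
    rw [heq]
    exact add_mem (K.mul_mem_right _ huK) (smul_mem_ideal K _ (K.mul_mem_left _ hy3K))
  have hJK : Jid ≤ K := by
    rw [Jid, Ideal.span_le]
    rintro z hz
    simp only [Set.mem_insert_iff, Set.mem_singleton_iff] at hz
    rcases hz with rfl | rfl | rfl
    · exact hx2K
    · exact hxyK
    · exact hy3K
  have hXeq : Xv = u - d0 • Yv ^ 2 := by rw [hudef]; abel
  have hY2 : Yv ^ 2 ∉ I := by
    intro hY2I
    have hXI : Xv ∈ I := by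
      rw [hXeq]; exact sub_mem huI (smul_mem_ideal I _ hY2I)
    have hsp : ∀ z : R2 ⧸ I, z ∈ Submodule.span ℂ ({qk I 1, qk I Yv} : Set (R2 ⧸ I)) := by
      intro z
      have h4 := quot_span4 I hJI z
      have hsub : ({qk I 1, qk I Xv, qk I Yv, qk I (Yv^2)} : Set (R2 ⧸ I))
          ⊆ (Submodule.span ℂ ({qk I 1, qk I Yv} : Set (R2 ⧸ I)) : Set (R2 ⧸ I)) := by
        rintro t ht
        simp only [Set.mem_insert_iff, Set.mem_singleton_iff] at ht
        rcases ht with rfl | rfl | rfl | rfl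
        · exact Submodule.subset_span (Set.mem_insert _ _)
        · rw [qk_eq_zero hXI]; exact zero_mem _
        · exact Submodule.subset_span (Set.mem_insert_of_mem _ rfl)
        · rw [qk_eq_zero hY2I]; exact zero_mem _
      exact Submodule.span_le.mpr hsub h4
    exact rank_contra hdim _ _ hsp
  have hIK : I = K := by
    refine le_antisymm ?_ ?_
    · intro f hf
      set bf := MvPowerSeries.coeff (M 1 0) f with hbfdef
      set df := MvPowerSeries.coeff (M 0 2) f with hdfdef
      have hj2 : f - (bf • Xv + df • Yv ^ 2) ∈ Jid := by
        have := decomp' f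
        rwa [hc00 f hf, hc01 f hf, zero_smul, zero_smul, zero_add, add_zero] at this
      have h5 : f - bf • u - (df - bf * d0) • Yv ^ 2 ∈ Jid := by
        have heq : f - bf • u - (df - bf * d0) • Yv ^ 2 = f - (bf • Xv + df • Yv ^ 2) := by
          rw [hudef]; simp only [Algebra.smul_def, map_sub, map_mul]; ring
        rw [heq]; exact hj2
      have heI : (df - bf * d0) • Yv ^ 2 ∈ I := by
        have heq : (df - bf * d0) • Yv ^ 2
            = f - bf • u - (f - bf • u - (df - bf * d0) • Yv ^ 2) := by abel
        rw [heq]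
        exact sub_mem (sub_mem hf (smul_mem_ideal I _ huI)) (hJI h5)
      have he0 : df - bf * d0 = 0 := by
        by_contra hne
        refine hY2 ?_
        have : Yv ^ 2 = (df - bf * d0)⁻¹ • ((df - bf * d0) • Yv ^ 2) := by
          rw [smul_smul, inv_mul_cancel₀ hne, one_smul]
        rw [this]
        exact smul_mem_ideal I _ heI
      have hfeq : f = bf • u + (f - bf • u - (df - bf * d0) • Yv ^ 2) := by
        rw [he0, zero_smul, sub_zero]; abel
      rw [hfeq]
      exact add_mem (smul_mem_ideal K _ huK) (hJK h5)
    · rw [hKdef, Ideal.span_le]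
      rintro z hz
      simp only [Set.mem_insert_iff, Set.mem_singleton_iff] at hz
      rcases hz with rfl | rfl
      · exact huI
      · exact hJI y3_mem_Jid
  have hsp3 : ∀ z : R2 ⧸ I,
      z ∈ Submodule.span ℂ ({qk I 1, qk I Yv, qk I (Yv ^ 2)} : Set (R2 ⧸ I)) := by
    intro z
    have h4 := quot_span4 I hJI z
    have hsub : ({qk I 1, qk I Xv, qk I Yv, qk I (Yv^2)} : Set (R2 ⧸ I))
        ⊆ (Submodule.span ℂ ({qk I 1, qk I Yv, qk I (Yv ^ 2)} : Set (R2 ⧸ I))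
          : Set (R2 ⧸ I)) := by
      rintro t ht
      simp only [Set.mem_insert_iff, Set.mem_singleton_iff] at ht
      rcases ht with rfl | rfl | rfl | rfl
      · exact Submodule.subset_span (Set.mem_insert _ _)
      · have h6 : qk I Xv = -(d0 • qk I (Yv ^ 2)) := by
          have h7 : qk I u = 0 := qk_eq_zero huI
          rw [hXeq, map_sub, h7, map_smul, zero_sub]
        rw [h6]
        exact neg_mem (Submodule.smul_mem _ _ (Submodule.subset_span
          (Set.mem_insert_of_mem _ (Set.mem_insert_of_mem _ rfl))))
      · exact Submodule.subset_span (Set.mem_insert_of_mem _ (Set.mem_insert _ _))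
      · exact Submodule.subset_span
          (Set.mem_insert_of_mem _ (Set.mem_insert_of_mem _ rfl))
    exact Submodule.span_le.mpr hsub h4
  have hrank : Module.rank ℂ (R2 ⧸ I) = 3 :=
    le_antisymm (rank_le_three _ _ _ hsp3) hdim
  have hm : Ideal.span {u, Yv} = mIdeal := by
    rw [mIdeal]
    refine le_antisymm ?_ ?_
    · rw [Ideal.span_le]
      rintro z hz
      simp only [Set.mem_insert_iff, Set.mem_singleton_iff] at hz
      have hYm : Yv ∈ Ideal.span ({Xv, Yv} : Set R2) :=
        Ideal.subset_span (Set.mem_insert_of_mem _ rfl)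
      rcases hz with rfl | rfl
      · rw [hudef]
        refine add_mem (Ideal.subset_span (Set.mem_insert _ _)) ?_
        refine smul_mem_ideal _ _ ?_
        rw [sq]
        exact Ideal.mul_mem_left _ _ hYm
      · exact hYm
    · rw [Ideal.span_le]
      rintro z hz
      simp only [Set.mem_insert_iff, Set.mem_singleton_iff] at hz
      have hYm : Yv ∈ Ideal.span ({u, Yv} : Set R2) :=
        Ideal.subset_span (Set.mem_insert_of_mem _ rfl)
      rcases hz with rfl | rfl
      · rw [hXeq]
        refine sub_mem (Ideal.subset_span (Set.mem_insert _ _)) ?_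
        refine smul_mem_ideal _ _ ?_
        rw [sq]
        exact Ideal.mul_mem_left _ _ hYm
      · exact hYm
  exact ⟨hrank, u, Yv, hm, hIK⟩

end Stmt6Aux

namespace Stmt6Aux
open MvPowerSeries Finsupp Cardinal

lemma hlow_aux {a b : ℕ} {ν : Fin 2 →₀ ℕ} (hle : ν ≤ M a b) (hne : ν ≠ M a b) :
    ν 0 ≤ a ∧ ν 1 ≤ b ∧ ¬(ν 0 = a ∧ ν 1 = b) :=
  ⟨(le_M_iff.mp hle).1, (le_M_iff.mp hle).2,
    fun hc => hne (by rw [fin2_eq ν, hc.1, hc.2])⟩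

lemma vec_in_span (I : Ideal R2) (g h : R2) (hI : I = Ideal.span {g, h})
    (μ : Fin 3 → (Fin 2 →₀ ℕ))
    (hlow : ∀ i : Fin 3, ∀ f ∈ I, ∀ ν, ν ≤ μ i → ν ≠ μ i → MvPowerSeries.coeff ν f = 0)
    (t : R2) (ht : t ∈ I) :
    (fun i => MvPowerSeries.coeff (μ i) t) ∈ Submodule.span ℂ
      ({fun i => MvPowerSeries.coeff (μ i) g,
        fun i => MvPowerSeries.coeff (μ i) h} : Set (Fin 3 → ℂ)) := by
  have hgI : g ∈ I := hI ▸ Ideal.subset_span (Set.mem_insert _ _)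
  have hhI : h ∈ I := hI ▸ Ideal.subset_span (Set.mem_insert_of_mem _ rfl)
  rw [hI, Ideal.mem_span_pair] at ht
  obtain ⟨p, q, hpq⟩ := ht
  rw [Submodule.mem_span_pair]
  refine ⟨MvPowerSeries.coeff 0 p, MvPowerSeries.coeff 0 q, ?_⟩
  funext i
  simp only [Pi.add_apply, Pi.smul_apply, smul_eq_mul]
  rw [← hpq, map_add, coeff_mul_collapse p g _ (fun ν h1 h2 => hlow i g hgI ν h1 h2),
    coeff_mul_collapse q h _ (fun ν h1 h2 => hlow i h hhI ν h1 h2)]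

/-- Case 3: all elements of `I` have vanishing `x`- and `y`-coefficients;
this contradicts the two-generatedness. -/
lemma case3 (I : Ideal R2) (g h : R2) (hI : I = Ideal.span {g, h}) (hJI : Jid ≤ I)
    (hx2 : Xv ^ 2 ∈ I) (hxy : Xv * Yv ∈ I) (hy3 : Yv ^ 3 ∈ I)
    (hc00 : ∀ f ∈ I, MvPowerSeries.coeff (M 0 0) f = 0)
    (hc10 : ∀ f ∈ I, MvPowerSeries.coeff (M 1 0) f = 0)
    (hc01 : ∀ f ∈ I, MvPowerSeries.coeff (M 0 1) f = 0) : False := by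
  classical
  have key : ∀ f ∈ I, ∀ a b : ℕ,
      (a = 0 ∧ b = 0) ∨ (a = 1 ∧ b = 0) ∨ (a = 0 ∧ b = 1) →
      MvPowerSeries.coeff (M a b) f = 0 := by
    rintro f hf a b (⟨rfl, rfl⟩ | ⟨rfl, rfl⟩ | ⟨rfl, rfl⟩)
    exacts [hc00 f hf, hc10 f hf, hc01 f hf]
  have hcoeff_of : ∀ (a b : ℕ) (t : R2), t = MvPowerSeries.monomial (M a b) 1 →
      ∀ c d : ℕ, MvPowerSeries.coeff (M c d) t = if c = a ∧ d = b then 1 else 0 := by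
    rintro a b t rfl c d
    rw [MvPowerSeries.coeff_monomial]
    by_cases hcd : c = a ∧ d = b
    · rw [if_pos hcd, if_pos (M_eq_iff.mpr hcd)]
    · rw [if_neg hcd, if_neg (fun hM => hcd (M_eq_iff.mp hM))]
  by_cases h3a : ∃ w ∈ I, MvPowerSeries.coeff (M 0 2) w ≠ 0
  · -- Subcase 3a : `y² ∈ I`; then `I = m²`, but `m²` needs three generators.
    obtain ⟨w, hw, hd⟩ := h3a
    have hY2 : Yv ^ 2 ∈ I := by
      have hj : w - MvPowerSeries.coeff (M 0 2) w • Yv ^ 2 ∈ Jid := by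
        have := decomp' w
        rwa [hc00 w hw, hc10 w hw, hc01 w hw, zero_smul, zero_smul, zero_smul, zero_add,
          zero_add, zero_add] at this
      have hmem : MvPowerSeries.coeff (M 0 2) w • Yv ^ 2 ∈ I := by
        have heq : MvPowerSeries.coeff (M 0 2) w • Yv ^ 2
            = w - (w - MvPowerSeries.coeff (M 0 2) w • Yv ^ 2) := by abel
        rw [heq]; exact sub_mem hw (hJI hj)
      have heq2 : Yv ^ 2 = (MvPowerSeries.coeff (M 0 2) w)⁻¹
          • (MvPowerSeries.coeff (M 0 2) w • Yv ^ 2) := by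
        rw [smul_smul, inv_mul_cancel₀ hd, one_smul]
      rw [heq2]; exact smul_mem_ideal I _ hmem
    have hlow : ∀ i : Fin 3, ∀ f ∈ I, ∀ ν,
        ν ≤ (![M 2 0, M 1 1, M 0 2] : Fin 3 → (Fin 2 →₀ ℕ)) i →
        ν ≠ (![M 2 0, M 1 1, M 0 2] : Fin 3 → (Fin 2 →₀ ℕ)) i →
        MvPowerSeries.coeff ν f = 0 := by
      intro i f hf ν hle hne
      rw [fin2_eq ν]
      refine key f hf _ _ ?_
      fin_cases i
      · obtain ⟨h1, h2, h3⟩ := hlow_aux (a := 2) (b := 0) hle hne; omega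
      · obtain ⟨h1, h2, h3⟩ := hlow_aux (a := 1) (b := 1) hle hne; omega
      · obtain ⟨h1, h2, h3⟩ := hlow_aux (a := 0) (b := 2) hle hne; omega
    have hg := vec_in_span I g h hI _ hlow (Xv ^ 2) hx2
    have hg2 := vec_in_span I g h hI _ hlow (Xv * Yv) hxy
    have hg3 := vec_in_span I g h hI _ hlow (Yv ^ 2) hY2
    have e1 : (fun i => MvPowerSeries.coeff
        ((![M 2 0, M 1 1, M 0 2] : Fin 3 → (Fin 2 →₀ ℕ)) i) (Xv ^ 2)) = ![1,0,0] := by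
      funext i; fin_cases i
      · show MvPowerSeries.coeff (M 2 0) (Xv ^ 2) = 1
        rw [hcoeff_of 2 0 _ Xv_sq]; norm_num
      · show MvPowerSeries.coeff (M 1 1) (Xv ^ 2) = 0
        rw [hcoeff_of 2 0 _ Xv_sq]; norm_num
      · show MvPowerSeries.coeff (M 0 2) (Xv ^ 2) = 0
        rw [hcoeff_of 2 0 _ Xv_sq]; norm_num
    have e2 : (fun i => MvPowerSeries.coeff
        ((![M 2 0, M 1 1, M 0 2] : Fin 3 → (Fin 2 →₀ ℕ)) i) (Xv * Yv)) = ![0,1,0] := by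
      funext i; fin_cases i
      · show MvPowerSeries.coeff (M 2 0) (Xv * Yv) = 0
        rw [hcoeff_of 1 1 _ XvYv]; norm_num
      · show MvPowerSeries.coeff (M 1 1) (Xv * Yv) = 1
        rw [hcoeff_of 1 1 _ XvYv]; norm_num
      · show MvPowerSeries.coeff (M 0 2) (Xv * Yv) = 0
        rw [hcoeff_of 1 1 _ XvYv]; norm_num
    have e3 : (fun i => MvPowerSeries.coeff
        ((![M 2 0, M 1 1, M 0 2] : Fin 3 → (Fin 2 →₀ ℕ)) i) (Yv ^ 2)) = ![0,0,1] := by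
      funext i; fin_cases i
      · show MvPowerSeries.coeff (M 2 0) (Yv ^ 2) = 0
        rw [hcoeff_of 0 2 _ Yv_sq]; norm_num
      · show MvPowerSeries.coeff (M 1 1) (Yv ^ 2) = 0
        rw [hcoeff_of 0 2 _ Yv_sq]; norm_num
      · show MvPowerSeries.coeff (M 0 2) (Yv ^ 2) = 1
        rw [hcoeff_of 0 2 _ Yv_sq]; norm_num
    rw [e1] at hg; rw [e2] at hg2; rw [e3] at hg3
    exact no_span_two _ _ hg hg2 hg3
  · -- Subcase 3b : `I = J`, but `J` needs three generators.
    push_neg at h3a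
    have key' : ∀ f ∈ I, ∀ a b : ℕ,
        (a = 0 ∧ b = 0) ∨ (a = 1 ∧ b = 0) ∨ (a = 0 ∧ b = 1) ∨ (a = 0 ∧ b = 2) →
        MvPowerSeries.coeff (M a b) f = 0 := by
      rintro f hf a b (hab | hab | hab | ⟨rfl, rfl⟩)
      · exact key f hf a b (Or.inl hab)
      · exact key f hf a b (Or.inr (Or.inl hab))
      · exact key f hf a b (Or.inr (Or.inr hab))
      · exact h3a f hf
    have hlow : ∀ i : Fin 3, ∀ f ∈ I, ∀ ν,
        ν ≤ (![M 2 0, M 1 1, M 0 3] : Fin 3 → (Fin 2 →₀ ℕ)) i →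
        ν ≠ (![M 2 0, M 1 1, M 0 3] : Fin 3 → (Fin 2 →₀ ℕ)) i →
        MvPowerSeries.coeff ν f = 0 := by
      intro i f hf ν hle hne
      rw [fin2_eq ν]
      refine key' f hf _ _ ?_
      fin_cases i
      · obtain ⟨h1, h2, h3⟩ := hlow_aux (a := 2) (b := 0) hle hne; omega
      · obtain ⟨h1, h2, h3⟩ := hlow_aux (a := 1) (b := 1) hle hne; omega
      · obtain ⟨h1, h2, h3⟩ := hlow_aux (a := 0) (b := 3) hle hne; omega
    have hg := vec_in_span I g h hI _ hlow (Xv ^ 2) hx2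
    have hg2 := vec_in_span I g h hI _ hlow (Xv * Yv) hxy
    have hg3 := vec_in_span I g h hI _ hlow (Yv ^ 3) hy3
    have e1 : (fun i => MvPowerSeries.coeff
        ((![M 2 0, M 1 1, M 0 3] : Fin 3 → (Fin 2 →₀ ℕ)) i) (Xv ^ 2)) = ![1,0,0] := by
      funext i; fin_cases i
      · show MvPowerSeries.coeff (M 2 0) (Xv ^ 2) = 1
        rw [hcoeff_of 2 0 _ Xv_sq]; norm_num
      · show MvPowerSeries.coeff (M 1 1) (Xv ^ 2) = 0
        rw [hcoeff_of 2 0 _ Xv_sq]; norm_num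
      · show MvPowerSeries.coeff (M 0 3) (Xv ^ 2) = 0
        rw [hcoeff_of 2 0 _ Xv_sq]; norm_num
    have e2 : (fun i => MvPowerSeries.coeff
        ((![M 2 0, M 1 1, M 0 3] : Fin 3 → (Fin 2 →₀ ℕ)) i) (Xv * Yv)) = ![0,1,0] := by
      funext i; fin_cases i
      · show MvPowerSeries.coeff (M 2 0) (Xv * Yv) = 0
        rw [hcoeff_of 1 1 _ XvYv]; norm_num
      · show MvPowerSeries.coeff (M 1 1) (Xv * Yv) = 1
        rw [hcoeff_of 1 1 _ XvYv]; norm_num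
      · show MvPowerSeries.coeff (M 0 3) (Xv * Yv) = 0
        rw [hcoeff_of 1 1 _ XvYv]; norm_num
    have e3 : (fun i => MvPowerSeries.coeff
        ((![M 2 0, M 1 1, M 0 3] : Fin 3 → (Fin 2 →₀ ℕ)) i) (Yv ^ 3)) = ![0,0,1] := by
      funext i; fin_cases i
      · show MvPowerSeries.coeff (M 2 0) (Yv ^ 3) = 0
        rw [hcoeff_of 0 3 _ Yv_cube]; norm_num
      · show MvPowerSeries.coeff (M 1 1) (Yv ^ 3) = 0
        rw [hcoeff_of 0 3 _ Yv_cube]; norm_num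
      · show MvPowerSeries.coeff (M 0 3) (Yv ^ 3) = 1
        rw [hcoeff_of 0 3 _ Yv_cube]; norm_num
    rw [e1] at hg; rw [e2] at hg2; rw [e3] at hg3
    exact no_span_two _ _ hg hg2 hg3

end Stmt6Aux

open Stmt6Aux in
/-- If `I` is an ideal of `R = ℂ⟦x,y⟧` generated by two elements with
`x² ∈ I`, `xy ∈ I`, `y³ ∈ I` and `dim_ℂ(R/I) ≥ 3`, then `dim_ℂ(R/I) = 3`
and there is a regular system of parameters `u, v` with `I = ⟨u, v³⟩`. -/
theorem stmt6 (I : Ideal R2) (hgen : ∃ g h : R2, I = Ideal.span {g, h})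
    (hx2 : Xv ^ 2 ∈ I) (hxy : Xv * Yv ∈ I) (hy3 : Yv ^ 3 ∈ I)
    (hdim : (3 : Cardinal) ≤ Module.rank ℂ (R2 ⧸ I)) :
    Module.rank ℂ (R2 ⧸ I) = 3 ∧
    ∃ u v : R2, Ideal.span {u, v} = mIdeal ∧ I = Ideal.span {u, v ^ 3} := by
  classical
  obtain ⟨g, h, hI⟩ := hgen
  have hJI : Jid ≤ I := by
    rw [Jid, Ideal.span_le]
    rintro z hz
    simp only [Set.mem_insert_iff, Set.mem_singleton_iff] at hz
    rcases hz with rfl | rfl | rfl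
    exacts [hx2, hxy, hy3]
  have hne : I ≠ ⊤ := by
    intro htop
    have : Subsingleton (R2 ⧸ I) := Submodule.Quotient.subsingleton_iff.mpr htop
    rw [rank_subsingleton'] at hdim
    have h3 : (3 : ℕ) ≤ 0 := by exact_mod_cast hdim
    omega
  have hc00 : ∀ f ∈ I, MvPowerSeries.coeff (M 0 0) f = 0 := by
    intro f hf
    by_contra hc
    refine hne (Ideal.eq_top_of_isUnit_mem _ hf ?_)
    rw [MvPowerSeries.isUnit_iff_constantCoeff]
    refine isUnit_iff_ne_zero.mpr ?_
    rw [← MvPowerSeries.coeff_zero_eq_constantCoeff_apply]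
    rwa [← M_zero]
  have hc01 : ∀ f ∈ I, MvPowerSeries.coeff (M 0 1) f = 0 := fun f hf => by
    by_contra hc; exact case1 I hJI hdim hc00 f hf hc
  by_cases hcX : ∃ w ∈ I, MvPowerSeries.coeff (M 1 0) w ≠ 0
  · obtain ⟨w, hw, hb⟩ := hcX
    exact case2 I hJI hdim hc00 hc01 w hw hb
  · push_neg at hcX
    exact (case3 I g h hI hJI hx2 hxy hy3 hc00 hcX hc01).elim
end

section
/- Let R = ℂ⟦x,y⟧ with maximal ideal m = ⟨x,y⟩. If I is an ideal of R containing an element g with g ∈ m but g ∉ m² (i.e. an element of order one), and dim_ℂ(R/I) = 3, then there exist u, v ∈ R with ⟨u,v⟩ = m such that I = ⟨u, v³⟩. -/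
open MvPowerSeries Finsupp in
lemma decompXY (φ : R2) (h : MvPowerSeries.constantCoeff (σ := Fin 2) (R := ℂ) φ = 0) :
    ∃ A B : R2, φ = Xv * A + Yv * B ∧
      MvPowerSeries.constantCoeff (σ := Fin 2) (R := ℂ) A = MvPowerSeries.coeff (R := ℂ) (Finsupp.single 0 1) φ ∧
      MvPowerSeries.constantCoeff (σ := Fin 2) (R := ℂ) B = MvPowerSeries.coeff (R := ℂ) (Finsupp.single 1 1) φ := by
  classical
  set A : R2 := fun e => MvPowerSeries.coeff (R := ℂ) (e + Finsupp.single 0 1) φ with hA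
  set B : R2 := fun e => if e 0 = 0 then MvPowerSeries.coeff (R := ℂ) (e + Finsupp.single 1 1) φ else 0 with hB
  have coeffA : ∀ e, MvPowerSeries.coeff (R := ℂ) e A = MvPowerSeries.coeff (R := ℂ) (e + Finsupp.single 0 1) φ :=
    fun e => rfl
  have coeffB : ∀ e, MvPowerSeries.coeff (R := ℂ) e B =
      (if e 0 = 0 then MvPowerSeries.coeff (R := ℂ) (e + Finsupp.single 1 1) φ else 0) := fun e => rfl
  refine ⟨A, B, ?_, ?_, ?_⟩
  · ext d
    rw [map_add, Xv, Yv, X_def, X_def, coeff_monomial_mul, coeff_monomial_mul]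
    by_cases h0 : d 0 = 0
    · by_cases h1 : d 1 = 0
      · have hd : d = 0 := by ext i; fin_cases i <;> assumption
        subst hd
        rw [if_neg, if_neg]
        · simpa [coeff_zero_eq_constantCoeff] using h
        · simp [Finsupp.single_le_iff]
        · simp [Finsupp.single_le_iff]
      · rw [if_neg (by simp [Finsupp.single_le_iff, Nat.one_le_iff_ne_zero, h0]),
          if_pos (by simp [Finsupp.single_le_iff, Nat.one_le_iff_ne_zero, h1])]
        rw [one_mul, coeffB]
        rw [if_pos (by simp [Finsupp.tsub_apply, Finsupp.single_apply, h0])]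
        rw [tsub_add_cancel_of_le (by simp [Finsupp.single_le_iff, Nat.one_le_iff_ne_zero, h1])]
        simp
    · rw [if_pos (by simp [Finsupp.single_le_iff, Nat.one_le_iff_ne_zero, h0])]
      rw [one_mul, coeffA,
        tsub_add_cancel_of_le (by simp [Finsupp.single_le_iff, Nat.one_le_iff_ne_zero, h0])]
      by_cases h1 : d 1 = 0
      · rw [if_neg (by simp [Finsupp.single_le_iff, Nat.one_le_iff_ne_zero, h1])]
        simp
      · rw [if_pos (by simp [Finsupp.single_le_iff, Nat.one_le_iff_ne_zero, h1]), one_mul, coeffB,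
          if_neg (by simp [Finsupp.tsub_apply, Finsupp.single_apply, h0])]
        simp
  · rw [← coeff_zero_eq_constantCoeff, coeffA, zero_add]
  · rw [← coeff_zero_eq_constantCoeff, coeffB, if_pos (by simp), zero_add]

lemma mem_mIdeal_iff (φ : R2) :
    φ ∈ mIdeal ↔ MvPowerSeries.constantCoeff (σ := Fin 2) (R := ℂ) φ = 0 := by
  constructor
  · intro h
    rw [mIdeal, Ideal.mem_span_pair] at h
    obtain ⟨a, b, rfl⟩ := h
    simp [Xv, Yv]
  · intro h
    obtain ⟨A, B, rfl, -, -⟩ := decompXY φ h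
    rw [mIdeal]
    exact add_mem (Ideal.mul_mem_right _ _ (Ideal.subset_span (by simp)))
      (Ideal.mul_mem_right _ _ (Ideal.subset_span (by simp)))

lemma isUnit_R2 (φ : R2) (h : MvPowerSeries.constantCoeff (σ := Fin 2) (R := ℂ) φ ≠ 0) : IsUnit φ :=
  MvPowerSeries.isUnit_iff_constantCoeff.mpr (isUnit_iff_ne_zero.mpr h)

lemma constCoeff_alg (c : ℂ) :
    MvPowerSeries.constantCoeff (σ := Fin 2) (R := ℂ) (algebraMap ℂ R2 c) = c := by
  rw [← MvPowerSeries.c_eq_algebraMap]; exact MvPowerSeries.constantCoeff_C _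

lemma exists_v (g : R2) (hgm : g ∈ mIdeal) (hgm2 : g ∉ mIdeal ^ 2) :
    ∃ v : R2, MvPowerSeries.constantCoeff (σ := Fin 2) (R := ℂ) v = 0 ∧ Ideal.span {g, v} = mIdeal := by
  obtain ⟨A, B, hg, hA, hB⟩ := decompXY g ((mem_mIdeal_iff g).mp hgm)
  have hXm : Xv ∈ mIdeal := Ideal.subset_span (by simp)
  have hYm : Yv ∈ mIdeal := Ideal.subset_span (by simp)
  by_cases hb : MvPowerSeries.coeff (R := ℂ) (Finsupp.single 1 1) g = 0
  · -- then the X-coefficient must be nonzero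
    have ha : MvPowerSeries.coeff (R := ℂ) (Finsupp.single 0 1) g ≠ 0 := by
      intro ha
      apply hgm2
      rw [pow_two, hg]
      exact add_mem (Ideal.mul_mem_mul hXm ((mem_mIdeal_iff A).mpr (hA.trans ha)))
        (Ideal.mul_mem_mul hYm ((mem_mIdeal_iff B).mpr (hB.trans hb)))
    refine ⟨Yv, by simp [Yv], le_antisymm (Ideal.span_le.mpr ?_) (Ideal.span_le.mpr ?_)⟩
    · rintro x hx
      simp only [Set.mem_insert_iff, Set.mem_singleton_iff] at hx
      rcases hx with rfl | rfl
      · exact hgm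
      · exact hYm
    · rintro x hx
      simp only [mIdeal, Set.mem_insert_iff, Set.mem_singleton_iff] at hx
      rcases hx with rfl | rfl
      · obtain ⟨u, hu⟩ := isUnit_R2 A (by rw [hA]; exact ha)
        have hxa : Xv * A = g - Yv * B := by rw [hg]; ring
        have : Xv = (g - Yv * B) * ↑u⁻¹ := by
          rw [← hxa, ← hu, mul_assoc, Units.mul_inv, mul_one]
        rw [this]
        refine Ideal.mul_mem_right _ _ (sub_mem (Ideal.subset_span (by simp)) ?_)
        exact Ideal.mul_mem_right _ _ (Ideal.subset_span (by simp))
      · exact Ideal.subset_span (by simp)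
  · refine ⟨Xv, by simp [Xv], le_antisymm (Ideal.span_le.mpr ?_) (Ideal.span_le.mpr ?_)⟩
    · rintro x hx
      simp only [Set.mem_insert_iff, Set.mem_singleton_iff] at hx
      rcases hx with rfl | rfl
      · exact hgm
      · exact hXm
    · rintro x hx
      simp only [mIdeal, Set.mem_insert_iff, Set.mem_singleton_iff] at hx
      rcases hx with rfl | rfl
      · exact Ideal.subset_span (by simp)
      · obtain ⟨u, hu⟩ := isUnit_R2 B (by rw [hB]; exact hb)
        have hxa : Yv * B = g - Xv * A := by rw [hg]; ring
        have : Yv = (g - Xv * A) * ↑u⁻¹ := by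
          rw [← hxa, ← hu, mul_assoc, Units.mul_inv, mul_one]
        rw [this]
        refine Ideal.mul_mem_right _ _ (sub_mem (Ideal.subset_span (by simp)) ?_)
        exact Ideal.mul_mem_right _ _ (Ideal.subset_span (by simp))


set_option maxHeartbeats 1000000 in
/-- If an ideal `I` of `R = ℂ⟦x,y⟧` contains an element `g` of order one
(`g ∈ m`, `g ∉ m²`) and `dim_ℂ(R/I) = 3`, then there is a regular system of
parameters `u, v` with `I = ⟨u, v³⟩`. -/
theorem stmt7 (I : Ideal R2) (g : R2) (hgI : g ∈ I)
    (hgm : g ∈ mIdeal) (hgm2 : g ∉ mIdeal ^ 2)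
    (hdim : Module.rank ℂ (R2 ⧸ I) = 3) :
    ∃ u v : R2, Ideal.span {u, v} = mIdeal ∧ I = Ideal.span {u, v ^ 3} := by
  obtain ⟨v, hv0, hspan⟩ := exists_v g hgm hgm2
  have smul_mk : ∀ (c : ℂ) (x : R2),
      c • (Ideal.Quotient.mk I x) = Ideal.Quotient.mk I (algebraMap ℂ R2 c * x) := by
    intro c x
    rw [← Ideal.Quotient.mkₐ_eq_mk ℂ I, ← map_smul, Algebra.smul_def]
  have rank_le : ∀ S : Set (R2 ⧸ I), (⊤ : Submodule ℂ (R2 ⧸ I)) ≤ Submodule.span ℂ S →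
      Module.rank ℂ (R2 ⧸ I) ≤ Cardinal.mk S := by
    intro S hS
    calc Module.rank ℂ (R2 ⧸ I)
        = Module.rank ℂ (⊤ : Submodule ℂ (R2 ⧸ I)) := (rank_top ℂ _).symm
      _ ≤ Module.rank ℂ (Submodule.span ℂ S) := Submodule.rank_mono hS
      _ ≤ Cardinal.mk S := rank_span_le S
  have hItop : I ≠ ⊤ := by
    intro h
    have hb := rank_le ∅ (by
      intro x _
      obtain ⟨r, rfl⟩ := Ideal.Quotient.mk_surjective x
      rw [Ideal.Quotient.eq_zero_iff_mem.mpr (h ▸ Submodule.mem_top)]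
      exact Submodule.zero_mem _)
    rw [hdim, Cardinal.mk_emptyCollection] at hb
    norm_num at hb
  have step : ∀ t : R2, ∃ (c : ℂ) (a w : R2), t = algebraMap ℂ R2 c + a * g + w * v := by
    intro t
    have ht : t - algebraMap ℂ R2 (MvPowerSeries.constantCoeff (σ := Fin 2) (R := ℂ) t) ∈ mIdeal := by
      rw [mem_mIdeal_iff]; simp [constCoeff_alg]
    rw [← hspan, Ideal.mem_span_pair] at ht
    obtain ⟨a, w, haw⟩ := ht
    exact ⟨_, a, w, by linear_combination -haw⟩
  have keyRep : ∀ r : R2, ∃ (c₀ c₁ c₂ : ℂ) (a b : R2),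
      r = algebraMap ℂ R2 c₀ + algebraMap ℂ R2 c₁ * v + algebraMap ℂ R2 c₂ * v ^ 2
        + a * g + b * v ^ 3 := by
    intro r
    obtain ⟨c₀, a₁, w₁, h₁⟩ := step r
    obtain ⟨c₁, a₂, w₂, h₂⟩ := step w₁
    obtain ⟨c₂, a₃, w₃, h₃⟩ := step w₂
    exact ⟨c₀, c₁, c₂, a₁ + a₂ * v + a₃ * v ^ 2, w₃, by rw [h₁, h₂, h₃]; ring⟩
  have hvnotI : v ∈ I → False := by
    intro hv
    have hv2 : v ^ 2 ∈ I := by rw [sq]; exact I.mul_mem_left v hv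
    have hv3 : v ^ 3 ∈ I := by rw [pow_succ]; exact I.mul_mem_left _ hv
    have hb := rank_le {Ideal.Quotient.mk I 1} (by
      intro x _
      obtain ⟨r, rfl⟩ := Ideal.Quotient.mk_surjective x
      obtain ⟨c₀, c₁, c₂, a, b, hre⟩ := keyRep r
      have : Ideal.Quotient.mk I r = c₀ • Ideal.Quotient.mk I 1 := by
        rw [smul_mk, mul_one, Ideal.Quotient.mk_eq_mk_iff_sub_mem]
        have he : r - algebraMap ℂ R2 c₀
            = algebraMap ℂ R2 c₁ * v + algebraMap ℂ R2 c₂ * v ^ 2 + a * g + b * v ^ 3 := by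
          rw [hre]; ring
        rw [he]
        exact add_mem (add_mem (add_mem (I.mul_mem_left _ hv) (I.mul_mem_left _ hv2))
          (I.mul_mem_left _ hgI)) (I.mul_mem_left _ hv3)
      rw [this]
      exact Submodule.smul_mem _ _ (Submodule.subset_span rfl)
    )
    rw [hdim, Cardinal.mk_singleton] at hb
    norm_num at hb
  have hv2notI : v ^ 2 ∈ I → False := by
    intro hv2
    have hv3 : v ^ 3 ∈ I := by rw [pow_succ]; exact I.mul_mem_right _ hv2
    have hb := rank_le {Ideal.Quotient.mk I 1, Ideal.Quotient.mk I v} (by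
      intro x _
      obtain ⟨r, rfl⟩ := Ideal.Quotient.mk_surjective x
      obtain ⟨c₀, c₁, c₂, a, b, hre⟩ := keyRep r
      have : Ideal.Quotient.mk I r = c₀ • Ideal.Quotient.mk I 1 + c₁ • Ideal.Quotient.mk I v := by
        rw [smul_mk, smul_mk, mul_one, ← map_add, Ideal.Quotient.mk_eq_mk_iff_sub_mem]
        have he : r - (algebraMap ℂ R2 c₀ + algebraMap ℂ R2 c₁ * v)
            = algebraMap ℂ R2 c₂ * v ^ 2 + a * g + b * v ^ 3 := by
          rw [hre]; ring
        rw [he]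
        exact add_mem (add_mem (I.mul_mem_left _ hv2) (I.mul_mem_left _ hgI))
          (I.mul_mem_left _ hv3)
      rw [this]
      exact add_mem (Submodule.smul_mem _ _ (Submodule.subset_span (Set.mem_insert _ _)))
        (Submodule.smul_mem _ _ (Submodule.subset_span (Set.mem_insert_of_mem _ rfl)))
    )
    rw [hdim] at hb
    have hb2 : (3 : Cardinal) ≤ 2 := hb.trans (by
      refine Cardinal.mk_insert_le.trans ?_
      rw [Cardinal.mk_singleton]
      norm_num)
    norm_num at hb2
  have peel : ∀ c₀ c₁ c₂ c₃ : ℂ,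
      algebraMap ℂ R2 c₀ + algebraMap ℂ R2 c₁ * v + algebraMap ℂ R2 c₂ * v ^ 2
        + algebraMap ℂ R2 c₃ * v ^ 3 ∈ I →
      (c₀ = 0 ∧ c₁ = 0 ∧ c₂ = 0) ∧ (c₃ ≠ 0 → v ^ 3 ∈ I) := by
    intro c₀ c₁ c₂ c₃ hp
    have hc0 : c₀ = 0 := by
      by_contra hc0
      refine hItop (Ideal.eq_top_of_isUnit_mem I hp (isUnit_R2 _ ?_))
      simp [map_add, map_mul, map_pow, constCoeff_alg, hv0, hc0]
    rw [hc0, map_zero, zero_add] at hp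
    have hc1 : c₁ = 0 := by
      by_contra hc1
      apply hvnotI
      have hfac : algebraMap ℂ R2 c₁ * v + algebraMap ℂ R2 c₂ * v ^ 2 + algebraMap ℂ R2 c₃ * v ^ 3
          = v * (algebraMap ℂ R2 c₁ + algebraMap ℂ R2 c₂ * v + algebraMap ℂ R2 c₃ * v ^ 2) := by
        ring
      rw [hfac] at hp
      obtain ⟨u, hu⟩ := isUnit_R2 _ (show MvPowerSeries.constantCoeff (σ := Fin 2) (R := ℂ)
          (algebraMap ℂ R2 c₁ + algebraMap ℂ R2 c₂ * v + algebraMap ℂ R2 c₃ * v ^ 2) ≠ 0 by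
        simp [map_add, map_mul, map_pow, constCoeff_alg, hv0, hc1])
      have hmem := I.mul_mem_right (↑u⁻¹) hp
      rwa [← hu, mul_assoc, Units.mul_inv, mul_one] at hmem
    rw [hc1, map_zero, zero_mul, zero_add] at hp
    have hc2 : c₂ = 0 := by
      by_contra hc2
      apply hv2notI
      have hfac : algebraMap ℂ R2 c₂ * v ^ 2 + algebraMap ℂ R2 c₃ * v ^ 3
          = v ^ 2 * (algebraMap ℂ R2 c₂ + algebraMap ℂ R2 c₃ * v) := by ring
      rw [hfac] at hp
      obtain ⟨u, hu⟩ := isUnit_R2 _ (show MvPowerSeries.constantCoeff (σ := Fin 2) (R := ℂ)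
          (algebraMap ℂ R2 c₂ + algebraMap ℂ R2 c₃ * v) ≠ 0 by
        simp [map_add, map_mul, constCoeff_alg, hv0, hc2])
      have hmem := I.mul_mem_right (↑u⁻¹) hp
      rwa [← hu, mul_assoc, Units.mul_inv, mul_one] at hmem
    rw [hc2, map_zero, zero_mul, zero_add] at hp
    refine ⟨⟨hc0, hc1, hc2⟩, fun hc3 => ?_⟩
    have hmem := I.mul_mem_left (algebraMap ℂ R2 c₃⁻¹) hp
    rwa [← mul_assoc, ← map_mul, inv_mul_cancel₀ hc3, map_one, one_mul] at hmem
  -- find a nontrivial linear relation among 1, v, v², v³ in the quotient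
  have hnotli : ¬ LinearIndependent ℂ
      ![Ideal.Quotient.mk I 1, Ideal.Quotient.mk I v,
        Ideal.Quotient.mk I (v ^ 2), Ideal.Quotient.mk I (v ^ 3)] := by
    intro hli
    have hc := hli.cardinal_le_rank
    rw [hdim, Cardinal.mk_fin] at hc
    norm_num at hc
  rw [Fintype.not_linearIndependent_iff] at hnotli
  obtain ⟨c, hcsum, i, hci⟩ := hnotli
  have hmem : algebraMap ℂ R2 (c 0) + algebraMap ℂ R2 (c 1) * v
      + algebraMap ℂ R2 (c 2) * v ^ 2 + algebraMap ℂ R2 (c 3) * v ^ 3 ∈ I := by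
    rw [← Ideal.Quotient.eq_zero_iff_mem, ← hcsum, Fin.sum_univ_four]
    simp only [Matrix.cons_val_zero, Matrix.cons_val_one, Matrix.head_cons,
      Matrix.cons_val_two, Matrix.tail_cons, Matrix.cons_val_three, smul_mk, ← map_add]
    apply congrArg
    ring
  obtain ⟨⟨e0, e1, e2⟩, h3⟩ := peel _ _ _ _ hmem
  have hc3 : c 3 ≠ 0 := by
    intro h3z
    fin_cases i
    · exact hci e0
    · exact hci e1
    · exact hci e2
    · exact hci h3z
  have hv3I : v ^ 3 ∈ I := h3 hc3
  refine ⟨g, v, hspan, ?_⟩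
  have hsub : Ideal.span {g, v ^ 3} ≤ I := by
    rw [Ideal.span_le]
    rintro x hx
    simp only [Set.mem_insert_iff, Set.mem_singleton_iff] at hx
    rcases hx with rfl | rfl
    · exact hgI
    · exact hv3I
  refine le_antisymm ?_ hsub
  intro r hr
  obtain ⟨c₀, c₁, c₂, a, b, hre⟩ := keyRep r
  have hj : a * g + b * v ^ 3 ∈ Ideal.span {g, v ^ 3} := Ideal.mem_span_pair.mpr ⟨a, b, rfl⟩
  have hcomb : algebraMap ℂ R2 c₀ + algebraMap ℂ R2 c₁ * v + algebraMap ℂ R2 c₂ * v ^ 2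
      + algebraMap ℂ R2 (0 : ℂ) * v ^ 3 ∈ I := by
    rw [map_zero, zero_mul, add_zero]
    have he : algebraMap ℂ R2 c₀ + algebraMap ℂ R2 c₁ * v + algebraMap ℂ R2 c₂ * v ^ 2
        = r - (a * g + b * v ^ 3) := by rw [hre]; ring
    rw [he]
    exact sub_mem hr (hsub hj)
  obtain ⟨⟨f0, f1, f2⟩, -⟩ := peel _ _ _ _ hcomb
  rw [hre, f0, f1, f2]
  simpa using hj
end

section
/- Let R = ℂ⟦x,y⟧ with maximal ideal m = ⟨x,y⟩, and let u ∈ R be a unit (i.e. u(0,0) ≠ 0). Then there exist a, b ∈ R with ⟨a,b⟩ = m such that ⟨x², xy + y²·u⟩ = ⟨a², b²⟩. In particular, for u = 1 one has ⟨x², xy + y²⟩ = ⟨x², (x+2y)²⟩. -/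
lemma two_inv : ∃ r : R2, 2 * r = 1 := by
  refine ⟨(MvPowerSeries.C : ℂ →+* R2) (1/2), ?_⟩
  have : (2 : R2) = (MvPowerSeries.C : ℂ →+* R2) 2 := by
    rw [map_ofNat]
  rw [this, ← map_mul, ← map_one (MvPowerSeries.C : ℂ →+* R2)]
  norm_num

lemma key (v : R2) (hv : IsUnit v) :
    Ideal.span {Xv ^ 2, Xv * Yv + Yv ^ 2 * v}
      = Ideal.span {Xv ^ 2, (Xv + 2 * Yv * v) ^ 2} := by
  obtain ⟨w, hw⟩ := hv.exists_left_inv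
  obtain ⟨r, h2⟩ := two_inv
  apply le_antisymm <;> rw [Ideal.span_le] <;>
    simp only [Set.insert_subset_iff, Set.singleton_subset_iff, SetLike.mem_coe] <;>
    refine ⟨Ideal.subset_span (by simp), ?_⟩ <;> rw [Ideal.mem_span_pair]
  · -- X*Y + Y^2*v ∈ span {X^2, (X+2Yv)^2}
    refine ⟨-(r * r * w), r * r * w, ?_⟩
    linear_combination (4 * r * r * (Xv*Yv + Yv^2*v)) * hw +
      ((2*r + 1) * (Xv*Yv + Yv^2*v)) * h2
  · -- (X+2Yv)^2 ∈ span {X^2, X*Y + Y^2*v}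
    exact ⟨1, 4 * v, by ring⟩

lemma keyparam (v : R2) (hv : IsUnit v) :
    Ideal.span {Xv, Xv + 2 * Yv * v} = mIdeal := by
  obtain ⟨w, hw⟩ := hv.exists_left_inv
  obtain ⟨r, h2⟩ := two_inv
  unfold mIdeal
  apply le_antisymm <;> rw [Ideal.span_le] <;>
    simp only [Set.insert_subset_iff, Set.singleton_subset_iff, SetLike.mem_coe] <;>
    refine ⟨Ideal.subset_span (by simp), ?_⟩ <;> rw [Ideal.mem_span_pair]
  · exact ⟨1, 2 * v, by ring⟩
  · refine ⟨-(r * w), r * w, ?_⟩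
    linear_combination (2 * r * Yv) * hw + Yv * h2

/-- Let `u ∈ R = ℂ⟦x,y⟧` be a unit, i.e. `u(0,0) ≠ 0`. Then there is a regular
system of parameters `a, b` with `⟨x², xy + y²u⟩ = ⟨a², b²⟩`. In particular,
for `u = 1` one has `⟨x², xy + y²⟩ = ⟨x², (x + 2y)²⟩`. -/
theorem stmt8 (u : R2) (hu : MvPowerSeries.constantCoeff u ≠ 0) :
    (∃ a b : R2, Ideal.span {a, b} = mIdeal ∧
        Ideal.span {Xv ^ 2, Xv * Yv + Yv ^ 2 * u} = Ideal.span {a ^ 2, b ^ 2}) ∧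
    Ideal.span {Xv ^ 2, Xv * Yv + Yv ^ 2} =
      Ideal.span {Xv ^ 2, (Xv + 2 * Yv) ^ 2} := by
  have hvu : IsUnit u := MvPowerSeries.isUnit_iff_constantCoeff.mpr
    (isUnit_iff_ne_zero.mpr hu)
  constructor
  · refine ⟨Xv, Xv + 2 * Yv * u, keyparam u hvu, ?_⟩
    have := key u hvu
    rwa [show (Xv : R2) ^ 2 = Xv ^ 2 from rfl] at this
  · have := key 1 isUnit_one
    simpa using this
end
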